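/- arXiv:2011.13559 — 11 statements merged into one kernel-verified Lean document; each statement's English description precedes it below -/
import Mathlib

section
/- Let g : ℝ → ℝ be twice continuously differentiable on [a,b] with a < b, and let m₂ be a lower bound for g'' on [a,b]. Then g((a+b)/2) + (m₂/24)(b-a)² ≤ (1/(b-a))∫_a^b g(t) dt ≤ (g(a)+g(b))/2 - (m₂/12)(b-a)². -/
theorem simpson_stmt0 (a b m₂ : ℝ) (hab : a < b) (g g' g'' : ℝ → ℝ)
    (hg' : ∀ x ∈ Set.Icc a b, HasDerivWithinAt g (g' x) (Set.Icc a b) x)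
    (hg'' : ∀ x ∈ Set.Icc a b, HasDerivWithinAt g' (g'' x) (Set.Icc a b) x)
    (hcont : ContinuousOn g'' (Set.Icc a b))
    (hm : ∀ x ∈ Set.Icc a b, m₂ ≤ g'' x) :
    g ((a + b) / 2) + m₂ / 24 * (b - a) ^ 2 ≤ (1 / (b - a)) * ∫ t in a..b, g t ∧
      (1 / (b - a)) * ∫ t in a..b, g t ≤ (g a + g b) / 2 - m₂ / 12 * (b - a) ^ 2 := by
  have hba : (0:ℝ) < b - a := by linarith
  have hne : b - a ≠ 0 := ne_of_gt hba
  set h : ℝ → ℝ := fun x => g x - m₂ / 2 * x ^ 2 with hh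
  have hgc : ContinuousOn g (Set.Icc a b) := fun x hx => (hg' x hx).continuousWithinAt
  have hhc : ContinuousOn h (Set.Icc a b) := by
    apply hgc.sub
    exact (continuous_const.mul (continuous_pow 2)).continuousOn
  have hconv : ConvexOn ℝ (Set.Icc a b) h := by
    apply convexOn_of_hasDerivWithinAt2_nonneg (convex_Icc a b) hhc
      (f' := fun x => g' x - m₂ * x) (f'' := fun x => g'' x - m₂)
    · intro x hx
      rw [interior_Icc] at hx ⊢
      have := ((hg' x (Set.Ioo_subset_Icc_self hx)).mono Set.Ioo_subset_Icc_self).sub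
        ((((hasDerivAt_pow 2 x).const_mul (m₂ / 2))).hasDerivWithinAt (s := Set.Ioo a b))
      convert this using 1
      · rfl
      · rfl
      · rfl
      · norm_num
        ring
    · intro x hx
      rw [interior_Icc] at hx ⊢
      have := ((hg'' x (Set.Ioo_subset_Icc_self hx)).mono Set.Ioo_subset_Icc_self).sub
        ((hasDerivAt_id x).const_mul m₂).hasDerivWithinAt
      convert this using 1
      · rfl
      · rfl
      · rfl
      · simp
    · intro x hx
      rw [interior_Icc] at hx
      have := hm x (Set.Ioo_subset_Icc_self hx)
      linarith
  have hInt : IntervalIntegrable h MeasureTheory.volume a b :=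
    ContinuousOn.intervalIntegrable (by rw [Set.uIcc_of_le hab.le]; exact hhc)
  have hgInt : IntervalIntegrable g MeasureTheory.volume a b :=
    ContinuousOn.intervalIntegrable (by rw [Set.uIcc_of_le hab.le]; exact hgc)
  -- trapezoid side
  have trap : ∫ t in a..b, h t ≤ (b - a) * (h a + h b) / 2 := by
    have pt : ∀ t ∈ Set.Icc a b,
        h t ≤ (b * h a - a * h b) / (b - a) + (h b - h a) / (b - a) * t := by
      intro t ht
      have h1 : (0:ℝ) ≤ (b - t) / (b - a) := div_nonneg (by linarith [ht.2]) hba.le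
      have h2 : (0:ℝ) ≤ (t - a) / (b - a) := div_nonneg (by linarith [ht.1]) hba.le
      have h3 : (b - t) / (b - a) + (t - a) / (b - a) = 1 := by field_simp; ring
      have key := hconv.2 (Set.left_mem_Icc.2 hab.le) (Set.right_mem_Icc.2 hab.le) h1 h2 h3
      simp only [smul_eq_mul] at key
      have he : (b - t) / (b - a) * a + (t - a) / (b - a) * b = t := by
        field_simp; ring
      rw [he] at key
      have he2 : (b - t) / (b - a) * h a + (t - a) / (b - a) * h b
          = (b * h a - a * h b) / (b - a) + (h b - h a) / (b - a) * t := by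
        field_simp; ring
      linarith
    have lInt : IntervalIntegrable
        (fun t => (b * h a - a * h b) / (b - a) + (h b - h a) / (b - a) * t)
        MeasureTheory.volume a b := Continuous.intervalIntegrable (by continuity) a b
    calc ∫ t in a..b, h t
        ≤ ∫ t in a..b, ((b * h a - a * h b) / (b - a) + (h b - h a) / (b - a) * t) :=
          intervalIntegral.integral_mono_on hab.le hInt lInt pt
      _ = (b - a) * (h a + h b) / 2 := by
          rw [intervalIntegral.integral_add intervalIntegrable_const
              ((intervalIntegral.intervalIntegrable_id).const_mul _),
            intervalIntegral.integral_const_mul, integral_id,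
            intervalIntegral.integral_const, smul_eq_mul]
          have key : ∀ A B : ℝ, (b - a) * ((b * A - a * B) / (b - a))
              + (B - A) / (b - a) * ((b ^ 2 - a ^ 2) / 2) = (b - a) * (A + B) / 2 := by
            intro A B; field_simp; ring
          exact key (h a) (h b)
  -- midpoint side
  have mid : (b - a) * h ((a + b) / 2) ≤ ∫ t in a..b, h t := by
    have hrefl : (∫ t in a..b, h (a + b - t)) = ∫ t in a..b, h t := by
      rw [intervalIntegral.integral_comp_sub_left h (a + b)]
      congr 1 <;> ring
    have hIntr : IntervalIntegrable (fun t => h (a + b - t)) MeasureTheory.volume a b := by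
      have hc : ContinuousOn (fun t => h (a + b - t)) (Set.Icc a b) := by
        apply hhc.comp (by fun_prop)
        intro t ht
        constructor <;> [linarith [ht.2]; linarith [ht.1]]
      exact ContinuousOn.intervalIntegrable (by rw [Set.uIcc_of_le hab.le]; exact hc)
    have pt : ∀ t ∈ Set.Icc a b, h ((a + b) / 2) ≤ (h t + h (a + b - t)) / 2 := by
      intro t ht
      have ht' : a + b - t ∈ Set.Icc a b := by
        constructor <;> [linarith [ht.2]; linarith [ht.1]]
      have key := hconv.2 ht ht' (by norm_num : (0:ℝ) ≤ 1/2) (by norm_num : (0:ℝ) ≤ 1/2)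
        (by norm_num)
      simp only [smul_eq_mul] at key
      have he : (1/2 : ℝ) * t + (1/2 : ℝ) * (a + b - t) = (a + b) / 2 := by ring
      rw [he] at key
      linarith
    calc (b - a) * h ((a + b) / 2)
        = ∫ _ in a..b, h ((a + b) / 2) := by
          rw [intervalIntegral.integral_const, smul_eq_mul]
      _ ≤ ∫ t in a..b, (h t + h (a + b - t)) / 2 :=
          intervalIntegral.integral_mono_on hab.le intervalIntegrable_const
            ((hInt.add hIntr).div_const 2) pt
      _ = ((∫ t in a..b, h t) + ∫ t in a..b, h (a + b - t)) / 2 := by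
          rw [intervalIntegral.integral_div, intervalIntegral.integral_add hInt hIntr]
      _ = ∫ t in a..b, h t := by rw [hrefl]; ring
  -- relate ∫ h to ∫ g
  have hq : IntervalIntegrable (fun t => m₂ / 2 * t ^ 2) MeasureTheory.volume a b :=
    Continuous.intervalIntegrable (by continuity) a b
  have hsplit : (∫ t in a..b, h t) = (∫ t in a..b, g t) - m₂ / 2 * ((b ^ 3 - a ^ 3) / 3) := by
    have h0 : (∫ t in a..b, h t) = ∫ t in a..b, (g t - m₂ / 2 * t ^ 2) := rfl
    rw [h0, intervalIntegral.integral_sub hgInt hq, intervalIntegral.integral_const_mul,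
      integral_pow]
    norm_num
  have hA : h a = g a - m₂ / 2 * a ^ 2 := rfl
  have hB : h b = g b - m₂ / 2 * b ^ 2 := rfl
  have hM : h ((a + b) / 2) = g ((a + b) / 2) - m₂ / 2 * ((a + b) / 2) ^ 2 := rfl
  rw [hsplit, hA, hB] at trap
  rw [hsplit, hM] at mid
  constructor
  · have key : (g ((a + b) / 2) + m₂ / 24 * (b - a) ^ 2) * (b - a) ≤ ∫ t in a..b, g t := by
      nlinarith [mid]
    rw [one_div, inv_mul_eq_div]
    exact (le_div_iff₀ hba).2 key
  · have key : (∫ t in a..b, g t) ≤ ((g a + g b) / 2 - m₂ / 12 * (b - a) ^ 2) * (b - a) := by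
      nlinarith [trap]
    rw [one_div, inv_mul_eq_div]
    exact (div_le_iff₀ hba).2 key
end

section
/- Let g : ℝ → ℝ be twice continuously differentiable on [a,b] with a < b, and let m₂ ≤ g''(t) ≤ M₂ on [a,b]. Then |(g(a)+g(b))/6 + (2/3)g((a+b)/2) - (1/(b-a))∫_a^b g(t) dt| ≤ (1/36)(M₂ - m₂)(b-a)². -/
open Set intervalIntegral

lemma icc_integrable {a b : ℝ} (hab : a ≤ b) {φ : ℝ → ℝ}
    (hc : ContinuousOn φ (Set.Icc a b)) :
    IntervalIntegrable φ MeasureTheory.volume a b :=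
  ContinuousOn.intervalIntegrable (by rwa [Set.uIcc_of_le hab])

-- Trapezoid: for convex φ, ∫ φ ≤ (b-a)(φ a + φ b)/2
lemma trap_le (a b : ℝ) (hab : a < b) (φ : ℝ → ℝ)
    (hconv : ConvexOn ℝ (Set.Icc a b) φ) (hc : ContinuousOn φ (Set.Icc a b)) :
    ∫ t in a..b, φ t ≤ (b - a) * (φ a + φ b) / 2 := by
  have hba : (0:ℝ) < b - a := by linarith
  have hint : IntervalIntegrable φ MeasureTheory.volume a b := icc_integrable hab.le hc
  have hint2 : IntervalIntegrable (fun t => ((b - t) * φ a + (t - a) * φ b) / (b - a))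
      MeasureTheory.volume a b := by
    apply Continuous.intervalIntegrable; continuity
  have hmono : ∀ t ∈ Set.Icc a b, φ t ≤ ((b - t) * φ a + (t - a) * φ b) / (b - a) := by
    intro t ht
    obtain ⟨ht1, ht2⟩ := ht
    have h := hconv.2 (Set.left_mem_Icc.2 hab.le) (Set.right_mem_Icc.2 hab.le)
      (div_nonneg (by linarith) hba.le)
      (div_nonneg (by linarith) hba.le)
      (show (b - t) / (b - a) + (t - a) / (b - a) = 1 by field_simp; ring)
    have hx : ((b - t) / (b - a)) • a + ((t - a) / (b - a)) • b = t := by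
      simp only [smul_eq_mul]; field_simp; ring
    rw [hx] at h
    calc φ t ≤ ((b - t) / (b - a)) • φ a + ((t - a) / (b - a)) • φ b := h
      _ = ((b - t) * φ a + (t - a) * φ b) / (b - a) := by
          simp only [smul_eq_mul]
          field_simp
          try ring
  have hle := intervalIntegral.integral_mono_on hab.le hint hint2 hmono
  have hcomp : ∫ t in a..b, ((b - t) * φ a + (t - a) * φ b) / (b - a)
      = (b - a) * (φ a + φ b) / 2 := by
    have heq : ∀ t : ℝ, ((b - t) * φ a + (t - a) * φ b) / (b - a)
        = (b * φ a - a * φ b) / (b - a) + t * ((φ b - φ a) / (b - a)) := by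
      intro t; field_simp; ring
    simp only [heq]
    rw [intervalIntegral.integral_add (by apply Continuous.intervalIntegrable; continuity)
      (by apply Continuous.intervalIntegrable; continuity)]
    rw [intervalIntegral.integral_const, intervalIntegral.integral_mul_const, integral_id, smul_eq_mul]
    field_simp
    ring
  rw [hcomp] at hle
  exact hle

-- Midpoint: for convex φ, (b-a) φ((a+b)/2) ≤ ∫ φ
lemma mid_le (a b : ℝ) (hab : a < b) (φ : ℝ → ℝ)
    (hconv : ConvexOn ℝ (Set.Icc a b) φ) (hc : ContinuousOn φ (Set.Icc a b)) :
    (b - a) * φ ((a + b) / 2) ≤ ∫ t in a..b, φ t := by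
  have hint : IntervalIntegrable φ MeasureTheory.volume a b := icc_integrable hab.le hc
  have hrefl : ∫ t in a..b, φ (a + b - t) = ∫ t in a..b, φ t := by
    rw [intervalIntegral.integral_comp_sub_left φ (a + b)]
    norm_num
  have hintr : IntervalIntegrable (fun t => φ (a + b - t)) MeasureTheory.volume a b := by
    apply icc_integrable hab.le
    apply hc.comp (by fun_prop)
    intro t ht
    simp only [Set.mem_Icc] at ht ⊢
    constructor <;> linarith [ht.1, ht.2]
  have hmono : ∀ t ∈ Set.Icc a b, (fun _ : ℝ => φ ((a + b) / 2)) t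
      ≤ (fun t => (φ t + φ (a + b - t)) / 2) t := by
    intro t ht
    obtain ⟨ht1, ht2⟩ := ht
    have hmem : a + b - t ∈ Set.Icc a b := by
      simp only [Set.mem_Icc]; constructor <;> linarith
    have h := hconv.2 (Set.mem_Icc.2 ⟨ht1, ht2⟩) hmem
      (show (0:ℝ) ≤ 1/2 by norm_num) (show (0:ℝ) ≤ 1/2 by norm_num)
      (show (1:ℝ)/2 + 1/2 = 1 by norm_num)
    have hx : ((1:ℝ)/2) • t + ((1:ℝ)/2) • (a + b - t) = (a + b) / 2 := by
      simp only [smul_eq_mul]; ring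
    rw [hx] at h
    simp only [smul_eq_mul] at h
    simp only []
    linarith
  have h := intervalIntegral.integral_mono_on hab.le
    intervalIntegrable_const ((hint.add hintr).div_const 2) hmono
  rw [intervalIntegral.integral_const] at h
  have h2 : ∫ t in a..b, (φ t + φ (a + b - t)) / 2 = ∫ t in a..b, φ t := by
    rw [intervalIntegral.integral_div, intervalIntegral.integral_add hint hintr, hrefl]
    ring
  rw [h2] at h
  simpa [smul_eq_mul] using h

lemma quad_deriv (c x : ℝ) : HasDerivAt (fun t : ℝ => c * t ^ 2 / 2) (c * x) x := by
  have h := (hasDerivAt_pow 2 x).const_mul (c/2)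
  have heq : (fun t : ℝ => c / 2 * t ^ 2) = fun t : ℝ => c * t ^ 2 / 2 := by
    funext t; ring
  rw [heq] at h
  exact h.congr_deriv (by push_cast; ring)

theorem simpson_stmt2 (a b m₂ M₂ : ℝ) (hab : a < b) (g g' g'' : ℝ → ℝ)
    (hg' : ∀ x ∈ Set.Icc a b, HasDerivWithinAt g (g' x) (Set.Icc a b) x)
    (hg'' : ∀ x ∈ Set.Icc a b, HasDerivWithinAt g' (g'' x) (Set.Icc a b) x)
    (hcont : ContinuousOn g'' (Set.Icc a b))
    (hm : ∀ x ∈ Set.Icc a b, m₂ ≤ g'' x) (hM : ∀ x ∈ Set.Icc a b, g'' x ≤ M₂) :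
    |(g a + g b) / 6 + 2 / 3 * g ((a + b) / 2) - (1 / (b - a)) * ∫ t in a..b, g t| ≤
      1 / 36 * (M₂ - m₂) * (b - a) ^ 2 := by
  have hba : (0:ℝ) < b - a := by linarith
  have hgc : ContinuousOn g (Set.Icc a b) := fun x hx => (hg' x hx).continuousWithinAt
  have hIoo : interior (Set.Icc a b) = Set.Ioo a b := interior_Icc
  have hconv : ConvexOn ℝ (Set.Icc a b) (fun t => g t - m₂ * t ^ 2 / 2) := by
    apply convexOn_of_hasDerivWithinAt2_nonneg (f' := fun t => g' t - m₂ * t)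
      (f'' := fun t => g'' t - m₂) (convex_Icc a b)
    · exact hgc.sub (by fun_prop)
    · intro x hx
      rw [hIoo] at hx ⊢
      exact ((hg' x (Set.Ioo_subset_Icc_self hx)).mono Set.Ioo_subset_Icc_self).sub
        (quad_deriv m₂ x).hasDerivWithinAt
    · intro x hx
      rw [hIoo] at hx ⊢
      have hlin : HasDerivWithinAt (fun t : ℝ => m₂ * t) m₂ (Set.Ioo a b) x := by
        simpa using ((hasDerivAt_id x).const_mul m₂).hasDerivWithinAt (s := Set.Ioo a b)
      exact ((hg'' x (Set.Ioo_subset_Icc_self hx)).mono Set.Ioo_subset_Icc_self).sub hlin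
    · intro x hx
      rw [hIoo] at hx
      have := hm x (Set.Ioo_subset_Icc_self hx)
      linarith
  have hconc : ConvexOn ℝ (Set.Icc a b) (fun t => M₂ * t ^ 2 / 2 - g t) := by
    apply convexOn_of_hasDerivWithinAt2_nonneg (f' := fun t => M₂ * t - g' t)
      (f'' := fun t => M₂ - g'' t) (convex_Icc a b)
    · exact (by fun_prop : ContinuousOn (fun t : ℝ => M₂ * t ^ 2 / 2) _).sub hgc
    · intro x hx
      rw [hIoo] at hx ⊢
      exact (quad_deriv M₂ x).hasDerivWithinAt.sub
        ((hg' x (Set.Ioo_subset_Icc_self hx)).mono Set.Ioo_subset_Icc_self)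
    · intro x hx
      rw [hIoo] at hx ⊢
      have hlin : HasDerivWithinAt (fun t : ℝ => M₂ * t) M₂ (Set.Ioo a b) x := by
        simpa using ((hasDerivAt_id x).const_mul M₂).hasDerivWithinAt (s := Set.Ioo a b)
      exact hlin.sub ((hg'' x (Set.Ioo_subset_Icc_self hx)).mono Set.Ioo_subset_Icc_self)
    · intro x hx
      rw [hIoo] at hx
      have := hM x (Set.Ioo_subset_Icc_self hx)
      linarith
  have hcφm : ContinuousOn (fun t => g t - m₂ * t ^ 2 / 2) (Set.Icc a b) :=
    hgc.sub (by fun_prop)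
  have hcφM : ContinuousOn (fun t => M₂ * t ^ 2 / 2 - g t) (Set.Icc a b) :=
    (by fun_prop : ContinuousOn (fun t : ℝ => M₂ * t ^ 2 / 2) _).sub hgc
  have hint : IntervalIntegrable g MeasureTheory.volume a b := icc_integrable hab.le hgc
  have hq : ∀ c : ℝ, ∫ t in a..b, c * t ^ 2 / 2 = c * (b ^ 3 - a ^ 3) / 6 := by
    intro c
    have heq : ∀ t : ℝ, c * t ^ 2 / 2 = (c / 2) * t ^ 2 := fun t => by ring
    simp only [heq]
    rw [intervalIntegral.integral_const_mul, integral_pow]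
    push_cast
    ring
  have hqim : IntervalIntegrable (fun t : ℝ => m₂ * t ^ 2 / 2) MeasureTheory.volume a b := by
    apply Continuous.intervalIntegrable; continuity
  have hqiM : IntervalIntegrable (fun t : ℝ => M₂ * t ^ 2 / 2) MeasureTheory.volume a b := by
    apply Continuous.intervalIntegrable; continuity
  have T1 := trap_le a b hab _ hconv hcφm
  have T2 := trap_le a b hab _ hconc hcφM
  have M1 := mid_le a b hab _ hconv hcφm
  have M2 := mid_le a b hab _ hconc hcφM
  rw [intervalIntegral.integral_sub hint hqim, hq m₂] at T1 M1
  rw [intervalIntegral.integral_sub hqiM hint, hq M₂] at T2 M2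
  set I := ∫ t in a..b, g t with hI
  have hE : (g a + g b) / 6 + 2 / 3 * g ((a + b) / 2) - (1 / (b - a)) * I
      = ((b - a) * ((g a + g b) / 6 + 2 / 3 * g ((a + b) / 2)) - I) / (b - a) := by
    field_simp
  rw [hE, abs_div, abs_of_pos hba, div_le_iff₀ hba, abs_le]
  constructor
  · ring_nf at T1 T2 M1 M2 ⊢
    linarith
  · ring_nf at T1 T2 M1 M2 ⊢
    linarith
end

section
/- Let φ : ℝ → ℝ be continuously differentiable on [a,b] with a < b. Then T_φ(a,b) = ((b-a)/12) ∫_0^1 (1-3t)[φ'(a·t/2 + b·(1-t/2)) - φ'(b·t/2 + a·(1-t/2))] dt. -/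
open intervalIntegral Set

theorem simpson_stmt3 (a b : ℝ) (hab : a < b) (φ φ' : ℝ → ℝ)
    (hφ' : ∀ x ∈ Set.Icc a b, HasDerivWithinAt φ (φ' x) (Set.Icc a b) x)
    (hcont : ContinuousOn φ' (Set.Icc a b)) :
    (φ a + φ b) / 6 + 2 / 3 * φ ((a + b) / 2) - (1 / (b - a)) * ∫ t in a..b, φ t =
      ((b - a) / 12) *
        ∫ t in (0:ℝ)..1, (1 - 3 * t) *
          (φ' (a * (t / 2) + b * (1 - t / 2)) - φ' (b * (t / 2) + a * (1 - t / 2))) := by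
  have hba : (0 : ℝ) < b - a := by linarith
  set m : ℝ := (a + b) / 2 with hm
  have ham : a < m := by simp only [hm]; linarith
  have hmb : m < b := by simp only [hm]; linarith
  have hcφ : ContinuousOn φ (Set.Icc a b) := fun x hx => (hφ' x hx).continuousWithinAt
  set p : ℝ → ℝ := fun t => a * (t / 2) + b * (1 - t / 2) with hp
  set q : ℝ → ℝ := fun t => b * (t / 2) + a * (1 - t / 2) with hq
  have hpc : Continuous p := by fun_prop
  have hqc : Continuous q := by fun_prop
  have hpmaps : ∀ t ∈ Set.Icc (0:ℝ) 1, p t ∈ Set.Icc a b := by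
    intro t ht
    obtain ⟨h0, h1⟩ := ht
    constructor <;> simp only [hp] <;> nlinarith
  have hqmaps : ∀ t ∈ Set.Icc (0:ℝ) 1, q t ∈ Set.Icc a b := by
    intro t ht
    obtain ⟨h0, h1⟩ := ht
    constructor <;> simp only [hq] <;> nlinarith
  -- continuity on [0,1] of compositions
  have hφp : ContinuousOn (fun t => φ (p t)) (Set.Icc 0 1) :=
    hcφ.comp hpc.continuousOn hpmaps
  have hφq : ContinuousOn (fun t => φ (q t)) (Set.Icc 0 1) :=
    hcφ.comp hqc.continuousOn hqmaps
  have hφ'p : ContinuousOn (fun t => φ' (p t)) (Set.Icc 0 1) :=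
    hcont.comp hpc.continuousOn hpmaps
  have hφ'q : ContinuousOn (fun t => φ' (q t)) (Set.Icc 0 1) :=
    hcont.comp hqc.continuousOn hqmaps
  -- F and its derivative
  set F : ℝ → ℝ := fun t => (1 - 3 * t) * (φ (p t) + φ (q t)) with hF
  set G : ℝ → ℝ := fun t =>
    (-3) * (φ (p t) + φ (q t)) +
      (1 - 3 * t) * (φ' (p t) * ((a - b) / 2) + φ' (q t) * ((b - a) / 2)) with hG
  have hFc : ContinuousOn F (Set.Icc 0 1) := by
    apply ContinuousOn.mul
    · fun_prop
    · exact hφp.add hφq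
  have hGc : ContinuousOn G (Set.Icc 0 1) := by
    apply ContinuousOn.add
    · exact continuousOn_const.mul (hφp.add hφq)
    · apply ContinuousOn.mul
      · fun_prop
      · exact (hφ'p.mul continuousOn_const).add (hφ'q.mul continuousOn_const)
  have hGint : IntervalIntegrable G MeasureTheory.volume 0 1 := by
    apply hGc.intervalIntegrable_of_Icc zero_le_one
  have hFderiv : ∀ t ∈ Set.Ioo (0:ℝ) 1, HasDerivAt F (G t) t := by
    intro t ht
    obtain ⟨h0, h1⟩ := ht
    have hpd : HasDerivAt p ((a - b) / 2) t := by
      have h : HasDerivAt (fun s : ℝ => (a - b) / 2 * s + b) ((a - b) / 2) t := by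
        simpa using ((hasDerivAt_id t).const_mul ((a - b) / 2)).add_const b
      convert h using 1
      funext s; simp only [hp]; ring
    have hqd : HasDerivAt q ((b - a) / 2) t := by
      have h : HasDerivAt (fun s : ℝ => (b - a) / 2 * s + a) ((b - a) / 2) t := by
        simpa using ((hasDerivAt_id t).const_mul ((b - a) / 2)).add_const a
      convert h using 1
      funext s; simp only [hq]; ring
    have hptIoo : p t ∈ Set.Ioo a b := by
      constructor <;> simp only [hp] <;> nlinarith
    have hqtIoo : q t ∈ Set.Ioo a b := by
      constructor <;> simp only [hq] <;> nlinarith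
    have hφpd : HasDerivAt φ (φ' (p t)) (p t) :=
      (hφ' (p t) (Set.Ioo_subset_Icc_self hptIoo)).hasDerivAt
        (Icc_mem_nhds hptIoo.1 hptIoo.2)
    have hφqd : HasDerivAt φ (φ' (q t)) (q t) :=
      (hφ' (q t) (Set.Ioo_subset_Icc_self hqtIoo)).hasDerivAt
        (Icc_mem_nhds hqtIoo.1 hqtIoo.2)
    have hcomp1 : HasDerivAt (fun s => φ (p s)) (φ' (p t) * ((a - b) / 2)) t :=
      hφpd.comp t hpd
    have hcomp2 : HasDerivAt (fun s => φ (q s)) (φ' (q t) * ((b - a) / 2)) t :=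
      hφqd.comp t hqd
    have hlin : HasDerivAt (fun s : ℝ => 1 - 3 * s) (-3) t := by
      simpa using ((hasDerivAt_id t).const_mul (3:ℝ)).const_sub 1
    have := hlin.mul (hcomp1.add hcomp2)
    exact this
  -- FTC
  have hFTC : ∫ t in (0:ℝ)..1, G t = F 1 - F 0 :=
    integral_eq_sub_of_hasDeriv_right_of_le zero_le_one hFc
      (fun t ht => (hFderiv t ht).hasDerivWithinAt) hGint
  have hF1 : F 1 = -4 * φ m := by
    simp only [hF, hp, hq, hm]; ring_nf
  have hF0 : F 0 = φ b + φ a := by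
    simp only [hF, hp, hq]; norm_num
  -- split the integral
  set I : ℝ := ∫ t in (0:ℝ)..1, (1 - 3 * t) * (φ' (p t) - φ' (q t)) with hI
  set J : ℝ := ∫ t in (0:ℝ)..1, (φ (p t) + φ (q t)) with hJ
  have hJint : IntervalIntegrable (fun t => φ (p t) + φ (q t)) MeasureTheory.volume 0 1 :=
    ((hφp.add hφq)).intervalIntegrable_of_Icc zero_le_one
  have hIint : IntervalIntegrable (fun t => (1 - 3 * t) * (φ' (p t) - φ' (q t)))
      MeasureTheory.volume 0 1 := by
    apply ContinuousOn.intervalIntegrable_of_Icc zero_le_one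
    apply ContinuousOn.mul
    · fun_prop
    · exact hφ'p.sub hφ'q
  have hsplit : ∫ t in (0:ℝ)..1, G t = -3 * J + (-(b - a) / 2) * I := by
    have e1 : ∀ t : ℝ, G t = (-3) * (φ (p t) + φ (q t)) +
        (-(b - a) / 2) * ((1 - 3 * t) * (φ' (p t) - φ' (q t))) := by
      intro t; simp only [hG]; ring
    calc ∫ t in (0:ℝ)..1, G t
        = ∫ t in (0:ℝ)..1, ((-3) * (φ (p t) + φ (q t)) +
            (-(b - a) / 2) * ((1 - 3 * t) * (φ' (p t) - φ' (q t)))) := by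
          simp_rw [e1]
      _ = -3 * J + (-(b - a) / 2) * I := by
          rw [intervalIntegral.integral_add (hJint.const_mul _) (hIint.const_mul _),
            intervalIntegral.integral_const_mul, intervalIntegral.integral_const_mul]
  -- substitutions for J
  have hsub1 : (∫ t in (0:ℝ)..1, φ (p t)) = ((a - b) / 2)⁻¹ * ∫ x in b..m, φ x := by
    have hc : (a - b) / 2 ≠ 0 := by intro h; nlinarith [h]
    have := intervalIntegral.integral_comp_mul_add (a := (0:ℝ)) (b := 1) φ hc b
    simp only [smul_eq_mul] at this
    have hb1 : (a - b) / 2 * 0 + b = b := by ring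
    have hb2 : (a - b) / 2 * 1 + b = m := by rw [hm]; ring
    rw [hb1, hb2] at this
    calc (∫ t in (0:ℝ)..1, φ (p t)) = ∫ t in (0:ℝ)..1, φ ((a - b) / 2 * t + b) := by
          apply intervalIntegral.integral_congr; intro t _; simp only [hp]; ring_nf
      _ = ((a - b) / 2)⁻¹ * ∫ x in b..m, φ x := this
  have hsub2 : (∫ t in (0:ℝ)..1, φ (q t)) = ((b - a) / 2)⁻¹ * ∫ x in a..m, φ x := by
    have hc : (b - a) / 2 ≠ 0 := by positivity
    have := intervalIntegral.integral_comp_mul_add (a := (0:ℝ)) (b := 1) φ hc a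
    simp only [smul_eq_mul] at this
    have hb1 : (b - a) / 2 * 0 + a = a := by ring
    have hb2 : (b - a) / 2 * 1 + a = m := by rw [hm]; ring
    rw [hb1, hb2] at this
    calc (∫ t in (0:ℝ)..1, φ (q t)) = ∫ t in (0:ℝ)..1, φ ((b - a) / 2 * t + a) := by
          apply intervalIntegral.integral_congr; intro t _; simp only [hq]; ring_nf
      _ = ((b - a) / 2)⁻¹ * ∫ x in a..m, φ x := this
  have hint1 : IntervalIntegrable φ MeasureTheory.volume a m :=
    (hcφ.mono (Set.Icc_subset_Icc le_rfl hmb.le)).intervalIntegrable_of_Icc ham.le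
  have hint2 : IntervalIntegrable φ MeasureTheory.volume m b :=
    (hcφ.mono (Set.Icc_subset_Icc ham.le le_rfl)).intervalIntegrable_of_Icc hmb.le
  have hadj : (∫ x in a..m, φ x) + ∫ x in m..b, φ x = ∫ x in a..b, φ x :=
    intervalIntegral.integral_add_adjacent_intervals hint1 hint2
  have hrev : (∫ x in b..m, φ x) = -∫ x in m..b, φ x :=
    intervalIntegral.integral_symm m b
  have hJeq : J = (∫ t in (0:ℝ)..1, φ (p t)) + ∫ t in (0:ℝ)..1, φ (q t) := by
    rw [hJ, intervalIntegral.integral_add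
      (hφp.intervalIntegrable_of_Icc zero_le_one)
      (hφq.intervalIntegrable_of_Icc zero_le_one)]
  have hJval : (b - a) * J = 2 * ∫ x in a..b, φ x := by
    have hab' : a - b ≠ 0 := by linarith
    have hab'' : b - a ≠ 0 := ne_of_gt hba
    rw [hJeq, hsub1, hsub2, hrev]
    rw [← hadj]
    field_simp
    ring
  -- finish
  have key : -3 * J + (-(b - a) / 2) * I = -4 * φ m - (φ b + φ a) := by
    rw [← hsplit, hFTC, hF1, hF0]
  have hgoal : (φ a + φ b) / 6 + 2 / 3 * φ m - (1 / (b - a)) * (∫ t in a..b, φ t) =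
      ((b - a) / 12) * I := by
    have hba' : b - a ≠ 0 := ne_of_gt hba
    field_simp
    nlinarith [key, hJval]
  calc (φ a + φ b) / 6 + 2 / 3 * φ m - (1 / (b - a)) * ∫ t in a..b, φ t
      = ((b - a) / 12) * I := hgoal
    _ = _ := by rw [hI]
end

section
/- Let φ : ℝ → ℝ be continuously differentiable on [a,b] with a < b, and let m₁ ≤ φ'(t) ≤ M₁ on [a,b]. Then |(φ(a)+φ(b))/6 + (2/3)φ((a+b)/2) - (1/(b-a))∫_a^b φ(t) dt| ≤ (5/72)(M₁ - m₁)(b-a). -/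
open intervalIntegral MeasureTheory Set

private lemma simpson_int_lin (u v c : ℝ) :
    (∫ t in u..v, (t - c)) = (v - c)^2/2 - (u - c)^2/2 := by
  rw [intervalIntegral.integral_sub intervalIntegrable_id (intervalIntegrable_const),
    integral_id, intervalIntegral.integral_const, smul_eq_mul]
  ring

private lemma simpson_int_abs (u v c : ℝ) (h1 : u ≤ c) (h2 : c ≤ v) :
    (∫ t in u..v, |t - c|) = (c - u)^2/2 + (v - c)^2/2 := by
  have huv : u ≤ v := h1.trans h2
  rw [← intervalIntegral.integral_add_adjacent_intervals (b := c)
      ((by fun_prop : Continuous fun t : ℝ => |t - c|).intervalIntegrable u c)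
      ((by fun_prop : Continuous fun t : ℝ => |t - c|).intervalIntegrable c v)]
  have e1 : (∫ t in u..c, |t - c|) = ∫ t in u..c, (c - t) := by
    apply intervalIntegral.integral_congr
    intro x hx
    rw [Set.uIcc_of_le h1] at hx
    show |x - c| = c - x
    rw [abs_of_nonpos (by linarith [hx.2] : x - c ≤ 0)]
    ring
  have e2 : (∫ t in c..v, |t - c|) = ∫ t in c..v, (t - c) := by
    apply intervalIntegral.integral_congr
    intro x hx
    rw [Set.uIcc_of_le h2] at hx
    show |x - c| = x - c
    rw [abs_of_nonneg (by linarith [hx.1] : (0:ℝ) ≤ x - c)]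
  rw [e1, e2, simpson_int_lin]
  have : (∫ t in u..c, (c - t)) = - ∫ t in u..c, (t - c) := by
    rw [← intervalIntegral.integral_neg]
    congr 1; funext t; ring
  rw [this, simpson_int_lin]
  ring

private lemma simpson_ibp (a b u v c : ℝ) (hu : a ≤ u) (huv : u ≤ v) (hv : v ≤ b)
    (φ φ' : ℝ → ℝ) (hφc : ContinuousOn φ (Set.Icc a b))
    (hd : ∀ x ∈ Set.Ioo a b, HasDerivAt φ (φ' x) x)
    (hφ'c : ContinuousOn φ' (Set.Icc a b)) :
    (∫ t in u..v, φ t) = (v - c) * φ v - (u - c) * φ u - ∫ t in u..v, (t - c) * φ' t := by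
  have hsub : Set.Icc u v ⊆ Set.Icc a b := Set.Icc_subset_Icc hu hv
  have hF : ∀ x ∈ Set.Ioo u v, HasDerivAt (fun t => (t - c) * φ t) (φ x + (x - c) * φ' x) x := by
    intro x hx
    have hx' : x ∈ Set.Ioo a b := ⟨lt_of_le_of_lt hu hx.1, lt_of_lt_of_le hx.2 hv⟩
    have h := ((hasDerivAt_id x).sub_const c).mul (hd x hx')
    exact h.congr_deriv (by simp)
  have hc1 : ContinuousOn (fun t => (t - c) * φ' t) (Set.Icc u v) :=
    ((continuousOn_id.sub continuousOn_const)).mul (hφ'c.mono hsub)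
  have hcont1 : ContinuousOn (fun t => φ t + (t - c) * φ' t) (Set.Icc u v) :=
    (hφc.mono hsub).add hc1
  have hint : IntervalIntegrable (fun t => φ t + (t - c) * φ' t) volume u v :=
    hcont1.intervalIntegrable_of_Icc huv
  have hFc : ContinuousOn (fun t => (t - c) * φ t) (Set.Icc u v) :=
    ((continuousOn_id.sub continuousOn_const)).mul (hφc.mono hsub)
  have hmain := intervalIntegral.integral_eq_sub_of_hasDerivAt_of_le huv hFc hF hint
  have hint1 : IntervalIntegrable φ volume u v :=
    (hφc.mono hsub).intervalIntegrable_of_Icc huv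
  have hint2 : IntervalIntegrable (fun t => (t - c) * φ' t) volume u v :=
    hc1.intervalIntegrable_of_Icc huv
  rw [intervalIntegral.integral_add hint1 hint2] at hmain
  linarith

theorem simpson_stmt4 (a b m₁ M₁ : ℝ) (hab : a < b) (φ φ' : ℝ → ℝ)
    (hφ' : ∀ x ∈ Set.Icc a b, HasDerivWithinAt φ (φ' x) (Set.Icc a b) x)
    (hcont : ContinuousOn φ' (Set.Icc a b))
    (hm : ∀ x ∈ Set.Icc a b, m₁ ≤ φ' x) (hM : ∀ x ∈ Set.Icc a b, φ' x ≤ M₁) :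
    |(φ a + φ b) / 6 + 2 / 3 * φ ((a + b) / 2) - (1 / (b - a)) * ∫ t in a..b, φ t| ≤
      5 / 72 * (M₁ - m₁) * (b - a) := by
  set L := b - a with hLdef
  have hL : 0 < L := by simp [hLdef]; linarith
  set μ := (a + b) / 2 with hμ
  have haμ : a ≤ μ := by rw [hμ]; linarith
  have hμb : μ ≤ b := by rw [hμ]; linarith
  set c₁ := (5*a + b)/6 with hc₁
  set c₂ := (a + 5*b)/6 with hc₂
  set d := (m₁ + M₁)/2 with hd'
  have hK : m₁ ≤ M₁ := le_trans (hm a ⟨le_refl a, le_of_lt hab⟩) (hM a ⟨le_refl a, le_of_lt hab⟩)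
  have hφc : ContinuousOn φ (Set.Icc a b) := fun x hx => (hφ' x hx).continuousWithinAt
  have hdint : ∀ x ∈ Set.Ioo a b, HasDerivAt φ (φ' x) x := by
    intro x hx
    exact (hφ' x (Set.mem_Icc_of_Ioo hx)).hasDerivAt (Icc_mem_nhds hx.1 hx.2)
  -- integration by parts on each half
  have h1 := simpson_ibp a b a μ c₁ le_rfl haμ hμb φ φ' hφc hdint hcont
  have h2 := simpson_ibp a b μ b c₂ haμ hμb le_rfl φ φ' hφc hdint hcont
  -- split the integral
  have hintφ1 : IntervalIntegrable φ volume a μ :=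
    (hφc.mono (Set.Icc_subset_Icc le_rfl hμb)).intervalIntegrable_of_Icc haμ
  have hintφ2 : IntervalIntegrable φ volume μ b :=
    (hφc.mono (Set.Icc_subset_Icc haμ le_rfl)).intervalIntegrable_of_Icc hμb
  have hsplit : (∫ t in a..μ, φ t) + (∫ t in μ..b, φ t) = ∫ t in a..b, φ t :=
    intervalIntegral.integral_add_adjacent_intervals hintφ1 hintφ2
  -- decompose ∫ (t-c)φ' into ∫ (t-c)(φ'-d) + d ∫ (t-c)
  have cont1 : ContinuousOn (fun t => (t - c₁) * φ' t) (Set.Icc a μ) :=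
    (continuousOn_id.sub continuousOn_const).mul (hcont.mono (Set.Icc_subset_Icc le_rfl hμb))
  have cont2 : ContinuousOn (fun t => (t - c₂) * φ' t) (Set.Icc μ b) :=
    (continuousOn_id.sub continuousOn_const).mul (hcont.mono (Set.Icc_subset_Icc haμ le_rfl))
  have hI1 : (∫ t in a..μ, (t - c₁) * φ' t)
      = (∫ t in a..μ, (t - c₁) * (φ' t - d)) + d * ((μ - c₁)^2/2 - (a - c₁)^2/2) := by
    have hsubint := intervalIntegral.integral_sub
        (cont1.intervalIntegrable_of_Icc haμ)
        (Continuous.intervalIntegrable (μ := MeasureTheory.volume) (by fun_prop : Continuous fun t : ℝ => d * (t - c₁)) a μ)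
    have hcg : (∫ t in a..μ, (t - c₁) * (φ' t - d))
        = ∫ t in a..μ, ((t - c₁) * φ' t - d * (t - c₁)) := by
      congr 1; funext t; ring
    rw [hcg, hsubint, intervalIntegral.integral_const_mul, simpson_int_lin]; ring
  have hI2 : (∫ t in μ..b, (t - c₂) * φ' t)
      = (∫ t in μ..b, (t - c₂) * (φ' t - d)) + d * ((b - c₂)^2/2 - (μ - c₂)^2/2) := by
    have hsubint := intervalIntegral.integral_sub
        (cont2.intervalIntegrable_of_Icc hμb)
        (Continuous.intervalIntegrable (μ := MeasureTheory.volume) (by fun_prop : Continuous fun t : ℝ => d * (t - c₂)) μ b)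
    have hcg : (∫ t in μ..b, (t - c₂) * (φ' t - d))
        = ∫ t in μ..b, ((t - c₂) * φ' t - d * (t - c₂)) := by
      congr 1; funext t; ring
    rw [hcg, hsubint, intervalIntegral.integral_const_mul, simpson_int_lin]; ring
  set J₁ := ∫ t in a..μ, (t - c₁) * (φ' t - d) with hJ₁def
  set J₂ := ∫ t in μ..b, (t - c₂) * (φ' t - d) with hJ₂def
  -- bound J₁ and J₂
  have habs : ∀ x ∈ Set.Icc a b, |φ' x - d| ≤ (M₁ - m₁)/2 := by
    intro x hx
    rw [abs_le]
    constructor <;> [linarith [hm x hx]; linarith [hM x hx]]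
  have hbound : ∀ (u v c : ℝ), a ≤ u → u ≤ v → v ≤ b → u ≤ c → c ≤ v →
      |∫ t in u..v, (t - c) * (φ' t - d)| ≤
        (M₁ - m₁)/2 * ((c - u)^2/2 + (v - c)^2/2) := by
    intro u v c hu huv hv huc hcv
    have hsub : Set.Icc u v ⊆ Set.Icc a b := Set.Icc_subset_Icc hu hv
    have hcf : ContinuousOn (fun t => (t - c) * (φ' t - d)) (Set.Icc u v) :=
      (continuousOn_id.sub continuousOn_const).mul ((hcont.mono hsub).sub continuousOn_const)
    calc |∫ t in u..v, (t - c) * (φ' t - d)|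
        ≤ ∫ t in u..v, |(t - c) * (φ' t - d)| :=
          intervalIntegral.abs_integral_le_integral_abs huv
      _ ≤ ∫ t in u..v, |t - c| * ((M₁ - m₁)/2) := by
          apply intervalIntegral.integral_mono_on huv
          · exact (hcf.abs).intervalIntegrable_of_Icc huv
          · exact (by fun_prop : Continuous fun t : ℝ => |t - c| * ((M₁ - m₁)/2)).intervalIntegrable u v
          · intro x hx
            rw [abs_mul]
            exact mul_le_mul_of_nonneg_left (habs x (hsub hx)) (abs_nonneg _)
      _ = (M₁ - m₁)/2 * ((c - u)^2/2 + (v - c)^2/2) := by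
          rw [intervalIntegral.integral_mul_const, simpson_int_abs u v c huc hcv]; ring
  have hb1 : |J₁| ≤ (M₁ - m₁)/2 * ((c₁ - a)^2/2 + (μ - c₁)^2/2) :=
    hbound a μ c₁ le_rfl haμ hμb (by rw [hc₁]; linarith) (by rw [hc₁, hμ]; linarith)
  have hb2 : |J₂| ≤ (M₁ - m₁)/2 * ((c₂ - μ)^2/2 + (b - c₂)^2/2) :=
    hbound μ b c₂ haμ hμb le_rfl (by rw [hc₂, hμ]; linarith) (by rw [hc₂]; linarith)
  -- identify the error with (1/L)(J₁ + J₂)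
  have hkey : (φ a + φ b) / 6 + 2 / 3 * φ μ - (1 / L) * ∫ t in a..b, φ t
      = (1 / L) * (J₁ + J₂) := by
    have hμc₁ : μ - c₁ = L/3 := by rw [hμ, hc₁, hLdef]; ring
    have hac₁ : a - c₁ = -(L/6) := by rw [hc₁, hLdef]; ring
    have hbc₂ : b - c₂ = L/6 := by rw [hc₂, hLdef]; ring
    have hμc₂ : μ - c₂ = -(L/3) := by rw [hμ, hc₂, hLdef]; ring
    rw [← hsplit, h1, h2, hI1, hI2, hμc₁, hac₁, hbc₂, hμc₂]
    field_simp
    ring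
  rw [hkey, abs_mul, abs_of_pos (by positivity : (0:ℝ) < 1/L)]
  have habs2 : |J₁ + J₂| ≤ |J₁| + |J₂| := abs_add_le _ _
  have hc₁a : c₁ - a = L/6 := by rw [hc₁, hLdef]; ring
  have hμc₁' : μ - c₁ = L/3 := by rw [hμ, hc₁, hLdef]; ring
  have hc₂μ : c₂ - μ = L/3 := by rw [hμ, hc₂, hLdef]; ring
  have hbc₂' : b - c₂ = L/6 := by rw [hc₂, hLdef]; ring
  rw [hc₁a, hμc₁'] at hb1
  rw [hc₂μ, hbc₂'] at hb2
  have hsum : |J₁ + J₂| ≤ (M₁ - m₁)/2 * (10 * L^2/72) := by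
    calc |J₁ + J₂| ≤ |J₁| + |J₂| := habs2
      _ ≤ (M₁ - m₁)/2 * ((L/6)^2/2 + (L/3)^2/2) + (M₁ - m₁)/2 * ((L/3)^2/2 + (L/6)^2/2) := by
          linarith
      _ = (M₁ - m₁)/2 * (10 * L^2/72) := by ring
  calc 1/L * |J₁ + J₂| ≤ 1/L * ((M₁ - m₁)/2 * (10 * L^2/72)) := by
        apply mul_le_mul_of_nonneg_left hsum (by positivity)
    _ = 5 / 72 * (M₁ - m₁) * L := by field_simp; ring
end

section
/- Let φ : ℝ → ℝ be twice continuously differentiable on [a,b] with a < b. Then T_φ(a,b) = ((b-a)²/48) ∫_0^1 t(2-3t)[φ''(a·t/2 + b·(1-t/2)) + φ''(b·t/2 + a·(1-t/2))] dt. -/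
open Set intervalIntegral

theorem simpson_stmt5 (a b : ℝ) (hab : a < b) (φ φ' φ'' : ℝ → ℝ)
    (hφ' : ∀ x ∈ Set.Icc a b, HasDerivWithinAt φ (φ' x) (Set.Icc a b) x)
    (hφ'' : ∀ x ∈ Set.Icc a b, HasDerivWithinAt φ' (φ'' x) (Set.Icc a b) x)
    (hcont : ContinuousOn φ'' (Set.Icc a b)) :
    (φ a + φ b) / 6 + 2 / 3 * φ ((a + b) / 2) - (1 / (b - a)) * ∫ t in a..b, φ t =
      ((b - a) ^ 2 / 48) *
        ∫ t in (0:ℝ)..1, t * (2 - 3 * t) *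
          (φ'' (a * (t / 2) + b * (1 - t / 2)) + φ'' (b * (t / 2) + a * (1 - t / 2))) := by
  have hs0 : 0 < (b - a) / 2 := by linarith
  set s : ℝ := (b - a) / 2 with hs
  have hsne : s ≠ 0 := ne_of_gt hs0
  have hA : ∀ x ∈ Icc (0:ℝ) 1, a + s * x ∈ Icc a b := by
    rintro x ⟨h0, h1⟩
    constructor
    · nlinarith
    · nlinarith [hs0.le]
  have hB : ∀ x ∈ Icc (0:ℝ) 1, b - s * x ∈ Icc a b := by
    rintro x ⟨h0, h1⟩
    constructor
    · nlinarith [hs0.le]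
    · nlinarith
  set g : ℝ → ℝ := fun t => φ (a + s * t) + φ (b - s * t) with hg_def
  set g1 : ℝ → ℝ := fun t => s * φ' (a + s * t) - s * φ' (b - s * t) with hg1_def
  set g2 : ℝ → ℝ := fun t => s ^ 2 * (φ'' (a + s * t) + φ'' (b - s * t)) with hg2_def
  have haffA : ∀ x : ℝ, HasDerivWithinAt (fun t => a + s * t) s (Icc 0 1) x := by
    intro x
    simpa using ((hasDerivWithinAt_id x (Icc (0:ℝ) 1)).const_mul s).const_add a
  have haffB : ∀ x : ℝ, HasDerivWithinAt (fun t => b - s * t) (-s) (Icc 0 1) x := by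
    intro x
    simpa using ((hasDerivWithinAt_id x (Icc (0:ℝ) 1)).const_mul s).const_sub b
  have hcA : Continuous (fun t : ℝ => a + s * t) := by fun_prop
  have hcB : Continuous (fun t : ℝ => b - s * t) := by fun_prop
  have hφc : ContinuousOn φ (Icc a b) := fun x hx => (hφ' x hx).continuousWithinAt
  have hφ'c : ContinuousOn φ' (Icc a b) := fun x hx => (hφ'' x hx).continuousWithinAt
  -- derivatives of g and g1
  have hg : ∀ x ∈ Icc (0:ℝ) 1, HasDerivWithinAt g (g1 x) (Icc 0 1) x := by
    intro x hx
    have h1 := (hφ' _ (hA x hx)).comp x (haffA x) hA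
    have h2 := (hφ' _ (hB x hx)).comp x (haffB x) hB
    have heq : g1 x = φ' (a + s * x) * s + φ' (b - s * x) * (-s) := by
      simp only [hg1_def]; ring
    rw [heq]
    exact h1.add h2
  have hg1 : ∀ x ∈ Icc (0:ℝ) 1, HasDerivWithinAt g1 (g2 x) (Icc 0 1) x := by
    intro x hx
    have h1 := ((hφ'' _ (hA x hx)).comp x (haffA x) hA).const_mul s
    have h2 := ((hφ'' _ (hB x hx)).comp x (haffB x) hB).const_mul s
    have heq : g2 x = s * (φ'' (a + s * x) * s) - s * (φ'' (b - s * x) * (-s)) := by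
      simp only [hg2_def]; ring
    rw [heq]
    exact h1.sub h2
  -- continuity of g, g1, g2 on [0,1]
  have hgc : ContinuousOn g (Icc 0 1) :=
    (hφc.comp hcA.continuousOn hA).add (hφc.comp hcB.continuousOn hB)
  have hg1c : ContinuousOn g1 (Icc 0 1) :=
    (continuousOn_const.mul (hφ'c.comp hcA.continuousOn hA)).sub
      (continuousOn_const.mul (hφ'c.comp hcB.continuousOn hB))
  have hg2c : ContinuousOn g2 (Icc 0 1) :=
    continuousOn_const.mul
      ((hcont.comp hcA.continuousOn hA).add (hcont.comp hcB.continuousOn hB))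
  -- FTC for F
  set F : ℝ → ℝ := fun t => t * (2 - 3 * t) * g1 t - (2 - 6 * t) * g t with hF_def
  have hFc : ContinuousOn F (Icc 0 1) := by
    apply ContinuousOn.sub
    · exact (Continuous.continuousOn (by fun_prop)).mul hg1c
    · exact (Continuous.continuousOn (by fun_prop)).mul hgc
  have hFd : ∀ x ∈ Ioo (0:ℝ) 1, HasDerivWithinAt F (x * (2 - 3 * x) * g2 x + 6 * g x) (Ioi x) x := by
    intro x hx
    have hmem : Icc (0:ℝ) 1 ∈ nhds x := Icc_mem_nhds hx.1 hx.2
    have hgx : HasDerivAt g (g1 x) x := (hg x (Ioo_subset_Icc_self hx)).hasDerivAt hmem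
    have hg1x : HasDerivAt g1 (g2 x) x := (hg1 x (Ioo_subset_Icc_self hx)).hasDerivAt hmem
    have hp : HasDerivAt (fun t : ℝ => t * (2 - 3 * t)) (2 - 6 * x) x := by
      have h := (hasDerivAt_id x).mul (((hasDerivAt_id x).const_mul 3).const_sub 2)
      convert h using 1
      · rfl
      · rfl
      · funext t; simp only [Pi.mul_apply, id]
      · simp only [id]; ring
    have hq : HasDerivAt (fun t : ℝ => (2 - 6 * t)) (-6) x := by
      simpa using ((hasDerivAt_id x).const_mul 6).const_sub 2
    have h := (hp.mul hg1x).sub (hq.mul hgx)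
    have : x * (2 - 3 * x) * g2 x + 6 * g x
        = ((2 - 6 * x) * g1 x + x * (2 - 3 * x) * g2 x) - ((-6) * g x + (2 - 6 * x) * g1 x) := by
      ring
    rw [this]
    exact h.hasDerivWithinAt
  have hintF' : IntervalIntegrable (fun t => t * (2 - 3 * t) * g2 t + 6 * g t)
      MeasureTheory.volume 0 1 := by
    apply ContinuousOn.intervalIntegrable
    rw [uIcc_of_le (by norm_num : (0:ℝ) ≤ 1)]
    exact ((Continuous.continuousOn (by fun_prop)).mul hg2c).add (continuousOn_const.mul hgc)
  have key : ∫ t in (0:ℝ)..1, (t * (2 - 3 * t) * g2 t + 6 * g t) = F 1 - F 0 :=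
    intervalIntegral.integral_eq_sub_of_hasDeriv_right_of_le (by norm_num) hFc hFd hintF'
  -- split the integral
  have hint1 : IntervalIntegrable (fun t => t * (2 - 3 * t) * g2 t) MeasureTheory.volume 0 1 := by
    apply ContinuousOn.intervalIntegrable
    rw [uIcc_of_le (by norm_num : (0:ℝ) ≤ 1)]
    exact (Continuous.continuousOn (by fun_prop)).mul hg2c
  have hint2 : IntervalIntegrable (fun t => 6 * g t) MeasureTheory.volume 0 1 := by
    apply ContinuousOn.intervalIntegrable
    rw [uIcc_of_le (by norm_num : (0:ℝ) ≤ 1)]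
    exact continuousOn_const.mul hgc
  rw [intervalIntegral.integral_add hint1 hint2, intervalIntegral.integral_const_mul] at key
  -- compute ∫ g
  have hintgA : IntervalIntegrable (fun t => φ (a + s * t)) MeasureTheory.volume 0 1 := by
    apply ContinuousOn.intervalIntegrable
    rw [uIcc_of_le (by norm_num : (0:ℝ) ≤ 1)]
    exact hφc.comp hcA.continuousOn hA
  have hintgB : IntervalIntegrable (fun t => φ (b - s * t)) MeasureTheory.volume 0 1 := by
    apply ContinuousOn.intervalIntegrable
    rw [uIcc_of_le (by norm_num : (0:ℝ) ≤ 1)]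
    exact hφc.comp hcB.continuousOn hB
  have hIg : ∫ t in (0:ℝ)..1, g t = (1 / s) * ∫ t in a..b, φ t := by
    have hsplit : ∫ t in (0:ℝ)..1, g t
        = (∫ t in (0:ℝ)..1, φ (a + s * t)) + ∫ t in (0:ℝ)..1, φ (b - s * t) := by
      simp only [hg_def]
      exact intervalIntegral.integral_add hintgA hintgB
    have e1 : ∫ t in (0:ℝ)..1, φ (a + s * t) = s⁻¹ * ∫ x in a..(a + s), φ x := by
      have h := intervalIntegral.integral_comp_mul_add (a := 0) (b := 1) φ hsne a
      simp only [mul_zero, zero_add, mul_one, smul_eq_mul] at h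
      have hf : (fun t => φ (a + s * t)) = fun t => φ (s * t + a) := by
        ext t; congr 1; ring
      rw [hf, h, add_comm s a]
    have e2 : ∫ t in (0:ℝ)..1, φ (b - s * t) = (-s)⁻¹ * ∫ x in b..(b - s), φ x := by
      have h := intervalIntegral.integral_comp_mul_add (a := 0) (b := 1) φ (neg_ne_zero.mpr hsne) b
      simp only [mul_zero, zero_add, mul_one, smul_eq_mul] at h
      have hf : (fun t => φ (b - s * t)) = fun t => φ (-s * t + b) := by
        ext t; congr 1; ring
      have he : -s + b = b - s := by ring
      rw [hf, h, he]
    have hadj : (∫ x in a..(a + s), φ x) + ∫ x in (a + s)..b, φ x = ∫ x in a..b, φ x := by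
      apply intervalIntegral.integral_add_adjacent_intervals
      · apply ContinuousOn.intervalIntegrable
        apply hφc.mono
        rw [uIcc_of_le (by linarith : a ≤ a + s)]
        apply Icc_subset_Icc le_rfl
        simp only [hs]; linarith
      · apply ContinuousOn.intervalIntegrable
        apply hφc.mono
        rw [uIcc_of_le (by simp only [hs]; linarith : a + s ≤ b)]
        apply Icc_subset_Icc _ le_rfl
        linarith
    have hbs : b - s = a + s := by simp only [hs]; ring
    rw [hsplit, e1, e2, hbs, intervalIntegral.integral_symm (a + s) b]
    field_simp
    linarith [hadj]
  -- g1 1 = 0, g 1, g 0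
  have hm : a + s * 1 = (a + b) / 2 := by simp only [hs]; ring
  have hm' : b - s * 1 = (a + b) / 2 := by simp only [hs]; ring
  have hg11 : g1 1 = 0 := by simp only [hg1_def, hm, hm', sub_self]
  have hgone : g 1 = 2 * φ ((a + b) / 2) := by simp only [hg_def, hm, hm']; ring
  have hgzero : g 0 = φ a + φ b := by simp only [hg_def, mul_zero, add_zero, sub_zero]
  have hF1 : F 1 - F 0 = 8 * φ ((a + b) / 2) + 2 * (φ a + φ b) := by
    simp only [hF_def, hg11, hgone, hgzero]
    ring
  -- relate ∫ t(2-3t) g2 to the goal integral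
  have hJ : ∫ t in (0:ℝ)..1, t * (2 - 3 * t) * g2 t
      = s ^ 2 * ∫ t in (0:ℝ)..1, t * (2 - 3 * t) *
          (φ'' (a * (t / 2) + b * (1 - t / 2)) + φ'' (b * (t / 2) + a * (1 - t / 2))) := by
    rw [← intervalIntegral.integral_const_mul]
    apply intervalIntegral.integral_congr
    intro t ht
    have e1 : a * (t / 2) + b * (1 - t / 2) = b - s * t := by simp only [hs]; ring
    have e2 : b * (t / 2) + a * (1 - t / 2) = a + s * t := by simp only [hs]; ring
    simp only [hg2_def, e1, e2]
    ring
  rw [hJ, hIg, hF1] at key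
  have hba : b - a = 2 * s := by simp only [hs]; ring
  rw [hba]
  generalize (∫ t in (0:ℝ)..1, t * (2 - 3 * t) *
    (φ'' (a * (t / 2) + b * (1 - t / 2)) + φ'' (b * (t / 2) + a * (1 - t / 2)))) = I at key ⊢
  field_simp at key ⊢
  nlinarith [key, sq_nonneg s]
end

section
/- Let φ : ℝ → ℝ be twice continuously differentiable on [a,b] with a < b, and let m₂ ≤ φ''(t) ≤ M₂ on [a,b]. Then |(φ(a)+φ(b))/6 + (2/3)φ((a+b)/2) - (1/(b-a))∫_a^b φ(t) dt| ≤ (1/162)(M₂ - m₂)(b-a)². -/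
open Set intervalIntegral MeasureTheory Topology
set_option maxHeartbeats 1000000

private lemma poly_int (A B C p q : ℝ) :
    ∫ x in p..q, (A * x ^ 2 + B * x + C) =
      A * (q ^ 3 - p ^ 3) / 3 + B * (q ^ 2 - p ^ 2) / 2 + C * (q - p) := by
  have hd : ∀ x : ℝ, HasDerivAt (fun x : ℝ => A * x ^ 3 / 3 + B * x ^ 2 / 2 + C * x)
      (A * x ^ 2 + B * x + C) x := by
    intro x
    have h1 := ((hasDerivAt_pow 3 x).const_mul A).div_const 3
    have h2 := ((hasDerivAt_pow 2 x).const_mul B).div_const 2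
    have h3 := (hasDerivAt_id x).const_mul C
    have h := (h1.add h2).add h3
    exact h.congr_deriv (by push_cast; ring)
  rw [intervalIntegral.integral_eq_sub_of_hasDerivAt (fun x _ => hd x)
    ((by fun_prop : Continuous fun x : ℝ => A * x ^ 2 + B * x + C).intervalIntegrable p q)]
  ring

private lemma piece_bound (p r : ℝ) (hpr : p ≤ r) (f g : ℝ → ℝ)
    (hfi : IntervalIntegrable f volume p r) (hgi : IntervalIntegrable g volume p r)
    (hb : ∀ x ∈ Icc p r, |f x| ≤ g x) : |∫ x in p..r, f x| ≤ ∫ x in p..r, g x := by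
  have h1 := intervalIntegral.integral_mono_on hpr hfi hgi (fun x hx => (abs_le.mp (hb x hx)).2)
  have h2 := intervalIntegral.integral_mono_on hpr hgi.neg hfi
    (fun x hx => (abs_le.mp (hb x hx)).1)
  simp only [Pi.neg_apply, intervalIntegral.integral_neg] at h2
  exact abs_le.mpr ⟨by linarith, h1⟩

private lemma ibp (a b L R A B C : ℝ) (hLR : L ≤ R) (hsub : Icc L R ⊆ Icc a b)
    (ψ ψ' ψ'' : ℝ → ℝ)
    (h1 : ∀ x ∈ Icc a b, HasDerivWithinAt ψ (ψ' x) (Icc a b) x)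
    (h2 : ∀ x ∈ Icc a b, HasDerivWithinAt ψ' (ψ'' x) (Icc a b) x)
    (hc : ContinuousOn ψ'' (Icc a b)) :
    ∫ t in L..R, (A * t ^ 2 + B * t + C) * ψ'' t =
      ((A * R ^ 2 + B * R + C) * ψ' R - (2 * A * R + B) * ψ R)
      - ((A * L ^ 2 + B * L + C) * ψ' L - (2 * A * L + B) * ψ L)
      + 2 * A * ∫ t in L..R, ψ t := by
  have hcψ : ContinuousOn ψ (Icc a b) := fun x hx => (h1 x hx).continuousWithinAt
  have hcψ' : ContinuousOn ψ' (Icc a b) := fun x hx => (h2 x hx).continuousWithinAt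
  have hpc : Continuous fun t : ℝ => A * t ^ 2 + B * t + C := by fun_prop
  have hqc : Continuous fun t : ℝ => 2 * A * t + B := by fun_prop
  have key := intervalIntegral.integral_eq_sub_of_hasDeriv_right_of_le hLR
    (f := fun t => (A * t ^ 2 + B * t + C) * ψ' t - (2 * A * t + B) * ψ t)
    (f' := fun t => (A * t ^ 2 + B * t + C) * ψ'' t - 2 * A * ψ t)
    (((hpc.continuousOn).mul (hcψ'.mono hsub)).sub ((hqc.continuousOn).mul (hcψ.mono hsub)))
    (by
      intro x hx
      have hxab : x ∈ Ioo a b := by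
        have h := interior_mono hsub
        rw [interior_Icc, interior_Icc] at h
        exact h hx
      have hmem : Icc a b ∈ 𝓝 x := Icc_mem_nhds hxab.1 hxab.2
      have hxI : x ∈ Icc a b := Ioo_subset_Icc_self hxab
      have hψ : HasDerivAt ψ (ψ' x) x := (h1 x hxI).hasDerivAt hmem
      have hψ' : HasDerivAt ψ' (ψ'' x) x := (h2 x hxI).hasDerivAt hmem
      have hp : HasDerivAt (fun t : ℝ => A * t ^ 2 + B * t + C) (2 * A * x + B) x := by
        have h := (((hasDerivAt_pow 2 x).const_mul A).add
          ((hasDerivAt_id x).const_mul B)).add_const C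
        exact h.congr_deriv (by push_cast; ring)
      have hq : HasDerivAt (fun t : ℝ => 2 * A * t + B) (2 * A) x := by
        have h := ((hasDerivAt_id x).const_mul (2 * A)).add_const B
        simpa using h
      have hG := (hp.mul hψ').sub (hq.mul hψ)
      have heq : (2 * A * x + B) * ψ' x + (A * x ^ 2 + B * x + C) * ψ'' x -
          (2 * A * ψ x + (2 * A * x + B) * ψ' x)
          = (A * x ^ 2 + B * x + C) * ψ'' x - 2 * A * ψ x := by ring
      rw [heq] at hG
      exact hG.hasDerivWithinAt)
    (by
      apply ContinuousOn.intervalIntegrable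
      rw [uIcc_of_le hLR]
      exact ((hpc.continuousOn).mul ((hc.mono hsub))).sub
        ((continuous_const.continuousOn).mul (hcψ.mono hsub)))
  have hi1 : IntervalIntegrable (fun t => (A * t ^ 2 + B * t + C) * ψ'' t) volume L R := by
    apply ContinuousOn.intervalIntegrable
    rw [uIcc_of_le hLR]
    exact (hpc.continuousOn).mul (hc.mono hsub)
  have hi2 : IntervalIntegrable (fun t => 2 * A * ψ t) volume L R := by
    apply ContinuousOn.intervalIntegrable
    rw [uIcc_of_le hLR]
    exact (continuous_const.continuousOn).mul (hcψ.mono hsub)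
  rw [intervalIntegral.integral_sub hi1 hi2, intervalIntegral.integral_const_mul] at key
  linarith
private lemma core (a b K : ℝ) (hab : a < b) (hK : 0 ≤ K) (ψ ψ' ψ'' : ℝ → ℝ)
    (h1 : ∀ x ∈ Icc a b, HasDerivWithinAt ψ (ψ' x) (Icc a b) x)
    (h2 : ∀ x ∈ Icc a b, HasDerivWithinAt ψ' (ψ'' x) (Icc a b) x)
    (hc : ContinuousOn ψ'' (Icc a b))
    (hbd : ∀ x ∈ Icc a b, |ψ'' x| ≤ K) :
    |(b - a) / 6 * (ψ a + ψ b) + 2 * (b - a) / 3 * ψ ((a + b) / 2) - ∫ t in a..b, ψ t|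
      ≤ K * (b - a) ^ 3 / 81 := by
  have hcψ : ContinuousOn ψ (Icc a b) := fun x hx => (h1 x hx).continuousWithinAt
  set m : ℝ := (a + b) / 2 with hm
  set c1 : ℝ := (2 * a + b) / 3 with hc1
  set c2 : ℝ := (a + 2 * b) / 3 with hc2
  have hac1 : a ≤ c1 := by rw [hc1]; linarith
  have hc1m : c1 ≤ m := by rw [hc1, hm]; linarith
  have hmc2 : m ≤ c2 := by rw [hm, hc2]; linarith
  have hc2b : c2 ≤ b := by rw [hc2]; linarith
  have ham : a ≤ m := le_trans hac1 hc1m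
  have hmb : m ≤ b := le_trans hmc2 hc2b
  have hsub1 : Icc a m ⊆ Icc a b := Icc_subset_Icc le_rfl hmb
  have hsub2 : Icc m b ⊆ Icc a b := Icc_subset_Icc ham le_rfl
  -- coefficients for the two kernels
  have I1 := ibp a b a m (-(1:ℝ)/2) ((5*a+b)/6) (-(a*(2*a+b))/6) ham hsub1 ψ ψ' ψ'' h1 h2 hc
  have I2 := ibp a b m b (-(1:ℝ)/2) ((a+5*b)/6) (-(b*(a+2*b))/6) hmb hsub2 ψ ψ' ψ'' h1 h2 hc
  have hint : ∀ p r : ℝ, p ≤ r → Icc p r ⊆ Icc a b → IntervalIntegrable ψ volume p r := by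
    intro p r hpr hs
    apply ContinuousOn.intervalIntegrable
    rw [uIcc_of_le hpr]
    exact hcψ.mono hs
  have hadd : (∫ t in a..m, ψ t) + ∫ t in m..b, ψ t = ∫ t in a..b, ψ t :=
    intervalIntegral.integral_add_adjacent_intervals (hint a m ham hsub1) (hint m b hmb hsub2)
  have hiden : (b - a) / 6 * (ψ a + ψ b) + 2 * (b - a) / 3 * ψ m - ∫ t in a..b, ψ t
      = (∫ t in a..m, (-(1:ℝ)/2 * t ^ 2 + (5*a+b)/6 * t + -(a*(2*a+b))/6) * ψ'' t)
        + ∫ t in m..b, (-(1:ℝ)/2 * t ^ 2 + (a+5*b)/6 * t + -(b*(a+2*b))/6) * ψ'' t := by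
    rw [I1, I2, ← hadd, hm]
    ring
  -- split each into two pieces and bound
  have hintk : ∀ p r B C : ℝ, p ≤ r → Icc p r ⊆ Icc a b →
      IntervalIntegrable (fun t => (-(1:ℝ)/2 * t ^ 2 + B * t + C) * ψ'' t) volume p r := by
    intro p r B C hpr hs
    apply ContinuousOn.intervalIntegrable
    rw [uIcc_of_le hpr]
    exact ((by fun_prop : Continuous fun t : ℝ => -(1:ℝ)/2 * t ^ 2 + B * t + C).continuousOn).mul
      (hc.mono hs)
  have hsp1 : (∫ t in a..m, (-(1:ℝ)/2 * t ^ 2 + (5*a+b)/6 * t + -(a*(2*a+b))/6) * ψ'' t)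
      = (∫ t in a..c1, (-(1:ℝ)/2 * t ^ 2 + (5*a+b)/6 * t + -(a*(2*a+b))/6) * ψ'' t)
        + ∫ t in c1..m, (-(1:ℝ)/2 * t ^ 2 + (5*a+b)/6 * t + -(a*(2*a+b))/6) * ψ'' t :=
    (intervalIntegral.integral_add_adjacent_intervals
      (hintk a c1 _ _ hac1 (Icc_subset_Icc le_rfl (le_trans hc1m hmb)))
      (hintk c1 m _ _ hc1m (Icc_subset_Icc hac1 hmb))).symm
  have hsp2 : (∫ t in m..b, (-(1:ℝ)/2 * t ^ 2 + (a+5*b)/6 * t + -(b*(a+2*b))/6) * ψ'' t)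
      = (∫ t in m..c2, (-(1:ℝ)/2 * t ^ 2 + (a+5*b)/6 * t + -(b*(a+2*b))/6) * ψ'' t)
        + ∫ t in c2..b, (-(1:ℝ)/2 * t ^ 2 + (a+5*b)/6 * t + -(b*(a+2*b))/6) * ψ'' t :=
    (intervalIntegral.integral_add_adjacent_intervals
      (hintk m c2 _ _ hmc2 (Icc_subset_Icc ham hc2b))
      (hintk c2 b _ _ hc2b (Icc_subset_Icc (le_trans ham hmc2) le_rfl))).symm
  -- generic polynomial-times-K integrability
  have hintg : ∀ p r A' B' C' : ℝ, IntervalIntegrable (fun t => (A' * t ^ 2 + B' * t + C') * K) volume p r :=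
    fun p r A' B' C' => ((by fun_prop : Continuous fun t : ℝ => (A' * t ^ 2 + B' * t + C') * K).intervalIntegrable p r)
  -- piece 1 : a .. c1, kernel ≥ 0
  have hb1 : |∫ t in a..c1, (-(1:ℝ)/2 * t ^ 2 + (5*a+b)/6 * t + -(a*(2*a+b))/6) * ψ'' t|
      ≤ K * (b - a) ^ 3 / 324 := by
    have hval : ∫ t in a..c1, ((-(1:ℝ)/2) * t ^ 2 + ((5*a+b)/6) * t + (-(a*(2*a+b))/6)) * K
        = K * (b - a) ^ 3 / 324 := by
      rw [intervalIntegral.integral_mul_const, poly_int, hc1]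
      ring
    rw [← hval]
    apply piece_bound a c1 hac1 _ _
      (hintk a c1 _ _ hac1 (Icc_subset_Icc le_rfl (le_trans hc1m hmb))) (hintg a c1 _ _ _)
    intro x hx
    have hxab : x ∈ Icc a b := ⟨hx.1, le_trans hx.2 (le_trans hc1m hmb)⟩
    have hk0 : (0:ℝ) ≤ -(1:ℝ)/2 * x ^ 2 + (5*a+b)/6 * x + -(a*(2*a+b))/6 := by
      have hxc : x ≤ (2*a+b)/3 := by rw [← hc1]; exact hx.2
      have h := mul_nonneg (sub_nonneg.2 hx.1) (sub_nonneg.2 hxc)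
      nlinarith [h]
    rw [abs_mul, abs_of_nonneg hk0]
    exact mul_le_mul_of_nonneg_left (hbd x hxab) hk0
  -- piece 2 : c1 .. m, kernel ≤ 0
  have hb2 : |∫ t in c1..m, (-(1:ℝ)/2 * t ^ 2 + (5*a+b)/6 * t + -(a*(2*a+b))/6) * ψ'' t|
      ≤ K * (b - a) ^ 3 / 324 := by
    have hval : ∫ t in c1..m, (((1:ℝ)/2) * t ^ 2 + (-((5*a+b)/6)) * t + (a*(2*a+b))/6) * K
        = K * (b - a) ^ 3 / 324 := by
      rw [intervalIntegral.integral_mul_const, poly_int, hc1, hm]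
      ring
    rw [← hval]
    apply piece_bound c1 m hc1m _ _
      (hintk c1 m _ _ hc1m (Icc_subset_Icc hac1 hmb)) (hintg c1 m _ _ _)
    intro x hx
    have hax : a ≤ x := le_trans hac1 hx.1
    have hxab : x ∈ Icc a b := ⟨hax, le_trans hx.2 hmb⟩
    have hk0 : -(1:ℝ)/2 * x ^ 2 + (5*a+b)/6 * x + -(a*(2*a+b))/6 ≤ 0 := by
      have h := mul_nonneg (sub_nonneg.2 hax) (sub_nonneg.2 hx.1)
      nlinarith [h]
    rw [abs_mul, abs_of_nonpos hk0]
    refine le_trans (mul_le_mul_of_nonneg_left (hbd x hxab) (by linarith)) (le_of_eq (by ring))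
  -- piece 3 : m .. c2, kernel ≤ 0
  have hb3 : |∫ t in m..c2, (-(1:ℝ)/2 * t ^ 2 + (a+5*b)/6 * t + -(b*(a+2*b))/6) * ψ'' t|
      ≤ K * (b - a) ^ 3 / 324 := by
    have hval : ∫ t in m..c2, (((1:ℝ)/2) * t ^ 2 + (-((a+5*b)/6)) * t + (b*(a+2*b))/6) * K
        = K * (b - a) ^ 3 / 324 := by
      rw [intervalIntegral.integral_mul_const, poly_int, hc2, hm]
      ring
    rw [← hval]
    apply piece_bound m c2 hmc2 _ _
      (hintk m c2 _ _ hmc2 (Icc_subset_Icc ham hc2b)) (hintg m c2 _ _ _)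
    intro x hx
    have hxb : x ≤ b := le_trans hx.2 hc2b
    have hxab : x ∈ Icc a b := ⟨le_trans ham hx.1, hxb⟩
    have hk0 : -(1:ℝ)/2 * x ^ 2 + (a+5*b)/6 * x + -(b*(a+2*b))/6 ≤ 0 := by
      have h := mul_nonneg (sub_nonneg.2 hxb) (sub_nonneg.2 hx.2)
      nlinarith [h]
    rw [abs_mul, abs_of_nonpos hk0]
    refine le_trans (mul_le_mul_of_nonneg_left (hbd x hxab) (by linarith)) (le_of_eq (by ring))
  -- piece 4 : c2 .. b, kernel ≥ 0
  have hb4 : |∫ t in c2..b, (-(1:ℝ)/2 * t ^ 2 + (a+5*b)/6 * t + -(b*(a+2*b))/6) * ψ'' t|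
      ≤ K * (b - a) ^ 3 / 324 := by
    have hval : ∫ t in c2..b, ((-(1:ℝ)/2) * t ^ 2 + ((a+5*b)/6) * t + (-(b*(a+2*b))/6)) * K
        = K * (b - a) ^ 3 / 324 := by
      rw [intervalIntegral.integral_mul_const, poly_int, hc2]
      ring
    rw [← hval]
    apply piece_bound c2 b hc2b _ _
      (hintk c2 b _ _ hc2b (Icc_subset_Icc (le_trans ham hmc2) le_rfl)) (hintg c2 b _ _ _)
    intro x hx
    have hxab : x ∈ Icc a b := ⟨le_trans (le_trans ham hmc2) hx.1, hx.2⟩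
    have hk0 : (0:ℝ) ≤ -(1:ℝ)/2 * x ^ 2 + (a+5*b)/6 * x + -(b*(a+2*b))/6 := by
      have hxc : (a+2*b)/3 ≤ x := by rw [← hc2]; exact hx.1
      have h := mul_nonneg (sub_nonneg.2 hx.2) (sub_nonneg.2 hxc)
      nlinarith [h]
    rw [abs_mul, abs_of_nonneg hk0]
    exact mul_le_mul_of_nonneg_left (hbd x hxab) hk0
  -- assemble
  rw [hiden, hsp1, hsp2]
  refine le_trans (abs_add_le _ _) ?_
  refine le_trans (add_le_add (abs_add_le _ _) (abs_add_le _ _)) ?_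
  linarith
theorem simpson_stmt6 (a b m₂ M₂ : ℝ) (hab : a < b) (φ φ' φ'' : ℝ → ℝ)
    (hφ' : ∀ x ∈ Set.Icc a b, HasDerivWithinAt φ (φ' x) (Set.Icc a b) x)
    (hφ'' : ∀ x ∈ Set.Icc a b, HasDerivWithinAt φ' (φ'' x) (Set.Icc a b) x)
    (hcont : ContinuousOn φ'' (Set.Icc a b))
    (hm : ∀ x ∈ Set.Icc a b, m₂ ≤ φ'' x) (hM : ∀ x ∈ Set.Icc a b, φ'' x ≤ M₂) :
    |(φ a + φ b) / 6 + 2 / 3 * φ ((a + b) / 2) - (1 / (b - a)) * ∫ t in a..b, φ t| ≤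
      1 / 162 * (M₂ - m₂) * (b - a) ^ 2 := by
  set c : ℝ := (m₂ + M₂) / 2 with hcdef
  set K : ℝ := (M₂ - m₂) / 2 with hKdef
  have haI : a ∈ Icc a b := ⟨le_rfl, le_of_lt hab⟩
  have hm2M2 : m₂ ≤ M₂ := le_trans (hm a haI) (hM a haI)
  have hK0 : 0 ≤ K := by rw [hKdef]; linarith
  -- the shifted function
  have h1 : ∀ x ∈ Icc a b, HasDerivWithinAt (fun t => φ t - c * t ^ 2 / 2)
      (φ' x - c * x) (Icc a b) x := by
    intro x hx
    have hq : HasDerivAt (fun t : ℝ => c * t ^ 2 / 2) (c * x) x := by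
      have h := ((hasDerivAt_pow 2 x).const_mul c).div_const 2
      exact h.congr_deriv (by push_cast; ring)
    exact (hφ' x hx).sub hq.hasDerivWithinAt
  have h2 : ∀ x ∈ Icc a b, HasDerivWithinAt (fun t => φ' t - c * t)
      (φ'' x - c) (Icc a b) x := by
    intro x hx
    have hq : HasDerivAt (fun t : ℝ => c * t) c x := by
      simpa using (hasDerivAt_id x).const_mul c
    exact (hφ'' x hx).sub hq.hasDerivWithinAt
  have hc : ContinuousOn (fun t => φ'' t - c) (Icc a b) := hcont.sub continuousOn_const
  have hbd : ∀ x ∈ Icc a b, |φ'' x - c| ≤ K := by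
    intro x hx
    have := hm x hx
    have := hM x hx
    rw [abs_le, hcdef, hKdef]
    constructor <;> · simp only [hcdef, hKdef] at *; linarith
  have hcore := core a b K hab hK0 (fun t => φ t - c * t ^ 2 / 2) (fun t => φ' t - c * t)
    (fun t => φ'' t - c) h1 h2 hc hbd
  -- integrals
  have hφc : ContinuousOn φ (Icc a b) := fun x hx => (hφ' x hx).continuousWithinAt
  have hφint : IntervalIntegrable φ volume a b := by
    apply ContinuousOn.intervalIntegrable
    rwa [uIcc_of_le (le_of_lt hab)]
  have hqint : IntervalIntegrable (fun t : ℝ => c * t ^ 2 / 2) volume a b :=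
    (by fun_prop : Continuous fun t : ℝ => c * t ^ 2 / 2).intervalIntegrable a b
  have hqval : ∫ t in a..b, c * t ^ 2 / 2 = c * (b ^ 3 - a ^ 3) / 6 := by
    have h := poly_int (c / 2) 0 0 a b
    have heq : ∫ t in a..b, c * t ^ 2 / 2 = ∫ t in a..b, (c / 2 * t ^ 2 + 0 * t + 0) :=
      intervalIntegral.integral_congr (fun x _ => by ring)
    rw [heq, h]
    ring
  have hψint : (∫ t in a..b, (φ t - c * t ^ 2 / 2)) =
      (∫ t in a..b, φ t) - c * (b ^ 3 - a ^ 3) / 6 := by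
    rw [intervalIntegral.integral_sub hφint hqint, hqval]
  have hba : (0:ℝ) < b - a := by linarith
  have hbane : b - a ≠ 0 := ne_of_gt hba
  -- rewrite the goal quantity
  have hkey : (φ a + φ b) / 6 + 2 / 3 * φ ((a + b) / 2) - (1 / (b - a)) * ∫ t in a..b, φ t
      = ((b - a) / 6 * ((φ a - c * a ^ 2 / 2) + (φ b - c * b ^ 2 / 2))
        + 2 * (b - a) / 3 * (φ ((a + b) / 2) - c * ((a + b) / 2) ^ 2 / 2)
        - ∫ t in a..b, (φ t - c * t ^ 2 / 2)) / (b - a) := by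
    rw [hψint]
    field_simp
    ring
  rw [hkey]
  rw [abs_div, abs_of_pos hba]
  rw [div_le_iff₀ hba]
  calc |(b - a) / 6 * ((φ a - c * a ^ 2 / 2) + (φ b - c * b ^ 2 / 2))
        + 2 * (b - a) / 3 * (φ ((a + b) / 2) - c * ((a + b) / 2) ^ 2 / 2)
        - ∫ t in a..b, (φ t - c * t ^ 2 / 2)| ≤ K * (b - a) ^ 3 / 81 := hcore
    _ = 1 / 162 * (M₂ - m₂) * (b - a) ^ 2 * (b - a) := by rw [hKdef]; ring
end

section
/- Let φ : ℝ → ℝ be three times continuously differentiable on [a,b] with a < b. Then T_φ(a,b) = ((b-a)³/96) ∫_0^1 t²(1-t)[φ'''(a·t/2 + b·(1-t/2)) - φ'''(b·t/2 + a·(1-t/2))] dt. -/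
open intervalIntegral MeasureTheory Set

lemma simpson_global (a b : ℝ) (hab : a < b) (ψ ψ' ψ'' ψ''' : ℝ → ℝ)
    (h1 : ∀ x, HasDerivAt ψ (ψ' x) x) (h2 : ∀ x, HasDerivAt ψ' (ψ'' x) x)
    (h3 : ∀ x, HasDerivAt ψ'' (ψ''' x) x) (hc3 : Continuous ψ''') :
    (ψ a + ψ b) / 6 + 2 / 3 * ψ ((a + b) / 2) - (1 / (b - a)) * ∫ t in a..b, ψ t =
      ((b - a) ^ 3 / 96) * ∫ t in (0:ℝ)..1, t ^ 2 * (1 - t) *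
          (ψ''' (a * (t / 2) + b * (1 - t / 2)) - ψ''' (b * (t / 2) + a * (1 - t / 2))) := by
  set m : ℝ := (a + b) / 2 with hm
  set h : ℝ := (b - a) / 2 with hh
  have hhpos : 0 < h := by simp [hh]; linarith
  have hne : h ≠ 0 := ne_of_gt hhpos
  have hc2 : Continuous ψ'' := by
    rw [continuous_iff_continuousAt]; exact fun x => (h3 x).continuousAt
  have hc1 : Continuous ψ' := by
    rw [continuous_iff_continuousAt]; exact fun x => (h2 x).continuousAt
  have hc0 : Continuous ψ := by
    rw [continuous_iff_continuousAt]; exact fun x => (h1 x).continuousAt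
  set Ψ : ℝ → ℝ := fun x => ∫ t in m..x, ψ t with hΨdef
  have hΨ : ∀ x, HasDerivAt Ψ (ψ x) x := fun x =>
    integral_hasDerivAt_right (hc0.intervalIntegrable _ _)
      (hc0.stronglyMeasurableAtFilter _ _) hc0.continuousAt
  -- composed derivatives
  have cplus : ∀ (f f' : ℝ → ℝ), (∀ x, HasDerivAt f (f' x) x) → ∀ u : ℝ,
      HasDerivAt (fun u => f (m + u)) (f' (m + u)) u := by
    intro f f' hf u
    simpa [Function.comp_def] using (hf (m + u)).comp u ((hasDerivAt_id u).const_add m)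
  have cminus : ∀ (f f' : ℝ → ℝ), (∀ x, HasDerivAt f (f' x) x) → ∀ u : ℝ,
      HasDerivAt (fun u => f (m - u)) (-f' (m - u)) u := by
    intro f f' hf u
    simpa [Function.comp_def] using (hf (m - u)).comp u ((hasDerivAt_id u).const_sub m)
  set G : ℝ → ℝ := fun u => u / 3 * (ψ (m - u) + 4 * ψ m + ψ (m + u)) - (Ψ (m + u) - Ψ (m - u))
    with hGdef
  set G1 : ℝ → ℝ := fun u => 4 / 3 * ψ m - 2 / 3 * (ψ (m + u) + ψ (m - u))
      + u / 3 * (ψ' (m + u) - ψ' (m - u)) with hG1def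
  set G2 : ℝ → ℝ := fun u => -(1 / 3) * (ψ' (m + u) - ψ' (m - u))
      + u / 3 * (ψ'' (m + u) + ψ'' (m - u)) with hG2def
  set G3 : ℝ → ℝ := fun u => u / 3 * (ψ''' (m + u) - ψ''' (m - u)) with hG3def
  have hG : ∀ u, HasDerivAt G (G1 u) u := by
    intro u
    have hA : HasDerivAt (fun u : ℝ => u / 3 * (ψ (m - u) + 4 * ψ m + ψ (m + u)))
        (1 / 3 * (ψ (m - u) + 4 * ψ m + ψ (m + u))
          + u / 3 * (-ψ' (m - u) + 0 + ψ' (m + u))) u := by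
      exact (((hasDerivAt_id u).div_const 3)).mul
        (((cminus ψ ψ' h1 u).add_const _).add (cplus ψ ψ' h1 u)) |>.congr_deriv (by simp only [id_eq, Pi.add_apply, Pi.sub_apply]; try ring)
    have hB : HasDerivAt (fun u : ℝ => Ψ (m + u) - Ψ (m - u)) (ψ (m + u) - -ψ (m - u)) u :=
      (cplus Ψ ψ hΨ u).sub (cminus Ψ ψ hΨ u)
    exact (hA.sub hB).congr_deriv (by simp only [hG1def]; ring)
  have hG1 : ∀ u, HasDerivAt G1 (G2 u) u := by
    intro u
    have : HasDerivAt G1 (0 - 2 / 3 * (ψ' (m + u) + -ψ' (m - u))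
        + (1 / 3 * (ψ' (m + u) - ψ' (m - u)) + u / 3 * (ψ'' (m + u) - -ψ'' (m - u)))) u := by
      exact ((hasDerivAt_const u _).sub
          (((cplus ψ ψ' h1 u).add (cminus ψ ψ' h1 u)).const_mul (2/3))).add
        (((hasDerivAt_id u).div_const 3).mul ((cplus ψ' ψ'' h2 u).sub (cminus ψ' ψ'' h2 u))
          |>.congr_deriv (by simp only [id_eq, Pi.add_apply, Pi.sub_apply]; try ring))
    exact this.congr_deriv (by simp only [hG2def]; ring)
  have hG2d : ∀ u, HasDerivAt G2 (G3 u) u := by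
    intro u
    have : HasDerivAt G2 (-(1/3) * (ψ'' (m + u) - -ψ'' (m - u))
        + (1 / 3 * (ψ'' (m + u) + ψ'' (m - u)) + u / 3 * (ψ''' (m + u) + -ψ''' (m - u)))) u := by
      exact (((cplus ψ' ψ'' h2 u).sub (cminus ψ' ψ'' h2 u)).const_mul (-(1/3))).add
        (((hasDerivAt_id u).div_const 3).mul ((cplus ψ'' ψ''' h3 u).add (cminus ψ'' ψ''' h3 u))
          |>.congr_deriv (by simp only [id_eq, Pi.add_apply, Pi.sub_apply]; try ring))
    exact this.congr_deriv (by simp only [hG3def]; ring)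
  -- continuity
  have hcG3 : Continuous G3 := by
    apply Continuous.mul (by fun_prop)
    exact (hc3.comp (by fun_prop)).sub (hc3.comp (by fun_prop))
  have hcG2 : Continuous G2 := by
    rw [continuous_iff_continuousAt]; exact fun u => (hG2d u).continuousAt
  have hcG1 : Continuous G1 := by
    rw [continuous_iff_continuousAt]; exact fun u => (hG1 u).continuousAt
  have hG1z : G1 0 = 0 := by simp [hG1def]; ring
  have hG2z : G2 0 = 0 := by simp [hG2def]
  have hGz : G 0 = 0 := by simp [hGdef]
  -- integration by parts twice
  have ibp1 : ∫ u in (0:ℝ)..h, (h - u)^2/2 * G3 u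
      = ∫ u in (0:ℝ)..h, (h - u) * G2 u := by
    have := integral_mul_deriv_eq_deriv_mul (a := 0) (b := h)
      (u := fun x => (h - x)^2/2) (u' := fun x => -(h - x)) (v := G2) (v' := G3)
      (fun x _ => by
        have : HasDerivAt (fun x : ℝ => (h - x)^2/2) ((2 * (h - x)^(2-1) * (0 - 1))/2) x :=
          (((hasDerivAt_const x h).sub (hasDerivAt_id x)).pow 2).div_const 2
        exact this.congr_deriv (by ring))
      (fun x _ => hG2d x)
      (by apply Continuous.intervalIntegrable; fun_prop)
      (hcG3.intervalIntegrable _ _)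
    rw [this, hG2z]
    simp only [neg_mul, intervalIntegral.integral_neg, sub_self, mul_zero, zero_mul, sub_zero,
      sub_neg_eq_add, ne_eq, zero_pow, zero_div, zero_add]
    norm_num
  have ibp2 : ∫ u in (0:ℝ)..h, (h - u) * G2 u = ∫ u in (0:ℝ)..h, G1 u := by
    have := integral_mul_deriv_eq_deriv_mul (a := 0) (b := h)
      (u := fun x => h - x) (u' := fun _ => -1) (v := G1) (v' := G2)
      (fun x _ => by
        simpa [Pi.sub_def] using (hasDerivAt_const x h).sub (hasDerivAt_id x))
      (fun x _ => hG1 x)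
      (by apply Continuous.intervalIntegrable; fun_prop)
      (hcG2.intervalIntegrable _ _)
    rw [this, hG1z]
    simp only [neg_one_mul, intervalIntegral.integral_neg, sub_self, mul_zero, zero_mul, sub_zero,
      sub_neg_eq_add, zero_add]
  have ftc : ∫ u in (0:ℝ)..h, G1 u = G h := by
    rw [integral_eq_sub_of_hasDerivAt (fun x _ => hG x) (hcG1.intervalIntegrable _ _), hGz,
      sub_zero]
  have Ikey : ∫ u in (0:ℝ)..h, (h - u)^2/2 * G3 u = G h := by rw [ibp1, ibp2, ftc]
  have intab : Ψ b - Ψ a = ∫ t in a..b, ψ t :=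
    integral_interval_sub_left (hc0.intervalIntegrable m b) (hc0.intervalIntegrable m a)
  have e1 : m - h = a := by rw [hm, hh]; ring
  have e2 : m + h = b := by rw [hm, hh]; ring
  have hGh : G h = h/3 * (ψ a + 4 * ψ m + ψ b) - ∫ t in a..b, ψ t := by
    simp only [hGdef]
    rw [e1, e2, intab]
  set F : ℝ → ℝ := fun u => (1 - u/h)^2 * (u/h) * (ψ''' (m + u) - ψ''' (m - u)) with hFdef
  have hcF : Continuous F :=
    ((by fun_prop : Continuous fun u : ℝ => (1 - u/h)^2 * (u/h))).mul
      ((hc3.comp (by fun_prop)).sub (hc3.comp (by fun_prop)))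
  have cov : ∫ t in (0:ℝ)..1, F (h - h*t) * (-h) = -∫ u in (0:ℝ)..h, F u := by
    have := integral_comp_mul_deriv (a := (0:ℝ)) (b := 1) (f := fun t => h - h*t)
      (f' := fun _ => -h) (g := F)
      (fun x _ => by
        simpa [Pi.sub_def] using ((hasDerivAt_const x h).sub ((hasDerivAt_id x).const_mul h)))
      continuousOn_const hcF
    simp only [Function.comp, mul_zero, sub_zero, mul_one, sub_self] at this
    rw [this, integral_symm]
  have e3 : ∀ t : ℝ, t^2 * (1-t) * (ψ''' (a * (t/2) + b * (1 - t/2)) - ψ''' (b * (t/2) + a * (1 - t/2)))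
      = (-(1/h)) * (F (h - h*t) * (-h)) := by
    intro t
    have p1 : a * (t/2) + b * (1 - t/2) = m + (h - h*t) := by rw [hm, hh]; ring
    have p2 : b * (t/2) + a * (1 - t/2) = m - (h - h*t) := by rw [hm, hh]; ring
    rw [p1, p2]; simp only [hFdef]; field_simp; ring
  have hrhs : (∫ t in (0:ℝ)..1, t^2 * (1-t) *
        (ψ''' (a * (t/2) + b * (1 - t/2)) - ψ''' (b * (t/2) + a * (1 - t/2))))
      = (1/h) * ∫ u in (0:ℝ)..h, F u := by
    rw [integral_congr (g := fun t => (-(1/h)) * (F (h - h*t) * (-h))) (fun t _ => e3 t)]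
    rw [intervalIntegral.integral_const_mul, cov]; ring
  have e4 : ∀ u, F u = 6/h^3 * ((h - u)^2/2 * G3 u) := by
    intro u; simp only [hFdef, hG3def]; field_simp; ring
  have hFkey : ∫ u in (0:ℝ)..h, F u = 6/h^3 * G h := by
    rw [integral_congr (g := fun u => 6/h^3 * ((h - u)^2/2 * G3 u)) (fun u _ => e4 u),
      intervalIntegral.integral_const_mul, Ikey]
  rw [hrhs, hFkey, hGh]
  have hba : b - a = 2*h := by rw [hh]; ring
  rw [hba]
  field_simp
  ring

lemma simpson_step (a b : ℝ) (f f' g : ℝ → ℝ)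
    (hf' : ∀ x ∈ Set.Icc a b, HasDerivWithinAt f (f' x) (Set.Icc a b) x)
    (hcont' : ContinuousOn f' (Set.Icc a b))
    (hgeq : ∀ x ∈ Set.Icc a b, g x = f' x) :
    ∀ x ∈ Set.Icc a b, f a + ∫ t in a..x, g t = f x := by
  intro x hx
  have h1 : ∫ t in a..x, g t = ∫ t in a..x, f' t := by
    apply integral_congr
    intro t ht
    apply hgeq
    rw [Set.uIcc_of_le hx.1] at ht
    exact ⟨ht.1, le_trans ht.2 hx.2⟩
  have h2 : ∫ t in a..x, f' t = f x - f a := by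
    apply integral_eq_sub_of_hasDeriv_right_of_le hx.1
    · exact fun y hy => ((hf' y ⟨hy.1, le_trans hy.2 hx.2⟩).continuousWithinAt).mono
        (Set.Icc_subset_Icc le_rfl hx.2)
    · intro y hy
      have hyab : y ∈ Set.Ioo a b := ⟨hy.1, lt_of_lt_of_le hy.2 hx.2⟩
      exact ((hf' y (Set.Ioo_subset_Icc_self hyab)).hasDerivAt
        (Icc_mem_nhds hyab.1 hyab.2)).hasDerivWithinAt
    · have hsub : Set.uIcc a x ⊆ Set.Icc a b := by
        rw [Set.uIcc_of_le hx.1]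
        exact Set.Icc_subset_Icc le_rfl hx.2
      exact (hcont'.mono hsub).intervalIntegrable
  rw [h1, h2]; ring

theorem simpson_stmt7 (a b : ℝ) (hab : a < b) (φ φ' φ'' φ''' : ℝ → ℝ)
    (hφ' : ∀ x ∈ Set.Icc a b, HasDerivWithinAt φ (φ' x) (Set.Icc a b) x)
    (hφ'' : ∀ x ∈ Set.Icc a b, HasDerivWithinAt φ' (φ'' x) (Set.Icc a b) x)
    (hφ''' : ∀ x ∈ Set.Icc a b, HasDerivWithinAt φ'' (φ''' x) (Set.Icc a b) x)
    (hcont : ContinuousOn φ''' (Set.Icc a b)) :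
    (φ a + φ b) / 6 + 2 / 3 * φ ((a + b) / 2) - (1 / (b - a)) * ∫ t in a..b, φ t =
      ((b - a) ^ 3 / 96) *
        ∫ t in (0:ℝ)..1, t ^ 2 * (1 - t) *
          (φ''' (a * (t / 2) + b * (1 - t / 2)) - φ''' (b * (t / 2) + a * (1 - t / 2))) := by
  have hab' : a ≤ b := hab.le
  set c3 : ℝ → ℝ := IccExtend hab' ((Icc a b).restrict φ''') with hc3def
  have hc3c : Continuous c3 := (ContinuousOn.restrict hcont).Icc_extend'
  have c3eq : ∀ x ∈ Icc a b, c3 x = φ''' x := fun x hx => IccExtend_of_mem hab' _ hx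
  set c2 : ℝ → ℝ := fun x => φ'' a + ∫ t in a..x, c3 t with hc2def
  have hd2 : ∀ x, HasDerivAt c2 (c3 x) x := fun x =>
    (integral_hasDerivAt_right (hc3c.intervalIntegrable _ _)
      (hc3c.stronglyMeasurableAtFilter _ _) hc3c.continuousAt).const_add _
  have hc2c : Continuous c2 := by
    rw [continuous_iff_continuousAt]; exact fun x => (hd2 x).continuousAt
  have c2eq : ∀ x ∈ Icc a b, c2 x = φ'' x := simpson_step a b φ'' φ''' c3 hφ''' hcont c3eq
  set c1 : ℝ → ℝ := fun x => φ' a + ∫ t in a..x, c2 t with hc1def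
  have hd1 : ∀ x, HasDerivAt c1 (c2 x) x := fun x =>
    (integral_hasDerivAt_right (hc2c.intervalIntegrable _ _)
      (hc2c.stronglyMeasurableAtFilter _ _) hc2c.continuousAt).const_add _
  have hc1c : Continuous c1 := by
    rw [continuous_iff_continuousAt]; exact fun x => (hd1 x).continuousAt
  have c1eq : ∀ x ∈ Icc a b, c1 x = φ' x := simpson_step a b φ' φ'' c2 hφ''
    (fun x hx => (hφ''' x hx).continuousWithinAt) c2eq
  set c0 : ℝ → ℝ := fun x => φ a + ∫ t in a..x, c1 t with hc0def
  have hd0 : ∀ x, HasDerivAt c0 (c1 x) x := fun x =>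
    (integral_hasDerivAt_right (hc1c.intervalIntegrable _ _)
      (hc1c.stronglyMeasurableAtFilter _ _) hc1c.continuousAt).const_add _
  have c0eq : ∀ x ∈ Icc a b, c0 x = φ x := simpson_step a b φ φ' c1 hφ'
    (fun x hx => (hφ'' x hx).continuousWithinAt) c1eq
  have key := simpson_global a b hab c0 c1 c2 c3 hd0 hd1 hd2 hc3c
  have intφ : ∫ t in a..b, φ t = ∫ t in a..b, c0 t := by
    apply integral_congr
    intro x hx
    rw [Set.uIcc_of_le hab'] at hx
    exact (c0eq x hx).symm
  have hI : (∫ t in (0:ℝ)..1, t ^ 2 * (1 - t) *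
        (φ''' (a * (t/2) + b * (1 - t/2)) - φ''' (b * (t/2) + a * (1 - t/2))))
      = ∫ t in (0:ℝ)..1, t ^ 2 * (1 - t) *
        (c3 (a * (t/2) + b * (1 - t/2)) - c3 (b * (t/2) + a * (1 - t/2))) := by
    apply integral_congr
    intro t ht
    rw [Set.uIcc_of_le (by norm_num : (0:ℝ) ≤ 1)] at ht
    obtain ⟨ht0, ht1⟩ := ht
    dsimp only
    have h1 : a * (t/2) + b * (1 - t/2) ∈ Icc a b :=
      ⟨by nlinarith, by nlinarith⟩
    have h2 : b * (t/2) + a * (1 - t/2) ∈ Icc a b :=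
      ⟨by nlinarith, by nlinarith⟩
    rw [c3eq _ h1, c3eq _ h2]
  have hm : (a+b)/2 ∈ Icc a b := ⟨by linarith, by linarith⟩
  rw [← c0eq a ⟨le_rfl, hab'⟩, ← c0eq b ⟨hab', le_rfl⟩, ← c0eq ((a+b)/2) hm, intφ, hI]
  exact key
end

section
/- Let φ : ℝ → ℝ be three times continuously differentiable on [a,b] with a < b, and let m₃ ≤ φ'''(t) ≤ M₃ on [a,b]. Then |(φ(a)+φ(b))/6 + (2/3)φ((a+b)/2) - (1/(b-a))∫_a^b φ(t) dt| ≤ (1/1152)(M₃ - m₃)(b-a)³. -/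
open Set intervalIntegral

/-- Kernel on the left half. -/
noncomputable def sP (a b t : ℝ) : ℝ := (t - a) ^ 2 * (2 * t - a - b) / 12
noncomputable def sP1 (a b t : ℝ) : ℝ :=
  (2 * (t - a) * (2 * t - a - b) + 2 * (t - a) ^ 2) / 12
noncomputable def sP2 (a b t : ℝ) : ℝ := (2 * (2 * t - a - b) + 8 * (t - a)) / 12
noncomputable def sP4 (a b t : ℝ) : ℝ := (t - a) ^ 3 * (3 * (t - a) - 2 * (b - a)) / 72

/-- Kernel on the right half. -/
noncomputable def sQ (a b t : ℝ) : ℝ := (b - t) ^ 2 * (2 * t - a - b) / 12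
noncomputable def sQ1 (a b t : ℝ) : ℝ :=
  (-2 * (b - t) * (2 * t - a - b) + 2 * (b - t) ^ 2) / 12
noncomputable def sQ2 (a b t : ℝ) : ℝ := (2 * (2 * t - a - b) - 8 * (b - t)) / 12
noncomputable def sQ4 (a b t : ℝ) : ℝ := (b - t) ^ 3 * (3 * (b - t) - 2 * (b - a)) / 72

lemma hasDerivAt_sP (a b t : ℝ) : HasDerivAt (sP a b) (sP1 a b t) t := by
  have h := ((((hasDerivAt_id t).sub_const a).pow 2).mul
      ((((hasDerivAt_id t).const_mul 2).sub_const a).sub_const b)).div_const 12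
  convert h using 1
  · rfl
  · rfl
  · rfl
  simp only [sP1, id_eq, Pi.pow_apply]; ring

lemma hasDerivAt_sP1 (a b t : ℝ) : HasDerivAt (sP1 a b) (sP2 a b t) t := by
  have h1 := (((hasDerivAt_id t).sub_const a).const_mul 2).mul
      ((((hasDerivAt_id t).const_mul 2).sub_const a).sub_const b)
  have h2 := (((hasDerivAt_id t).sub_const a).pow 2).const_mul 2
  have h := (h1.add h2).div_const 12
  convert h using 1
  · rfl
  · rfl
  · rfl
  simp only [sP2, id_eq, Pi.pow_apply, Pi.mul_apply]; ring

lemma hasDerivAt_sP2 (a b t : ℝ) : HasDerivAt (sP2 a b) 1 t := by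
  have h1 := ((((hasDerivAt_id t).const_mul 2).sub_const a).sub_const b).const_mul 2
  have h2 := (((hasDerivAt_id t).sub_const a)).const_mul 8
  have h := (h1.add h2).div_const 12
  convert h using 1
  · rfl
  · rfl
  · rfl
  norm_num

lemma hasDerivAt_sP4 (a b t : ℝ) : HasDerivAt (sP4 a b) (sP a b t) t := by
  have h1 := (((hasDerivAt_id t).sub_const a).pow 3).mul
      (((((hasDerivAt_id t).sub_const a).const_mul 3)).sub_const (2 * (b - a)))
  have h := h1.div_const 72
  convert h using 1
  · rfl
  · rfl
  · rfl
  simp only [sP, id_eq, Pi.pow_apply]; ring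

lemma hasDerivAt_sQ (a b t : ℝ) : HasDerivAt (sQ a b) (sQ1 a b t) t := by
  have h := ((((hasDerivAt_id t).const_mul (-1)).add_const b).pow 2).mul
      ((((hasDerivAt_id t).const_mul 2).sub_const a).sub_const b)
  have h' := h.div_const 12
  convert h' using 1
  · rfl
  · rfl
  · ext s; simp only [sQ, id_eq, Pi.pow_apply, Pi.mul_apply]; ring_nf
  · simp only [sQ1, id_eq, Pi.pow_apply]; ring

lemma hasDerivAt_sQ1 (a b t : ℝ) : HasDerivAt (sQ1 a b) (sQ2 a b t) t := by
  have h1 := ((((hasDerivAt_id t).const_mul (-1)).add_const b).const_mul (-2)).mul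
      ((((hasDerivAt_id t).const_mul 2).sub_const a).sub_const b)
  have h2 := ((((hasDerivAt_id t).const_mul (-1)).add_const b).pow 2).const_mul 2
  have h := (h1.add h2).div_const 12
  convert h using 1
  · rfl
  · rfl
  · ext s; simp only [sQ1, id_eq, Pi.pow_apply, Pi.mul_apply, Pi.add_apply]; ring
  · simp only [sQ2, id_eq, Pi.pow_apply]; ring

lemma hasDerivAt_sQ2 (a b t : ℝ) : HasDerivAt (sQ2 a b) 1 t := by
  have h1 := ((((hasDerivAt_id t).const_mul 2).sub_const a).sub_const b).const_mul 2
  have h2 := (((hasDerivAt_id t).const_mul (-1)).add_const b).const_mul 8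
  have h := (h1.sub h2).div_const 12
  convert h using 1
  · rfl
  · rfl
  · ext s; simp only [sQ2, id_eq, Pi.sub_apply]; ring
  · ring

lemma hasDerivAt_sQ4 (a b t : ℝ) : HasDerivAt (sQ4 a b) (sQ a b t) t := by
  have h1 := ((((hasDerivAt_id t).const_mul (-1)).add_const b).pow 3).mul
      ((((((hasDerivAt_id t).const_mul (-1)).add_const b).const_mul 3)).sub_const (2 * (b - a)))
  have h := h1.div_const 72
  convert h using 1
  · rfl
  · rfl
  · ext s; simp [sQ4]; ring
  · simp only [sQ, id_eq, Pi.pow_apply]; ring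

lemma ibp3 (a b l r : ℝ) (hl : a ≤ l) (hlr : l ≤ r) (hr : r ≤ b)
    (φ φ' φ'' φ''' : ℝ → ℝ)
    (hφ' : ∀ x ∈ Set.Icc a b, HasDerivWithinAt φ (φ' x) (Set.Icc a b) x)
    (hφ'' : ∀ x ∈ Set.Icc a b, HasDerivWithinAt φ' (φ'' x) (Set.Icc a b) x)
    (hφ''' : ∀ x ∈ Set.Icc a b, HasDerivWithinAt φ'' (φ''' x) (Set.Icc a b) x)
    (hcont : ContinuousOn φ''' (Set.Icc a b))
    (p p1 p2 : ℝ → ℝ)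
    (hp : ∀ t, HasDerivAt p (p1 t) t)
    (hp1 : ∀ t, HasDerivAt p1 (p2 t) t)
    (hp2 : ∀ t, HasDerivAt p2 1 t) :
    ∫ t in l..r, (p t * φ''' t + φ t) =
      (p r * φ'' r - p1 r * φ' r + p2 r * φ r)
        - (p l * φ'' l - p1 l * φ' l + p2 l * φ l) := by
  have hsub : Set.Icc l r ⊆ Set.Icc a b := Set.Icc_subset_Icc hl hr
  have hcφ : ContinuousOn φ (Set.Icc a b) := fun x hx => (hφ' x hx).continuousWithinAt
  have hcφ' : ContinuousOn φ' (Set.Icc a b) := fun x hx => (hφ'' x hx).continuousWithinAt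
  have hcφ'' : ContinuousOn φ'' (Set.Icc a b) := fun x hx => (hφ''' x hx).continuousWithinAt
  have hcp : Continuous p := by
    rw [continuous_iff_continuousAt]; exact fun t => (hp t).continuousAt
  have hcp1 : Continuous p1 := by
    rw [continuous_iff_continuousAt]; exact fun t => (hp1 t).continuousAt
  have hcp2 : Continuous p2 := by
    rw [continuous_iff_continuousAt]; exact fun t => (hp2 t).continuousAt
  have hcontH : ContinuousOn (fun t => p t * φ'' t - p1 t * φ' t + p2 t * φ t)
      (Set.Icc l r) := by
    apply ContinuousOn.add
    · exact ((hcp.continuousOn.mono fun x hx => trivial).mul (hcφ''.mono hsub)).sub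
        ((hcp1.continuousOn.mono fun x hx => trivial).mul (hcφ'.mono hsub))
    · exact (hcp2.continuousOn.mono fun x hx => trivial).mul (hcφ.mono hsub)
  have hderiv : ∀ x ∈ Set.Ioo l r,
      HasDerivWithinAt (fun t => p t * φ'' t - p1 t * φ' t + p2 t * φ t)
        (p x * φ''' x + φ x) (Set.Ioi x) x := by
    intro x hx
    have hxab : x ∈ Set.Ioo a b := ⟨lt_of_le_of_lt hl hx.1, lt_of_lt_of_le hx.2 hr⟩
    have hmem : Set.Icc a b ∈ nhds x := Icc_mem_nhds hxab.1 hxab.2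
    have hxI : x ∈ Set.Icc a b := Set.Ioo_subset_Icc_self hxab
    have d1 : HasDerivAt φ (φ' x) x := (hφ' x hxI).hasDerivAt hmem
    have d2 : HasDerivAt φ' (φ'' x) x := (hφ'' x hxI).hasDerivAt hmem
    have d3 : HasDerivAt φ'' (φ''' x) x := (hφ''' x hxI).hasDerivAt hmem
    have : HasDerivAt (fun t => p t * φ'' t - p1 t * φ' t + p2 t * φ t)
        ((p1 x * φ'' x + p x * φ''' x) - (p2 x * φ' x + p1 x * φ'' x)
          + (1 * φ x + p2 x * φ' x)) x :=
      (((hp x).mul d3).sub ((hp1 x).mul d2)).add ((hp2 x).mul d1)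
    have heq : (p1 x * φ'' x + p x * φ''' x) - (p2 x * φ' x + p1 x * φ'' x)
          + (1 * φ x + p2 x * φ' x) = p x * φ''' x + φ x := by ring
    rw [heq] at this
    exact this.hasDerivWithinAt
  have hint : IntervalIntegrable (fun t => p t * φ''' t + φ t) MeasureTheory.volume l r := by
    apply ContinuousOn.intervalIntegrable
    rw [Set.uIcc_of_le hlr]
    exact ((hcp.continuousOn.mono fun x hx => trivial).mul (hcont.mono hsub)).add
      (hcφ.mono hsub)
  exact intervalIntegral.integral_eq_sub_of_hasDeriv_right_of_le hlr hcontH hderiv hint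

set_option maxHeartbeats 2000000 in
theorem simpson_stmt8 (a b m₃ M₃ : ℝ) (hab : a < b) (φ φ' φ'' φ''' : ℝ → ℝ)
    (hφ' : ∀ x ∈ Set.Icc a b, HasDerivWithinAt φ (φ' x) (Set.Icc a b) x)
    (hφ'' : ∀ x ∈ Set.Icc a b, HasDerivWithinAt φ' (φ'' x) (Set.Icc a b) x)
    (hφ''' : ∀ x ∈ Set.Icc a b, HasDerivWithinAt φ'' (φ''' x) (Set.Icc a b) x)
    (hcont : ContinuousOn φ''' (Set.Icc a b))
    (hm : ∀ x ∈ Set.Icc a b, m₃ ≤ φ''' x) (hM : ∀ x ∈ Set.Icc a b, φ''' x ≤ M₃) :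
    |(φ a + φ b) / 6 + 2 / 3 * φ ((a + b) / 2) - (1 / (b - a)) * ∫ t in a..b, φ t| ≤
      1 / 1152 * (M₃ - m₃) * (b - a) ^ 3 := by
  have hba : (0:ℝ) < b - a := sub_pos.mpr hab
  set mid : ℝ := (a + b) / 2 with hmiddef
  have hamid : a ≤ mid := by simp only [hmiddef]; linarith
  have hmidb : mid ≤ b := by simp only [hmiddef]; linarith
  have hcφ : ContinuousOn φ (Set.Icc a b) := fun x hx => (hφ' x hx).continuousWithinAt
  -- continuity of kernels
  have hcP : Continuous (sP a b) := by
    rw [continuous_iff_continuousAt]; exact fun t => (hasDerivAt_sP a b t).continuousAt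
  have hcQ : Continuous (sQ a b) := by
    rw [continuous_iff_continuousAt]; exact fun t => (hasDerivAt_sQ a b t).continuousAt
  -- integrabilities
  have hintφ1 : IntervalIntegrable φ MeasureTheory.volume a mid :=
    (hcφ.mono (Set.Icc_subset_Icc le_rfl hmidb)).intervalIntegrable_of_Icc hamid
  have hintφ2 : IntervalIntegrable φ MeasureTheory.volume mid b :=
    (hcφ.mono (Set.Icc_subset_Icc hamid le_rfl)).intervalIntegrable_of_Icc hmidb
  have hintP3 : IntervalIntegrable (fun t => sP a b t * φ''' t) MeasureTheory.volume a mid :=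
    ((hcP.continuousOn.mono fun x hx => trivial).mul
      (hcont.mono (Set.Icc_subset_Icc le_rfl hmidb))).intervalIntegrable_of_Icc hamid
  have hintQ3 : IntervalIntegrable (fun t => sQ a b t * φ''' t) MeasureTheory.volume mid b :=
    ((hcQ.continuousOn.mono fun x hx => trivial).mul
      (hcont.mono (Set.Icc_subset_Icc hamid le_rfl))).intervalIntegrable_of_Icc hmidb
  have hintP : IntervalIntegrable (sP a b) MeasureTheory.volume a mid :=
    hcP.intervalIntegrable a mid
  have hintQ : IntervalIntegrable (sQ a b) MeasureTheory.volume mid b :=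
    hcQ.intervalIntegrable mid b
  -- integration by parts on each half
  have eq1 := ibp3 a b a mid le_rfl hamid hmidb φ φ' φ'' φ''' hφ' hφ'' hφ''' hcont
    (sP a b) (sP1 a b) (sP2 a b) (hasDerivAt_sP a b) (hasDerivAt_sP1 a b) (hasDerivAt_sP2 a b)
  have eq2 := ibp3 a b mid b hamid hmidb le_rfl φ φ' φ'' φ''' hφ' hφ'' hφ''' hcont
    (sQ a b) (sQ1 a b) (sQ2 a b) (hasDerivAt_sQ a b) (hasDerivAt_sQ1 a b) (hasDerivAt_sQ2 a b)
  rw [intervalIntegral.integral_add hintP3 hintφ1] at eq1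
  rw [intervalIntegral.integral_add hintQ3 hintφ2] at eq2
  have hadj : (∫ t in a..mid, φ t) + ∫ t in mid..b, φ t = ∫ t in a..b, φ t :=
    intervalIntegral.integral_add_adjacent_intervals hintφ1 hintφ2
  -- evaluate kernel endpoint values
  have hPa : sP a b a = 0 := by simp only [sP, id_eq]; ring
  have hP1a : sP1 a b a = 0 := by simp only [sP1, id_eq]; ring
  have hP2a : sP2 a b a = -(b - a) / 6 := by simp only [sP2, id_eq]; ring
  have hPm : sP a b mid = 0 := by simp only [sP, hmiddef]; ring
  have hP1m : sP1 a b mid = (b - a) ^ 2 / 24 := by simp only [sP1, hmiddef]; ring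
  have hP2m : sP2 a b mid = (b - a) / 3 := by simp only [sP2, hmiddef]; ring
  have hQb : sQ a b b = 0 := by simp only [sQ, id_eq]; ring
  have hQ1b : sQ1 a b b = 0 := by simp only [sQ1, id_eq]; ring
  have hQ2b : sQ2 a b b = (b - a) / 6 := by simp only [sQ2, id_eq]; ring
  have hQm : sQ a b mid = 0 := by simp only [sQ, hmiddef]; ring
  have hQ1m : sQ1 a b mid = (b - a) ^ 2 / 24 := by simp only [sQ1, hmiddef]; ring
  have hQ2m : sQ2 a b mid = -(b - a) / 3 := by simp only [sQ2, hmiddef]; ring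
  rw [hPa, hP1a, hP2a, hPm, hP1m, hP2m] at eq1
  rw [hQb, hQ1b, hQ2b, hQm, hQ1m, hQ2m] at eq2
  -- the key identity
  have keyE : (∫ t in a..mid, sP a b t * φ''' t) + (∫ t in mid..b, sQ a b t * φ''' t)
      = (b - a) / 6 * (φ a + φ b) + 2 * (b - a) / 3 * φ mid - ∫ t in a..b, φ t := by
    linarith [eq1, eq2, hadj]
  -- integrals of the kernels
  have hIP : (∫ t in a..mid, sP a b t) = -((b - a) ^ 4) / 1152 := by
    rw [intervalIntegral.integral_eq_sub_of_hasDerivAt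
      (fun x _ => hasDerivAt_sP4 a b x) hintP]
    simp only [sP4, hmiddef]; ring
  have hIQ : (∫ t in mid..b, sQ a b t) = (b - a) ^ 4 / 1152 := by
    rw [intervalIntegral.integral_eq_sub_of_hasDerivAt
      (fun x _ => hasDerivAt_sQ4 a b x) hintQ]
    simp only [sQ4, hmiddef]; ring
  -- centered third derivative
  set c : ℝ := (m₃ + M₃) / 2 with hcdef
  set d : ℝ := (M₃ - m₃) / 2 with hddef
  have hd0 : 0 ≤ d := by
    have h1 := hm a ⟨le_rfl, le_of_lt hab⟩
    have h2 := hM a ⟨le_rfl, le_of_lt hab⟩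
    simp only [hddef]; linarith
  -- bounds on the first centered integral
  have hintPc : IntervalIntegrable (fun t => sP a b t * (φ''' t - c))
      MeasureTheory.volume a mid := by
    have : (fun t => sP a b t * (φ''' t - c))
        = fun t => sP a b t * φ''' t - c * sP a b t := by funext t; ring
    rw [this]
    exact hintP3.sub (hintP.const_mul c)
  have hintQc : IntervalIntegrable (fun t => sQ a b t * (φ''' t - c))
      MeasureTheory.volume mid b := by
    have : (fun t => sQ a b t * (φ''' t - c))
        = fun t => sQ a b t * φ''' t - c * sQ a b t := by funext t; ring
    rw [this]
    exact hintQ3.sub (hintQ.const_mul c)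
  have hJ1 : (∫ t in a..mid, sP a b t * (φ''' t - c))
      = (∫ t in a..mid, sP a b t * φ''' t) - c * ∫ t in a..mid, sP a b t := by
    rw [← intervalIntegral.integral_const_mul,
      ← intervalIntegral.integral_sub hintP3 (hintP.const_mul c)]
    congr 1; funext t; ring
  have hJ2 : (∫ t in mid..b, sQ a b t * (φ''' t - c))
      = (∫ t in mid..b, sQ a b t * φ''' t) - c * ∫ t in mid..b, sQ a b t := by
    rw [← intervalIntegral.integral_const_mul,
      ← intervalIntegral.integral_sub hintQ3 (hintQ.const_mul c)]
    congr 1; funext t; ring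
  -- sign facts and pointwise bounds
  have hPneg : ∀ t ∈ Set.Icc a mid, sP a b t ≤ 0 := by
    intro t ht
    have h1 : 2 * t - a - b ≤ 0 := by
      have := ht.2; simp only [hmiddef] at this; linarith
    have h2 : (0:ℝ) ≤ (t - a) ^ 2 := sq_nonneg _
    simp only [sP, id_eq]
    nlinarith
  have hQpos : ∀ t ∈ Set.Icc mid b, 0 ≤ sQ a b t := by
    intro t ht
    have h1 : 0 ≤ 2 * t - a - b := by
      have := ht.1; simp only [hmiddef] at this; linarith
    have h2 : (0:ℝ) ≤ (b - t) ^ 2 := sq_nonneg _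
    simp only [sQ, id_eq]
    nlinarith
  have hbound1u : (∫ t in a..mid, sP a b t * (φ''' t - c)) ≤ d * ((b - a) ^ 4 / 1152) := by
    have hmono : (∫ t in a..mid, sP a b t * (φ''' t - c))
        ≤ ∫ t in a..mid, (-d) * sP a b t := by
      apply intervalIntegral.integral_mono_on hamid hintPc (hintP.const_mul (-d))
      intro t ht
      have htab : t ∈ Set.Icc a b := ⟨ht.1, le_trans ht.2 hmidb⟩
      have h1 := hm t htab
      have h2 := hM t htab
      have h3 := hPneg t ht
      have h4 : -d ≤ φ''' t - c := by simp only [hddef, hcdef]; linarith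
      linarith [mul_le_mul_of_nonpos_left h4 h3]
    rw [intervalIntegral.integral_const_mul, hIP] at hmono
    calc (∫ t in a..mid, sP a b t * (φ''' t - c)) ≤ -d * (-((b - a) ^ 4) / 1152) := hmono
      _ = d * ((b - a) ^ 4 / 1152) := by ring
  have hbound1l : -(d * ((b - a) ^ 4 / 1152)) ≤ ∫ t in a..mid, sP a b t * (φ''' t - c) := by
    have hmono : (∫ t in a..mid, d * sP a b t)
        ≤ ∫ t in a..mid, sP a b t * (φ''' t - c) := by
      apply intervalIntegral.integral_mono_on hamid (hintP.const_mul d) hintPc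
      intro t ht
      have htab : t ∈ Set.Icc a b := ⟨ht.1, le_trans ht.2 hmidb⟩
      have h1 := hm t htab
      have h2 := hM t htab
      have h3 := hPneg t ht
      have h4 : φ''' t - c ≤ d := by simp only [hddef, hcdef]; linarith
      linarith [mul_le_mul_of_nonpos_left h4 h3]
    rw [intervalIntegral.integral_const_mul, hIP] at hmono
    calc -(d * ((b - a) ^ 4 / 1152)) = d * (-((b - a) ^ 4) / 1152) := by ring
      _ ≤ _ := hmono
  have hbound2u : (∫ t in mid..b, sQ a b t * (φ''' t - c)) ≤ d * ((b - a) ^ 4 / 1152) := by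
    have hmono : (∫ t in mid..b, sQ a b t * (φ''' t - c))
        ≤ ∫ t in mid..b, d * sQ a b t := by
      apply intervalIntegral.integral_mono_on hmidb hintQc (hintQ.const_mul d)
      intro t ht
      have htab : t ∈ Set.Icc a b := ⟨le_trans hamid ht.1, ht.2⟩
      have h1 := hm t htab
      have h2 := hM t htab
      have h3 := hQpos t ht
      have h4 : φ''' t - c ≤ d := by simp only [hddef, hcdef]; linarith
      linarith [mul_le_mul_of_nonneg_left h4 h3]
    rw [intervalIntegral.integral_const_mul, hIQ] at hmono
    linarith
  have hbound2l : -(d * ((b - a) ^ 4 / 1152)) ≤ ∫ t in mid..b, sQ a b t * (φ''' t - c) := by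
    have hmono : (∫ t in mid..b, (-d) * sQ a b t)
        ≤ ∫ t in mid..b, sQ a b t * (φ''' t - c) := by
      apply intervalIntegral.integral_mono_on hmidb (hintQ.const_mul (-d)) hintQc
      intro t ht
      have htab : t ∈ Set.Icc a b := ⟨le_trans hamid ht.1, ht.2⟩
      have h1 := hm t htab
      have h2 := hM t htab
      have h3 := hQpos t ht
      have h4 : -d ≤ φ''' t - c := by simp only [hddef, hcdef]; linarith
      linarith [mul_le_mul_of_nonneg_left h4 h3]
    rw [intervalIntegral.integral_const_mul, hIQ] at hmono
    calc -(d * ((b - a) ^ 4 / 1152)) = -d * ((b - a) ^ 4 / 1152) := by ring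
      _ ≤ _ := hmono
  -- combine everything
  have hEbound : |(b - a) / 6 * (φ a + φ b) + 2 * (b - a) / 3 * φ mid - ∫ t in a..b, φ t|
      ≤ (M₃ - m₃) * (b - a) ^ 4 / 1152 := by
    have hsum : (b - a) / 6 * (φ a + φ b) + 2 * (b - a) / 3 * φ mid - (∫ t in a..b, φ t)
        = (∫ t in a..mid, sP a b t * (φ''' t - c))
          + (∫ t in mid..b, sQ a b t * (φ''' t - c)) := by
      rw [hJ1, hJ2, hIP, hIQ]
      linarith [keyE]
    rw [hsum, abs_le]
    constructor
    · have : (M₃ - m₃) * (b - a) ^ 4 / 1152 = 2 * (d * ((b - a) ^ 4 / 1152)) := by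
        simp only [hddef]; ring
      rw [this]; linarith
    · have : (M₃ - m₃) * (b - a) ^ 4 / 1152 = 2 * (d * ((b - a) ^ 4 / 1152)) := by
        simp only [hddef]; ring
      rw [this]; linarith
  -- deduce the stated inequality
  have hid : (φ a + φ b) / 6 + 2 / 3 * φ mid - (1 / (b - a)) * ∫ t in a..b, φ t
      = ((b - a) / 6 * (φ a + φ b) + 2 * (b - a) / 3 * φ mid - ∫ t in a..b, φ t) / (b - a) := by
    field_simp
  rw [hid, abs_div, abs_of_pos hba, div_le_iff₀ hba]
  calc |(b - a) / 6 * (φ a + φ b) + 2 * (b - a) / 3 * φ mid - ∫ t in a..b, φ t|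
      ≤ (M₃ - m₃) * (b - a) ^ 4 / 1152 := hEbound
    _ = 1 / 1152 * (M₃ - m₃) * (b - a) ^ 3 * (b - a) := by ring
end

section
/- Let φ : ℝ → ℝ be four times continuously differentiable on [a,b] with a < b, and suppose φ'' is convex on [a,b]. Then 0 ≤ (φ(a)+φ(b))/6 + (2/3)φ((a+b)/2) - (1/(b-a))∫_a^b φ(t) dt ≤ ((b-a)²/162)[(φ''(a)+φ''(b))/2 - φ''((a+b)/2)]. -/
open Set intervalIntegral

-- ∫ (h-s)(3s-h)/6
private lemma int_k (h p q : ℝ) :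
    ∫ s in p..q, (h - s) * (3 * s - h) / 6
      = (2*h*q^2 - h^2*q - q^3)/6 - (2*h*p^2 - h^2*p - p^3)/6 := by
  apply intervalIntegral.integral_eq_sub_of_hasDerivAt
  · intro x _
    have H : HasDerivAt (fun s : ℝ => (2*h*s^2 - h^2*s - s^3)/6)
        ((2*h*(2*x^1) - h^2*1 - 3*x^2)/6) x := by
      exact ((((hasDerivAt_pow 2 x).const_mul (2*h)).sub
        ((hasDerivAt_id' x).const_mul (h^2))).sub (hasDerivAt_pow 3 x)).div_const 6
    refine H.congr_deriv ?_
    push_cast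
    ring
  · apply Continuous.intervalIntegrable
    continuity

-- ∫ s * ((h-s)(3s-h)/6)
private lemma int_sk (h p q : ℝ) :
    ∫ s in p..q, s * ((h - s) * (3 * s - h) / 6)
      = (4*h*q^3/3 - h^2*q^2/2 - 3*q^4/4)/6 - (4*h*p^3/3 - h^2*p^2/2 - 3*p^4/4)/6 := by
  apply intervalIntegral.integral_eq_sub_of_hasDerivAt
  · intro x _
    have H : HasDerivAt (fun s : ℝ => (4*h*s^3/3 - h^2*s^2/2 - 3*s^4/4)/6)
        ((4*h*(3*x^2)/3 - h^2*(2*x^1)/2 - 3*(4*x^3)/4)/6) x := by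
      exact (((((hasDerivAt_pow 3 x).const_mul (4*h)).div_const 3).sub
        (((hasDerivAt_pow 2 x).const_mul (h^2)).div_const 2)).sub
        (((hasDerivAt_pow 4 x).const_mul 3).div_const 4)).div_const 6
    refine H.congr_deriv ?_
    push_cast
    ring
  · apply Continuous.intervalIntegrable
    continuity

set_option maxHeartbeats 4000000 in
theorem simpson_stmt12 (a b : ℝ) (hab : a < b) (φ φ' φ'' φ''' φ'''' : ℝ → ℝ)
    (hφ' : ∀ x ∈ Set.Icc a b, HasDerivWithinAt φ (φ' x) (Set.Icc a b) x)
    (hφ'' : ∀ x ∈ Set.Icc a b, HasDerivWithinAt φ' (φ'' x) (Set.Icc a b) x)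
    (hφ''' : ∀ x ∈ Set.Icc a b, HasDerivWithinAt φ'' (φ''' x) (Set.Icc a b) x)
    (hφ'''' : ∀ x ∈ Set.Icc a b, HasDerivWithinAt φ''' (φ'''' x) (Set.Icc a b) x)
    (hcont : ContinuousOn φ'''' (Set.Icc a b))
    (hconv : ConvexOn ℝ (Set.Icc a b) φ'') :
    0 ≤ (φ a + φ b) / 6 + 2 / 3 * φ ((a + b) / 2) - (1 / (b - a)) * ∫ t in a..b, φ t ∧
      (φ a + φ b) / 6 + 2 / 3 * φ ((a + b) / 2) - (1 / (b - a)) * ∫ t in a..b, φ t ≤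
        ((b - a) ^ 2 / 162) * ((φ'' a + φ'' b) / 2 - φ'' ((a + b) / 2)) := by
  have hab' : (0:ℝ) < b - a := sub_pos.2 hab
  set m : ℝ := (a + b) / 2 with hm
  set h : ℝ := (b - a) / 2 with hh
  clear_value m h
  have hh0 : 0 < h := by rw [hh]; linarith
  have hma : a ≤ m := by rw [hm]; linarith
  have hmb : m ≤ b := by rw [hm]; linarith
  have hmhb : m + h = b := by rw [hm, hh]; ring
  have hmha : m - h = a := by rw [hm, hh]; ring
  -- continuity
  have cφ : ContinuousOn φ (Set.Icc a b) := fun x hx => (hφ' x hx).continuousWithinAt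
  have cφ' : ContinuousOn φ' (Set.Icc a b) := fun x hx => (hφ'' x hx).continuousWithinAt
  have cφ'' : ContinuousOn φ'' (Set.Icc a b) := fun x hx => (hφ''' x hx).continuousWithinAt
  -- interior derivatives
  have dφ : ∀ x ∈ Set.Ioo a b, HasDerivAt φ (φ' x) x := fun x hx =>
    (hφ' x (Set.Ioo_subset_Icc_self hx)).hasDerivAt (Icc_mem_nhds hx.1 hx.2)
  have dφ' : ∀ x ∈ Set.Ioo a b, HasDerivAt φ' (φ'' x) x := fun x hx =>
    (hφ'' x (Set.Ioo_subset_Icc_self hx)).hasDerivAt (Icc_mem_nhds hx.1 hx.2)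
  have hsubR : Set.Icc m b ⊆ Set.Icc a b := Set.Icc_subset_Icc hma le_rfl
  have hsubL : Set.Icc a m ⊆ Set.Icc a b := Set.Icc_subset_Icc le_rfl hmb
  -- kernel continuity
  have cKR : Continuous (fun t : ℝ => (b - t) * (3 * t - a - 2 * b) / 6) := by fun_prop
  have cKR' : Continuous (fun t : ℝ => (a + 5 * b - 6 * t) / 6) := by fun_prop
  have cKL : Continuous (fun t : ℝ => (t - a) * (2 * a + b - 3 * t) / 6) := by fun_prop
  have cKL' : Continuous (fun t : ℝ => (5 * a + b - 6 * t) / 6) := by fun_prop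
  -- FTC on right half
  have intR : IntervalIntegrable (fun t => (b - t) * (3 * t - a - 2 * b) / 6 * φ'' t)
      MeasureTheory.volume m b := by
    apply ContinuousOn.intervalIntegrable
    rw [Set.uIcc_of_le hmb]
    exact cKR.continuousOn.mul (cφ''.mono hsubR)
  have intφR : IntervalIntegrable φ MeasureTheory.volume m b := by
    apply ContinuousOn.intervalIntegrable
    rw [Set.uIcc_of_le hmb]
    exact cφ.mono hsubR
  have ftcR : ∫ t in m..b, ((b - t) * (3 * t - a - 2 * b) / 6 * φ'' t + φ t)
      = ((b - b) * (3 * b - a - 2 * b) / 6 * φ' b - (a + 5 * b - 6 * b) / 6 * φ b)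
        - ((b - m) * (3 * m - a - 2 * b) / 6 * φ' m - (a + 5 * b - 6 * m) / 6 * φ m) := by
    have := intervalIntegral.integral_eq_sub_of_hasDeriv_right_of_le (a := m) (b := b)
      (f := fun t => (b - t) * (3 * t - a - 2 * b) / 6 * φ' t - (a + 5 * b - 6 * t) / 6 * φ t)
      (f' := fun t => (b - t) * (3 * t - a - 2 * b) / 6 * φ'' t + φ t) hmb ?_ ?_ ?_
    · exact this
    · exact (cKR.continuousOn.mul (cφ'.mono hsubR)).sub
        (cKR'.continuousOn.mul (cφ.mono hsubR))
    · intro x hx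
      have hx' : x ∈ Set.Ioo a b := ⟨lt_of_le_of_lt hma hx.1, hx.2⟩
      have h1 : HasDerivAt (fun t : ℝ => (b - t) * (3 * t - a - 2 * b) / 6)
          (((-1) * (3 * x - a - 2 * b) + (b - x) * 3) / 6) x := by
        exact ((((hasDerivAt_id' x).const_sub b).mul
          ((((hasDerivAt_id' x).const_mul 3).sub_const a).sub_const (2 * b))).div_const 6).congr_deriv
          (by ring)
      have h2 : HasDerivAt (fun t : ℝ => (a + 5 * b - 6 * t) / 6) (-1 : ℝ) x := by
        exact ((((hasDerivAt_id' x).const_mul 6).const_sub (a + 5 * b)).div_const 6).congr_deriv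
          (by ring)
      have hW := (h1.mul (dφ' x hx')).sub (h2.mul (dφ x hx'))
      have hW' : HasDerivAt
          (fun t => (b - t) * (3 * t - a - 2 * b) / 6 * φ' t - (a + 5 * b - 6 * t) / 6 * φ t)
          ((b - x) * (3 * x - a - 2 * b) / 6 * φ'' x + φ x) x := hW.congr_deriv (by ring)
      exact hW'.hasDerivWithinAt
    · exact intR.add intφR
  -- FTC on left half
  have intL : IntervalIntegrable (fun t => (t - a) * (2 * a + b - 3 * t) / 6 * φ'' t)
      MeasureTheory.volume a m := by
    apply ContinuousOn.intervalIntegrable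
    rw [Set.uIcc_of_le hma]
    exact cKL.continuousOn.mul (cφ''.mono hsubL)
  have intφL : IntervalIntegrable φ MeasureTheory.volume a m := by
    apply ContinuousOn.intervalIntegrable
    rw [Set.uIcc_of_le hma]
    exact cφ.mono hsubL
  have ftcL : ∫ t in a..m, ((t - a) * (2 * a + b - 3 * t) / 6 * φ'' t + φ t)
      = ((m - a) * (2 * a + b - 3 * m) / 6 * φ' m - (5 * a + b - 6 * m) / 6 * φ m)
        - ((a - a) * (2 * a + b - 3 * a) / 6 * φ' a - (5 * a + b - 6 * a) / 6 * φ a) := by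
    have := intervalIntegral.integral_eq_sub_of_hasDeriv_right_of_le (a := a) (b := m)
      (f := fun t => (t - a) * (2 * a + b - 3 * t) / 6 * φ' t - (5 * a + b - 6 * t) / 6 * φ t)
      (f' := fun t => (t - a) * (2 * a + b - 3 * t) / 6 * φ'' t + φ t) hma ?_ ?_ ?_
    · exact this
    · exact (cKL.continuousOn.mul (cφ'.mono hsubL)).sub
        (cKL'.continuousOn.mul (cφ.mono hsubL))
    · intro x hx
      have hx' : x ∈ Set.Ioo a b := ⟨hx.1, lt_of_lt_of_le hx.2 hmb⟩
      have h1 : HasDerivAt (fun t : ℝ => (t - a) * (2 * a + b - 3 * t) / 6)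
          ((1 * (2 * a + b - 3 * x) + (x - a) * (-3)) / 6) x := by
        exact ((((hasDerivAt_id' x).sub_const a).mul
          (((hasDerivAt_id' x).const_mul 3).const_sub (2 * a + b))).div_const 6).congr_deriv
          (by ring)
      have h2 : HasDerivAt (fun t : ℝ => (5 * a + b - 6 * t) / 6) (-1 : ℝ) x := by
        exact ((((hasDerivAt_id' x).const_mul 6).const_sub (5 * a + b)).div_const 6).congr_deriv
          (by ring)
      have hW := (h1.mul (dφ' x hx')).sub (h2.mul (dφ x hx'))
      have hW' : HasDerivAt
          (fun t => (t - a) * (2 * a + b - 3 * t) / 6 * φ' t - (5 * a + b - 6 * t) / 6 * φ t)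
          ((x - a) * (2 * a + b - 3 * x) / 6 * φ'' x + φ x) x := hW.congr_deriv (by ring)
      exact hW'.hasDerivWithinAt
    · exact intL.add intφL
  -- isolate the kernel integrals
  have eqR : ∫ t in m..b, (b - t) * (3 * t - a - 2 * b) / 6 * φ'' t
      = (((b - b) * (3 * b - a - 2 * b) / 6 * φ' b - (a + 5 * b - 6 * b) / 6 * φ b)
        - ((b - m) * (3 * m - a - 2 * b) / 6 * φ' m - (a + 5 * b - 6 * m) / 6 * φ m))
        - ∫ t in m..b, φ t := by
    rw [← ftcR, intervalIntegral.integral_add intR intφR]; ring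
  have eqL : ∫ t in a..m, (t - a) * (2 * a + b - 3 * t) / 6 * φ'' t
      = (((m - a) * (2 * a + b - 3 * m) / 6 * φ' m - (5 * a + b - 6 * m) / 6 * φ m)
        - ((a - a) * (2 * a + b - 3 * a) / 6 * φ' a - (5 * a + b - 6 * a) / 6 * φ a))
        - ∫ t in a..m, φ t := by
    rw [← ftcL, intervalIntegral.integral_add intL intφL]; ring
  -- substitution to [0,h]
  have subR : ∫ s in (0:ℝ)..h, (h - s) * (3 * s - h) / 6 * φ'' (m + s)
      = ∫ t in m..b, (b - t) * (3 * t - a - 2 * b) / 6 * φ'' t := by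
    have comp := intervalIntegral.integral_comp_add_left
      (a := (0:ℝ)) (b := h) (fun t => (b - t) * (3 * t - a - 2 * b) / 6 * φ'' t) m
    rw [add_zero, hmhb] at comp
    rw [← comp]
    apply intervalIntegral.integral_congr
    intro s _
    have e1 : b - (m + s) = h - s := by rw [hm, hh]; ring
    have e2 : 3 * (m + s) - a - 2 * b = 3 * s - h := by rw [hm, hh]; ring
    simp only [e1, e2]
  have subL : ∫ s in (0:ℝ)..h, (h - s) * (3 * s - h) / 6 * φ'' (m - s)
      = ∫ t in a..m, (t - a) * (2 * a + b - 3 * t) / 6 * φ'' t := by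
    have comp := intervalIntegral.integral_comp_sub_left
      (a := (0:ℝ)) (b := h) (fun t => (t - a) * (2 * a + b - 3 * t) / 6 * φ'' t) m
    rw [sub_zero, hmha] at comp
    rw [← comp]
    apply intervalIntegral.integral_congr
    intro s _
    have e1 : m - s - a = h - s := by rw [hm, hh]; ring
    have e2 : 2 * a + b - 3 * (m - s) = 3 * s - h := by rw [hm, hh]; ring
    simp only [e1, e2]
  -- integrability on [0,h]
  have cgR : ContinuousOn (fun s : ℝ => φ'' (m + s)) (Set.Icc 0 h) := by
    apply cφ''.comp (continuous_const.add continuous_id).continuousOn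
    intro s hs
    show m + s ∈ Set.Icc a b
    constructor
    · linarith [hs.1, hma]
    · linarith [hs.2, hmhb.le]
  have cgL : ContinuousOn (fun s : ℝ => φ'' (m - s)) (Set.Icc 0 h) := by
    apply cφ''.comp (continuous_const.sub continuous_id).continuousOn
    intro s hs
    show m - s ∈ Set.Icc a b
    constructor
    · have := hs.2; linarith [hmha.ge]
    · linarith [hs.1, hmb]
  have ck : Continuous (fun s : ℝ => (h - s) * (3 * s - h) / 6) := by fun_prop
  have intkR : IntervalIntegrable (fun s => (h - s) * (3 * s - h) / 6 * φ'' (m + s))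
      MeasureTheory.volume 0 h := by
    apply ContinuousOn.intervalIntegrable
    rw [Set.uIcc_of_le hh0.le]
    exact ck.continuousOn.mul cgR
  have intkL : IntervalIntegrable (fun s => (h - s) * (3 * s - h) / 6 * φ'' (m - s))
      MeasureTheory.volume 0 h := by
    apply ContinuousOn.intervalIntegrable
    rw [Set.uIcc_of_le hh0.le]
    exact ck.continuousOn.mul cgL
  have splitφ : (∫ t in a..m, φ t) + ∫ t in m..b, φ t = ∫ t in a..b, φ t :=
    intervalIntegral.integral_add_adjacent_intervals intφL intφR
  -- the key identity
  have key : ∫ s in (0:ℝ)..h, (h - s) * (3 * s - h) / 6 * (φ'' (m + s) + φ'' (m - s))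
      = (b - a) * ((φ a + φ b) / 6 + 2 / 3 * φ m) - ∫ t in a..b, φ t := by
    have expand : ∀ s : ℝ, (h - s) * (3 * s - h) / 6 * (φ'' (m + s) + φ'' (m - s))
        = (h - s) * (3 * s - h) / 6 * φ'' (m + s) + (h - s) * (3 * s - h) / 6 * φ'' (m - s) :=
      fun s => by ring
    rw [intervalIntegral.integral_congr (g := fun s =>
        (h - s) * (3 * s - h) / 6 * φ'' (m + s) + (h - s) * (3 * s - h) / 6 * φ'' (m - s))
        (fun s _ => expand s),
      intervalIntegral.integral_add intkR intkL, subR, subL, eqR, eqL, ← splitφ]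
    have hK0 : (b - m) * (3 * m - a - 2 * b) / 6 = (m - a) * (2 * a + b - 3 * m) / 6 := by
      rw [hm]; ring
    rw [hm]
    ring
  -- convexity consequences
  have hmemI : ∀ s : ℝ, 0 ≤ s → s ≤ h → m + s ∈ Set.Icc a b ∧ m - s ∈ Set.Icc a b := by
    intro s h0 h1
    exact ⟨⟨by linarith, by linarith [hmhb]⟩, ⟨by linarith [hmha.ge], by linarith⟩⟩
  have gmono : ∀ s t : ℝ, 0 ≤ s → s ≤ t → t ≤ h →
      φ'' (m + s) + φ'' (m - s) ≤ φ'' (m + t) + φ'' (m - t) := by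
    intro s t hs hst hth
    rcases eq_or_lt_of_le (hs.trans hst) with ht0 | ht0
    · have hs0 : s = 0 := le_antisymm (hst.trans ht0.symm.le) hs
      rw [hs0, ← ht0]
    · have hmt := hmemI t (hs.trans hst) hth
      have hl1 : (0:ℝ) ≤ (t + s) / (2 * t) := by positivity
      have hl2 : (0:ℝ) ≤ (t - s) / (2 * t) := div_nonneg (by linarith) (by linarith)
      have hsum : (t + s) / (2 * t) + (t - s) / (2 * t) = 1 := by
        field_simp; ring
      have c1 := hconv.2 hmt.1 hmt.2 hl1 hl2 hsum
      have c2 := hconv.2 hmt.1 hmt.2 hl2 hl1 (by linarith)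
      simp only [smul_eq_mul] at c1 c2
      have e1 : (t + s) / (2 * t) * (m + t) + (t - s) / (2 * t) * (m - t) = m + s := by
        field_simp; ring
      have e2 : (t - s) / (2 * t) * (m + t) + (t + s) / (2 * t) * (m - t) = m - s := by
        field_simp; ring
      rw [e1] at c1; rw [e2] at c2
      have hadd := add_le_add c1 c2
      have expand : (t + s) / (2 * t) * φ'' (m + t) + (t - s) / (2 * t) * φ'' (m - t)
          + ((t - s) / (2 * t) * φ'' (m + t) + (t + s) / (2 * t) * φ'' (m - t))
          = ((t + s) / (2 * t) + (t - s) / (2 * t)) * (φ'' (m + t) + φ'' (m - t)) := by ring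
      rw [expand, hsum, one_mul] at hadd
      exact hadd
  have haIcc : a ∈ Set.Icc a b := ⟨le_rfl, hab.le⟩
  have hbIcc : b ∈ Set.Icc a b := ⟨hab.le, le_rfl⟩
  have hmIcc : m ∈ Set.Icc a b := ⟨hma, hmb⟩
  have gchord : ∀ s : ℝ, 0 ≤ s → s ≤ h →
      φ'' (m + s) + φ'' (m - s)
        ≤ (1 - s / h) * (2 * φ'' m) + s / h * (φ'' a + φ'' b) := by
    intro s hs hsh
    have hl1 : (0:ℝ) ≤ 1 - s / h := by
      have : s / h ≤ 1 := (div_le_one hh0).2 hsh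
      linarith
    have hl2 : (0:ℝ) ≤ s / h := by positivity
    have hsum : (1 - s / h) + s / h = 1 := by ring
    have c1 := hconv.2 hmIcc hbIcc hl1 hl2 hsum
    have c2 := hconv.2 hmIcc haIcc hl1 hl2 hsum
    simp only [smul_eq_mul] at c1 c2
    have hd : s / h * h = s := div_mul_cancel₀ s hh0.ne'
    have e1 : (1 - s / h) * m + s / h * b = m + s := by
      rw [← hmhb]; linear_combination hd
    have e2 : (1 - s / h) * m + s / h * a = m - s := by
      rw [← hmha]; linear_combination -hd
    rw [e1] at c1; rw [e2] at c2
    linarith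
  have hmid : φ'' m ≤ (φ'' a + φ'' b) / 2 := by
    have c := hconv.2 haIcc hbIcc (by norm_num : (0:ℝ) ≤ 1/2)
      (by norm_num : (0:ℝ) ≤ 1/2) (by norm_num : (1/2 : ℝ) + 1/2 = 1)
    simp only [smul_eq_mul] at c
    have e : (1/2 : ℝ) * a + (1/2 : ℝ) * b = m := by rw [hm]; ring
    rw [e] at c; linarith
  -- integrability of the combined integrand
  have h3a : (0:ℝ) ≤ h / 3 := by linarith
  have h3b : h / 3 ≤ h := by linarith
  have ckg : ContinuousOn (fun s => (h - s) * (3 * s - h) / 6 * (φ'' (m + s) + φ'' (m - s)))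
      (Set.Icc 0 h) := ck.continuousOn.mul (cgR.add cgL)
  have intkg : IntervalIntegrable
      (fun s => (h - s) * (3 * s - h) / 6 * (φ'' (m + s) + φ'' (m - s)))
      MeasureTheory.volume 0 h := by
    apply ContinuousOn.intervalIntegrable
    rw [Set.uIcc_of_le hh0.le]; exact ckg
  have intkg1 : IntervalIntegrable
      (fun s => (h - s) * (3 * s - h) / 6 * (φ'' (m + s) + φ'' (m - s)))
      MeasureTheory.volume 0 (h / 3) := by
    apply ContinuousOn.intervalIntegrable
    rw [Set.uIcc_of_le h3a]; exact ckg.mono (Set.Icc_subset_Icc le_rfl h3b)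
  have intkg2 : IntervalIntegrable
      (fun s => (h - s) * (3 * s - h) / 6 * (φ'' (m + s) + φ'' (m - s)))
      MeasureTheory.volume (h / 3) h := by
    apply ContinuousOn.intervalIntegrable
    rw [Set.uIcc_of_le h3b]; exact ckg.mono (Set.Icc_subset_Icc h3a le_rfl)
  -- lower bound
  have izero : ∫ s in (0:ℝ)..h,
      (h - s) * (3 * s - h) / 6 * (φ'' (m + h / 3) + φ'' (m - h / 3)) = 0 := by
    rw [intervalIntegral.integral_mul_const, int_k]; ring
  have lower : 0 ≤ ∫ s in (0:ℝ)..h,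
      (h - s) * (3 * s - h) / 6 * (φ'' (m + s) + φ'' (m - s)) := by
    have intc : IntervalIntegrable
        (fun s => (h - s) * (3 * s - h) / 6 * (φ'' (m + h / 3) + φ'' (m - h / 3)))
        MeasureTheory.volume 0 h := by
      apply Continuous.intervalIntegrable; fun_prop
    have mono := intervalIntegral.integral_mono_on hh0.le intc intkg ?_
    · rw [izero] at mono; exact mono
    · intro s hs
      rcases le_total s (h / 3) with hc | hc
      · have hk : (h - s) * (3 * s - h) / 6 ≤ 0 := by
          have : (h - s) * (3 * s - h) ≤ 0 :=
            mul_nonpos_of_nonneg_of_nonpos (by linarith [hs.2]) (by linarith)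
          linarith
        have hg := gmono s (h / 3) hs.1 hc h3b
        exact mul_le_mul_of_nonpos_left hg hk
      · have hk : 0 ≤ (h - s) * (3 * s - h) / 6 := by
          have : 0 ≤ (h - s) * (3 * s - h) := mul_nonneg (by linarith [hs.2]) (by linarith)
          linarith
        have hg := gmono (h / 3) s h3a hc hs.2
        exact mul_le_mul_of_nonneg_left hg hk
  -- upper bound
  have split : (∫ s in (0:ℝ)..h, (h - s) * (3 * s - h) / 6 * (φ'' (m + s) + φ'' (m - s)))
      = (∫ s in (0:ℝ)..(h/3), (h - s) * (3 * s - h) / 6 * (φ'' (m + s) + φ'' (m - s)))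
        + ∫ s in (h/3)..h, (h - s) * (3 * s - h) / 6 * (φ'' (m + s) + φ'' (m - s)) :=
    (intervalIntegral.integral_add_adjacent_intervals intkg1 intkg2).symm
  have intc1 : IntervalIntegrable (fun s => (h - s) * (3 * s - h) / 6 * (2 * φ'' m))
      MeasureTheory.volume 0 (h/3) := by
    apply Continuous.intervalIntegrable; fun_prop
  have ub1 : (∫ s in (0:ℝ)..(h/3), (h - s) * (3 * s - h) / 6 * (φ'' (m + s) + φ'' (m - s)))
      ≤ ∫ s in (0:ℝ)..(h/3), (h - s) * (3 * s - h) / 6 * (2 * φ'' m) := by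
    apply intervalIntegral.integral_mono_on h3a intkg1 intc1
    intro s hs
    have hk : (h - s) * (3 * s - h) / 6 ≤ 0 := by
      have : (h - s) * (3 * s - h) ≤ 0 :=
        mul_nonpos_of_nonneg_of_nonpos (by linarith [hs.2]) (by linarith [hs.2])
      linarith
    have hg := gmono 0 s le_rfl hs.1 (hs.2.trans h3b)
    rw [add_zero, sub_zero] at hg
    have hg' : 2 * φ'' m ≤ φ'' (m + s) + φ'' (m - s) := by linarith
    exact mul_le_mul_of_nonpos_left hg' hk
  have val1 : (∫ s in (0:ℝ)..(h/3), (h - s) * (3 * s - h) / 6 * (2 * φ'' m))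
      = -(2 * h ^ 3 / 81) * (2 * φ'' m) := by
    rw [intervalIntegral.integral_mul_const, int_k]; ring
  have intc2 : IntervalIntegrable (fun s => (h - s) * (3 * s - h) / 6 * (2 * φ'' m)
      + s * ((h - s) * (3 * s - h) / 6) * ((φ'' a + φ'' b - 2 * φ'' m) / h))
      MeasureTheory.volume (h/3) h := by
    apply Continuous.intervalIntegrable; fun_prop
  have ub2 : (∫ s in (h/3)..h, (h - s) * (3 * s - h) / 6 * (φ'' (m + s) + φ'' (m - s)))
      ≤ ∫ s in (h/3)..h, ((h - s) * (3 * s - h) / 6 * (2 * φ'' m)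
        + s * ((h - s) * (3 * s - h) / 6) * ((φ'' a + φ'' b - 2 * φ'' m) / h)) := by
    apply intervalIntegral.integral_mono_on h3b intkg2 intc2
    intro s hs
    have hk : 0 ≤ (h - s) * (3 * s - h) / 6 := by
      have : 0 ≤ (h - s) * (3 * s - h) := mul_nonneg (by linarith [hs.2]) (by linarith [hs.1])
      linarith
    have hs0 : 0 ≤ s := le_trans h3a hs.1
    have hg := gchord s hs0 hs.2
    calc (h - s) * (3 * s - h) / 6 * (φ'' (m + s) + φ'' (m - s))
        ≤ (h - s) * (3 * s - h) / 6
            * ((1 - s / h) * (2 * φ'' m) + s / h * (φ'' a + φ'' b)) :=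
          mul_le_mul_of_nonneg_left hg hk
      _ = (h - s) * (3 * s - h) / 6 * (2 * φ'' m)
            + s * ((h - s) * (3 * s - h) / 6) * ((φ'' a + φ'' b - 2 * φ'' m) / h) := by
          ring
  have val2 : (∫ s in (h/3)..h, ((h - s) * (3 * s - h) / 6 * (2 * φ'' m)
        + s * ((h - s) * (3 * s - h) / 6) * ((φ'' a + φ'' b - 2 * φ'' m) / h)))
      = (2 * h ^ 3 / 81) * (2 * φ'' m)
        + (4 * h ^ 4 / 243) * ((φ'' a + φ'' b - 2 * φ'' m) / h) := by
    rw [intervalIntegral.integral_add (by apply Continuous.intervalIntegrable; fun_prop)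
        (by apply Continuous.intervalIntegrable; fun_prop),
      intervalIntegral.integral_mul_const, intervalIntegral.integral_mul_const, int_k, int_sk]
    ring
  have upper : (∫ s in (0:ℝ)..h, (h - s) * (3 * s - h) / 6 * (φ'' (m + s) + φ'' (m - s)))
      ≤ 4 * h ^ 3 / 243 * (φ'' a + φ'' b - 2 * φ'' m) := by
    rw [split]
    calc _ ≤ -(2 * h ^ 3 / 81) * (2 * φ'' m) + ((2 * h ^ 3 / 81) * (2 * φ'' m)
        + (4 * h ^ 4 / 243) * ((φ'' a + φ'' b - 2 * φ'' m) / h)) :=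
          add_le_add (val1 ▸ ub1) (val2 ▸ ub2)
      _ = 4 * h ^ 3 / 243 * (φ'' a + φ'' b - 2 * φ'' m) := by
          have hd : (φ'' a + φ'' b - 2 * φ'' m) / h * h = φ'' a + φ'' b - 2 * φ'' m :=
            div_mul_cancel₀ _ hh0.ne'
          linear_combination (4 * h ^ 3 / 243) * hd
  -- assemble
  have keyQ : (b - a) * ((φ a + φ b) / 6 + 2 / 3 * φ m - 1 / (b - a) * ∫ t in a..b, φ t)
      = ∫ s in (0:ℝ)..h, (h - s) * (3 * s - h) / 6 * (φ'' (m + s) + φ'' (m - s)) := by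
    rw [key]; field_simp
  constructor
  · have h1 : 0 ≤ (b - a) * ((φ a + φ b) / 6 + 2 / 3 * φ m
        - 1 / (b - a) * ∫ t in a..b, φ t) := by rw [keyQ]; exact lower
    exact (mul_nonneg_iff_of_pos_left hab').mp h1
  · refine le_of_mul_le_mul_left ?_ hab'
    rw [keyQ]
    have hΔ : 0 ≤ (φ'' a + φ'' b) / 2 - φ'' m := by linarith
    calc (∫ s in (0:ℝ)..h, (h - s) * (3 * s - h) / 6 * (φ'' (m + s) + φ'' (m - s)))
        ≤ 4 * h ^ 3 / 243 * (φ'' a + φ'' b - 2 * φ'' m) := upper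
      _ ≤ (b - a) * ((b - a) ^ 2 / 162 * ((φ'' a + φ'' b) / 2 - φ'' m)) := by
          rw [hh]
          nlinarith [mul_nonneg (mul_nonneg (mul_nonneg hab'.le hab'.le) hab'.le) hΔ]
end

section
/- Let ψ : ℝ → ℝ be four times continuously differentiable on [a,b] with a < b, and let m₄ ≤ ψ⁽⁴⁾(t) ≤ M₄ on [a,b]. Then |T_ψ(a,b) - ((b-a)²/360)[(ψ''(a)+ψ''(b))/2 - ψ''((a+b)/2)]| ≤ (11/57600)(M₄ - m₄)(b-a)⁴. -/
set_option maxHeartbeats 2000000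
open Set intervalIntegral MeasureTheory


noncomputable def poly5 (c0 c1 c2 c3 c4 e : ℝ) : ℝ → ℝ :=
  fun t => c4*(t-e)^4 + c3*(t-e)^3 + c2*(t-e)^2 + c1*(t-e) + c0

lemma poly5_cont (c0 c1 c2 c3 c4 e : ℝ) : Continuous (poly5 c0 c1 c2 c3 c4 e) := by
  unfold poly5; fun_prop

lemma pow_shift_hasDerivAt (n : ℕ) (e x : ℝ) :
    HasDerivAt (fun t : ℝ => (t-e)^n) (n*(x-e)^(n-1)) x := by
  simpa using ((hasDerivAt_id x).sub_const e).fun_pow n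

lemma poly5_hasDerivAt (c0 c1 c2 c3 c4 e x : ℝ) :
    HasDerivAt (poly5 c0 c1 c2 c3 c4 e) (poly5 c1 (2*c2) (3*c3) (4*c4) 0 e x) x := by
  unfold poly5
  have h4 := (pow_shift_hasDerivAt 4 e x).const_mul c4
  have h3 := (pow_shift_hasDerivAt 3 e x).const_mul c3
  have h2 := (pow_shift_hasDerivAt 2 e x).const_mul c2
  have h1 := ((hasDerivAt_id x).sub_const e).const_mul c1
  have := ((((h4.fun_add h3).fun_add h2).fun_add h1).add_const c0)
  refine this.congr_deriv ?_
  push_cast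
  ring

lemma poly5_antideriv_hasDerivAt (c1 c2 c3 c4 e x : ℝ) :
    HasDerivAt (fun t : ℝ => c4/5*(t-e)^5 + c3/4*(t-e)^4 + c2/3*(t-e)^3 + c1/2*(t-e)^2)
      (poly5 0 c1 c2 c3 c4 e x) x := by
  unfold poly5
  have h5 := (pow_shift_hasDerivAt 5 e x).const_mul (c4/5)
  have h4 := (pow_shift_hasDerivAt 4 e x).const_mul (c3/4)
  have h3 := (pow_shift_hasDerivAt 3 e x).const_mul (c2/3)
  have h2 := (pow_shift_hasDerivAt 2 e x).const_mul (c1/2)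
  have := ((h5.fun_add h4).fun_add h3).fun_add h2
  refine this.congr_deriv ?_
  push_cast
  ring

lemma poly5_sq_antideriv_hasDerivAt (c1 c3 c4 e x : ℝ) :
    HasDerivAt (fun t : ℝ => c4^2/9*(t-e)^9 + (2*c3*c4)/8*(t-e)^8 + c3^2/7*(t-e)^7
        + (2*c1*c4)/6*(t-e)^6 + (2*c1*c3)/5*(t-e)^5 + c1^2/3*(t-e)^3)
      ((poly5 0 c1 0 c3 c4 e x)^2) x := by
  unfold poly5
  have h9 := (pow_shift_hasDerivAt 9 e x).const_mul (c4^2/9)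
  have h8 := (pow_shift_hasDerivAt 8 e x).const_mul ((2*c3*c4)/8)
  have h7 := (pow_shift_hasDerivAt 7 e x).const_mul (c3^2/7)
  have h6 := (pow_shift_hasDerivAt 6 e x).const_mul ((2*c1*c4)/6)
  have h5 := (pow_shift_hasDerivAt 5 e x).const_mul ((2*c1*c3)/5)
  have h3 := (pow_shift_hasDerivAt 3 e x).const_mul (c1^2/3)
  have := ((((h9.fun_add h8).fun_add h7).fun_add h6).fun_add h5).fun_add h3
  refine this.congr_deriv ?_
  push_cast
  ring

lemma poly5_integral (c1 c2 c3 c4 e l r : ℝ) :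
    ∫ t in l..r, poly5 0 c1 c2 c3 c4 e t
      = (c4/5*(r-e)^5 + c3/4*(r-e)^4 + c2/3*(r-e)^3 + c1/2*(r-e)^2)
        - (c4/5*(l-e)^5 + c3/4*(l-e)^4 + c2/3*(l-e)^3 + c1/2*(l-e)^2) := by
  exact integral_eq_sub_of_hasDerivAt (fun x _ => poly5_antideriv_hasDerivAt c1 c2 c3 c4 e x)
    ((poly5_cont 0 c1 c2 c3 c4 e).intervalIntegrable l r)

lemma poly5_sq_integral (c1 c3 c4 e l r : ℝ) :
    ∫ t in l..r, (poly5 0 c1 0 c3 c4 e t)^2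
      = (c4^2/9*(r-e)^9 + (2*c3*c4)/8*(r-e)^8 + c3^2/7*(r-e)^7
        + (2*c1*c4)/6*(r-e)^6 + (2*c1*c3)/5*(r-e)^5 + c1^2/3*(r-e)^3)
      - (c4^2/9*(l-e)^9 + (2*c3*c4)/8*(l-e)^8 + c3^2/7*(l-e)^7
        + (2*c1*c4)/6*(l-e)^6 + (2*c1*c3)/5*(l-e)^5 + c1^2/3*(l-e)^3) := by
  exact integral_eq_sub_of_hasDerivAt (fun x _ => poly5_sq_antideriv_hasDerivAt c1 c3 c4 e x)
    (((poly5_cont 0 c1 0 c3 c4 e).pow 2).intervalIntegrable l r)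

lemma piece_ftc (l r e c1 c2 c3 c4 : ℝ) (hlr : l ≤ r) (hc4 : 24*c4 = -1)
    (f f1 f2 f3 f4 : ℝ → ℝ)
    (hf : ContinuousOn f (Icc l r)) (hf1 : ContinuousOn f1 (Icc l r))
    (hf2 : ContinuousOn f2 (Icc l r)) (hf3 : ContinuousOn f3 (Icc l r))
    (hf4 : ContinuousOn f4 (Icc l r))
    (df : ∀ x ∈ Ioo l r, HasDerivAt f (f1 x) x)
    (df1 : ∀ x ∈ Ioo l r, HasDerivAt f1 (f2 x) x)
    (df2 : ∀ x ∈ Ioo l r, HasDerivAt f2 (f3 x) x)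
    (df3 : ∀ x ∈ Ioo l r, HasDerivAt f3 (f4 x) x) :
    ∫ t in l..r, (poly5 0 c1 c2 c3 c4 e t * f4 t + f t)
      = (poly5 0 c1 c2 c3 c4 e r * f3 r - poly5 c1 (2*c2) (3*c3) (4*c4) 0 e r * f2 r
          + poly5 (2*c2) (6*c3) (12*c4) 0 0 e r * f1 r - poly5 (6*c3) (24*c4) 0 0 0 e r * f r)
        - (poly5 0 c1 c2 c3 c4 e l * f3 l - poly5 c1 (2*c2) (3*c3) (4*c4) 0 e l * f2 l
          + poly5 (2*c2) (6*c3) (12*c4) 0 0 e l * f1 l - poly5 (6*c3) (24*c4) 0 0 0 e l * f l) := by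
  have huIcc : uIcc l r = Icc l r := uIcc_of_le hlr
  have main := integral_eq_sub_of_hasDeriv_right_of_le (a := l) (b := r)
    (f := fun y => poly5 0 c1 c2 c3 c4 e y * f3 y - poly5 c1 (2*c2) (3*c3) (4*c4) 0 e y * f2 y
      + poly5 (2*c2) (6*c3) (12*c4) 0 0 e y * f1 y - poly5 (6*c3) (24*c4) 0 0 0 e y * f y)
    (f' := fun t => poly5 0 c1 c2 c3 c4 e t * f4 t + f t) hlr ?_ ?_ ?_
  · exact main
  · exact (((((poly5_cont 0 c1 c2 c3 c4 e).continuousOn).mul hf3).sub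
      (((poly5_cont c1 (2*c2) (3*c3) (4*c4) 0 e).continuousOn).mul hf2)).add
      (((poly5_cont (2*c2) (6*c3) (12*c4) 0 0 e).continuousOn).mul hf1)).sub
      (((poly5_cont (6*c3) (24*c4) 0 0 0 e).continuousOn).mul hf)
  · intro x hx
    have hP := poly5_hasDerivAt 0 c1 c2 c3 c4 e x
    have hQ := poly5_hasDerivAt c1 (2*c2) (3*c3) (4*c4) 0 e x
    have hR := poly5_hasDerivAt (2*c2) (6*c3) (12*c4) 0 0 e x
    have hS := poly5_hasDerivAt (6*c3) (24*c4) 0 0 0 e x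
    have hQ' : HasDerivAt (poly5 c1 (2*c2) (3*c3) (4*c4) 0 e)
        (poly5 (2*c2) (6*c3) (12*c4) 0 0 e x) x := by
      convert hQ using 1; unfold poly5; ring
    have hR' : HasDerivAt (poly5 (2*c2) (6*c3) (12*c4) 0 0 e)
        (poly5 (6*c3) (24*c4) 0 0 0 e x) x := by
      convert hR using 1; unfold poly5; ring
    have hS' : HasDerivAt (poly5 (6*c3) (24*c4) 0 0 0 e) (-1) x := by
      convert hS using 1; unfold poly5; rw [← hc4]; ring
    have comb := (((hP.fun_mul (df3 x hx)).fun_sub (hQ'.fun_mul (df2 x hx))).fun_add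
        (hR'.fun_mul (df1 x hx))).fun_sub (hS'.fun_mul (df x hx))
    have hG : HasDerivAt (fun y => poly5 0 c1 c2 c3 c4 e y * f3 y
        - poly5 c1 (2*c2) (3*c3) (4*c4) 0 e y * f2 y
        + poly5 (2*c2) (6*c3) (12*c4) 0 0 e y * f1 y
        - poly5 (6*c3) (24*c4) 0 0 0 e y * f y)
        (poly5 0 c1 c2 c3 c4 e x * f4 x + f x) x := by
      refine comb.congr_deriv ?_
      ring
    exact hG.hasDerivWithinAt
  · apply ContinuousOn.intervalIntegrable
    rw [huIcc]
    exact (((poly5_cont 0 c1 c2 c3 c4 e).continuousOn).mul hf4).add hf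

lemma half_bound (l r σ K : ℝ) (hlr : l ≤ r) (hσ : 0 < σ) (P g : ℝ → ℝ)
    (hP : Continuous P) (hg : ContinuousOn g (Icc l r))
    (hgK : ∀ t ∈ Icc l r, (g t)^2 ≤ K) :
    |∫ t in l..r, P t * g t| ≤ σ/2 * (∫ t in l..r, (P t)^2) + 1/(2*σ) * (K * (r - l)) := by
  have huIcc : uIcc l r = Icc l r := uIcc_of_le hlr
  have hPgc : ContinuousOn (fun t => P t * g t) (Icc l r) := hP.continuousOn.mul hg
  have hint1 : IntervalIntegrable (fun t => |P t * g t|) volume l r := by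
    apply ContinuousOn.intervalIntegrable; rw [huIcc]; exact hPgc.abs
  have hint2 : IntervalIntegrable (fun t => σ/2 * (P t)^2 + 1/(2*σ) * (g t)^2) volume l r := by
    apply ContinuousOn.intervalIntegrable; rw [huIcc]
    exact (continuousOn_const.mul ((hP.pow 2).continuousOn)).add (continuousOn_const.mul (hg.pow 2))
  have hintP2 : IntervalIntegrable (fun t => σ/2 * (P t)^2) volume l r :=
    (continuous_const.mul (hP.pow 2)).intervalIntegrable l r
  have hintg2 : IntervalIntegrable (fun t => 1/(2*σ) * (g t)^2) volume l r := by
    apply ContinuousOn.intervalIntegrable; rw [huIcc]; exact continuousOn_const.mul (hg.pow 2)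
  have hintg2' : IntervalIntegrable (fun t => (g t)^2) volume l r := by
    apply ContinuousOn.intervalIntegrable; rw [huIcc]; exact hg.pow 2
  have pointwise : ∀ t ∈ Icc l r, |P t * g t| ≤ σ/2 * (P t)^2 + 1/(2*σ) * (g t)^2 := by
    intro t _
    rw [abs_mul, ← sq_abs (P t), ← sq_abs (g t)]
    set p := |P t| with hp
    set q := |g t| with hq
    have expand : 2*σ*(σ/2*p^2 + 1/(2*σ)*q^2) = σ^2*p^2 + q^2 := by
      field_simp
    have key : 2*σ*(p*q) ≤ 2*σ*(σ/2*p^2 + 1/(2*σ)*q^2) := by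
      rw [expand]; nlinarith [sq_nonneg (σ*p - q)]
    exact le_of_mul_le_mul_left key (by positivity)
  calc |∫ t in l..r, P t * g t| ≤ ∫ t in l..r, |P t * g t| :=
        intervalIntegral.abs_integral_le_integral_abs hlr
    _ ≤ ∫ t in l..r, (σ/2 * (P t)^2 + 1/(2*σ) * (g t)^2) :=
        intervalIntegral.integral_mono_on hlr hint1 hint2 pointwise
    _ = σ/2 * (∫ t in l..r, (P t)^2) + 1/(2*σ) * ∫ t in l..r, (g t)^2 := by
        rw [intervalIntegral.integral_add hintP2 hintg2, intervalIntegral.integral_const_mul,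
          intervalIntegral.integral_const_mul]
    _ ≤ σ/2 * (∫ t in l..r, (P t)^2) + 1/(2*σ) * (K * (r - l)) := by
        have hK : ∫ t in l..r, (g t)^2 ≤ K * (r - l) := by
          have := intervalIntegral.integral_mono_on hlr hintg2' (intervalIntegrable_const) hgK
          rwa [intervalIntegral.integral_const, smul_eq_mul, mul_comm] at this
        have : 0 ≤ 1/(2*σ) := by positivity
        nlinarith [this, hK]


theorem simpson_stmt13 (a b m₄ M₄ : ℝ) (hab : a < b) (ψ ψ' ψ'' ψ''' ψ'''' : ℝ → ℝ)
    (hψ' : ∀ x ∈ Set.Icc a b, HasDerivWithinAt ψ (ψ' x) (Set.Icc a b) x)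
    (hψ'' : ∀ x ∈ Set.Icc a b, HasDerivWithinAt ψ' (ψ'' x) (Set.Icc a b) x)
    (hψ''' : ∀ x ∈ Set.Icc a b, HasDerivWithinAt ψ'' (ψ''' x) (Set.Icc a b) x)
    (hψ'''' : ∀ x ∈ Set.Icc a b, HasDerivWithinAt ψ''' (ψ'''' x) (Set.Icc a b) x)
    (hcont : ContinuousOn ψ'''' (Set.Icc a b))
    (hm : ∀ x ∈ Set.Icc a b, m₄ ≤ ψ'''' x) (hM : ∀ x ∈ Set.Icc a b, ψ'''' x ≤ M₄) :
    |((ψ a + ψ b) / 6 + 2 / 3 * ψ ((a + b) / 2) - (1 / (b - a)) * ∫ t in a..b, ψ t) -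
        ((b - a) ^ 2 / 360) * ((ψ'' a + ψ'' b) / 2 - ψ'' ((a + b) / 2))| ≤
      11 / 57600 * (M₄ - m₄) * (b - a) ^ 4 := by
  have hba0 : (0:ℝ) < b - a := by linarith
  have hba : b - a ≠ 0 := ne_of_gt hba0
  have ham : a ≤ ((a+b)/2) := by linarith
  have hmb : ((a+b)/2) ≤ b := by linarith
  have hsub1 : Icc a ((a+b)/2) ⊆ Icc a b := Icc_subset_Icc le_rfl hmb
  have hsub2 : Icc ((a+b)/2) b ⊆ Icc a b := Icc_subset_Icc ham le_rfl
  have ho1 : Ioo a ((a+b)/2) ⊆ Ioo a b := Ioo_subset_Ioo le_rfl hmb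
  have ho2 : Ioo ((a+b)/2) b ⊆ Ioo a b := Ioo_subset_Ioo ham le_rfl
  -- continuity
  have cψ : ContinuousOn ψ (Icc a b) := fun x hx => (hψ' x hx).continuousWithinAt
  have cψ' : ContinuousOn ψ' (Icc a b) := fun x hx => (hψ'' x hx).continuousWithinAt
  have cψ'' : ContinuousOn ψ'' (Icc a b) := fun x hx => (hψ''' x hx).continuousWithinAt
  have cψ''' : ContinuousOn ψ''' (Icc a b) := fun x hx => (hψ'''' x hx).continuousWithinAt
  -- interior derivatives
  have dψ : ∀ x ∈ Ioo a b, HasDerivAt ψ (ψ' x) x := fun x hx =>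
    (hψ' x (Ioo_subset_Icc_self hx)).hasDerivAt (Icc_mem_nhds hx.1 hx.2)
  have dψ' : ∀ x ∈ Ioo a b, HasDerivAt ψ' (ψ'' x) x := fun x hx =>
    (hψ'' x (Ioo_subset_Icc_self hx)).hasDerivAt (Icc_mem_nhds hx.1 hx.2)
  have dψ'' : ∀ x ∈ Ioo a b, HasDerivAt ψ'' (ψ''' x) x := fun x hx =>
    (hψ''' x (Ioo_subset_Icc_self hx)).hasDerivAt (Icc_mem_nhds hx.1 hx.2)
  have dψ''' : ∀ x ∈ Ioo a b, HasDerivAt ψ''' (ψ'''' x) x := fun x hx =>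
    (hψ'''' x (Ioo_subset_Icc_self hx)).hasDerivAt (Icc_mem_nhds hx.1 hx.2)
  -- the two FTC identities
  have key1 := piece_ftc a ((a+b)/2) a (-(b-a)^3/720) 0 ((b-a)/36) (-1/24) ham (by norm_num)
    ψ ψ' ψ'' ψ''' ψ'''' (cψ.mono hsub1) (cψ'.mono hsub1) (cψ''.mono hsub1)
    (cψ'''.mono hsub1) (hcont.mono hsub1)
    (fun x hx => dψ x (ho1 hx)) (fun x hx => dψ' x (ho1 hx))
    (fun x hx => dψ'' x (ho1 hx)) (fun x hx => dψ''' x (ho1 hx))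
  have key2 := piece_ftc ((a+b)/2) b b ((b-a)^3/720) 0 (-(b-a)/36) (-1/24) hmb (by norm_num)
    ψ ψ' ψ'' ψ''' ψ'''' (cψ.mono hsub2) (cψ'.mono hsub2) (cψ''.mono hsub2)
    (cψ'''.mono hsub2) (hcont.mono hsub2)
    (fun x hx => dψ x (ho2 hx)) (fun x hx => dψ' x (ho2 hx))
    (fun x hx => dψ'' x (ho2 hx)) (fun x hx => dψ''' x (ho2 hx))
  -- integrability facts
  have int1 : IntervalIntegrable (fun t => poly5 0 (-(b-a)^3/720) 0 ((b-a)/36) (-1/24) a t * ψ'''' t) volume a ((a+b)/2) := by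
    apply ContinuousOn.intervalIntegrable
    rw [uIcc_of_le ham]
    exact ((poly5_cont _ _ _ _ _ _).continuousOn).mul (hcont.mono hsub1)
  have int2 : IntervalIntegrable (fun t => poly5 0 ((b-a)^3/720) 0 (-(b-a)/36) (-1/24) b t * ψ'''' t) volume ((a+b)/2) b := by
    apply ContinuousOn.intervalIntegrable
    rw [uIcc_of_le hmb]
    exact ((poly5_cont _ _ _ _ _ _).continuousOn).mul (hcont.mono hsub2)
  have intψ1 : IntervalIntegrable ψ volume a ((a+b)/2) := by
    apply ContinuousOn.intervalIntegrable
    rw [uIcc_of_le ham]; exact cψ.mono hsub1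
  have intψ2 : IntervalIntegrable ψ volume ((a+b)/2) b := by
    apply ContinuousOn.intervalIntegrable
    rw [uIcc_of_le hmb]; exact cψ.mono hsub2
  have intg1 : IntervalIntegrable (fun t => poly5 0 (-(b-a)^3/720) 0 ((b-a)/36) (-1/24) a t * (ψ'''' t - ((m₄ + M₄)/2))) volume a ((a+b)/2) := by
    apply ContinuousOn.intervalIntegrable
    rw [uIcc_of_le ham]
    exact ((poly5_cont _ _ _ _ _ _).continuousOn).mul ((hcont.mono hsub1).sub continuousOn_const)
  have intg2 : IntervalIntegrable (fun t => poly5 0 ((b-a)^3/720) 0 (-(b-a)/36) (-1/24) b t * (ψ'''' t - ((m₄ + M₄)/2))) volume ((a+b)/2) b := by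
    apply ContinuousOn.intervalIntegrable
    rw [uIcc_of_le hmb]
    exact ((poly5_cont _ _ _ _ _ _).continuousOn).mul ((hcont.mono hsub2).sub continuousOn_const)
  have intc1 : IntervalIntegrable (fun t => ((m₄ + M₄)/2) * poly5 0 (-(b-a)^3/720) 0 ((b-a)/36) (-1/24) a t) volume a ((a+b)/2) :=
    (continuous_const.mul (poly5_cont _ _ _ _ _ _)).intervalIntegrable _ _
  have intc2 : IntervalIntegrable (fun t => ((m₄ + M₄)/2) * poly5 0 ((b-a)^3/720) 0 (-(b-a)/36) (-1/24) b t) volume ((a+b)/2) b :=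
    (continuous_const.mul (poly5_cont _ _ _ _ _ _)).intervalIntegrable _ _
  -- zero integrals of kernels
  have z1 : ∫ t in a..((a+b)/2), poly5 0 (-(b-a)^3/720) 0 ((b-a)/36) (-1/24) a t = 0 := by
    rw [poly5_integral]; field_simp; ring
  have z2 : ∫ t in ((a+b)/2)..b, poly5 0 ((b-a)^3/720) 0 (-(b-a)/36) (-1/24) b t = 0 := by
    rw [poly5_integral]; field_simp; ring
  -- square integrals of kernels
  have s1 : ∫ t in a..((a+b)/2), (poly5 0 (-(b-a)^3/720) 0 ((b-a)/36) (-1/24) a t)^2 = (b-a)^9 / 139345920 := by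
    rw [poly5_sq_integral]; field_simp; ring
  have s2 : ∫ t in ((a+b)/2)..b, (poly5 0 ((b-a)^3/720) 0 (-(b-a)/36) (-1/24) b t)^2 = (b-a)^9 / 139345920 := by
    rw [poly5_sq_integral]; field_simp; ring
  -- split sums
  have w1 : ∫ t in a..((a+b)/2), (poly5 0 (-(b-a)^3/720) 0 ((b-a)/36) (-1/24) a t * ψ'''' t + ψ t)
      = (∫ t in a..((a+b)/2), poly5 0 (-(b-a)^3/720) 0 ((b-a)/36) (-1/24) a t * ψ'''' t) + ∫ t in a..((a+b)/2), ψ t :=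
    intervalIntegral.integral_add int1 intψ1
  have w2 : ∫ t in ((a+b)/2)..b, (poly5 0 ((b-a)^3/720) 0 (-(b-a)/36) (-1/24) b t * ψ'''' t + ψ t)
      = (∫ t in ((a+b)/2)..b, poly5 0 ((b-a)^3/720) 0 (-(b-a)/36) (-1/24) b t * ψ'''' t) + ∫ t in ((a+b)/2)..b, ψ t :=
    intervalIntegral.integral_add int2 intψ2
  have hψsplit : (∫ t in a..((a+b)/2), ψ t) + ∫ t in ((a+b)/2)..b, ψ t = ∫ t in a..b, ψ t :=
    intervalIntegral.integral_add_adjacent_intervals intψ1 intψ2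
  -- the master identity
  have hwhole : (∫ t in a..((a+b)/2), poly5 0 (-(b-a)^3/720) 0 ((b-a)/36) (-1/24) a t * ψ'''' t) + (∫ t in ((a+b)/2)..b, poly5 0 ((b-a)^3/720) 0 (-(b-a)/36) (-1/24) b t * ψ'''' t)
      = (b - a) * (((ψ a + ψ b) / 6 + 2 / 3 * ψ ((a + b) / 2) - (1 / (b - a)) * ∫ t in a..b, ψ t) -
        ((b - a) ^ 2 / 360) * ((ψ'' a + ψ'' b) / 2 - ψ'' ((a + b) / 2))) := by
    have e1 : ∫ t in a..((a+b)/2), poly5 0 (-(b-a)^3/720) 0 ((b-a)/36) (-1/24) a t * ψ'''' t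
        = (∫ t in a..((a+b)/2), (poly5 0 (-(b-a)^3/720) 0 ((b-a)/36) (-1/24) a t * ψ'''' t + ψ t)) - ∫ t in a..((a+b)/2), ψ t := by
      rw [w1]; ring
    have e2 : ∫ t in ((a+b)/2)..b, poly5 0 ((b-a)^3/720) 0 (-(b-a)/36) (-1/24) b t * ψ'''' t
        = (∫ t in ((a+b)/2)..b, (poly5 0 ((b-a)^3/720) 0 (-(b-a)/36) (-1/24) b t * ψ'''' t + ψ t)) - ∫ t in ((a+b)/2)..b, ψ t := by
      rw [w2]; ring
    rw [e1, e2, key1, key2, ← hψsplit]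
    simp only [poly5]
    field_simp
    ring
  -- replace ψ'''' by its centered version
  have w1g : ∫ t in a..((a+b)/2), poly5 0 (-(b-a)^3/720) 0 ((b-a)/36) (-1/24) a t * ψ'''' t
      = ∫ t in a..((a+b)/2), poly5 0 (-(b-a)^3/720) 0 ((b-a)/36) (-1/24) a t * (ψ'''' t - ((m₄ + M₄)/2)) := by
    have hc : ∫ t in a..((a+b)/2), poly5 0 (-(b-a)^3/720) 0 ((b-a)/36) (-1/24) a t * ψ'''' t
        = ∫ t in a..((a+b)/2), (poly5 0 (-(b-a)^3/720) 0 ((b-a)/36) (-1/24) a t * (ψ'''' t - ((m₄ + M₄)/2)) + ((m₄ + M₄)/2) * poly5 0 (-(b-a)^3/720) 0 ((b-a)/36) (-1/24) a t) :=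
      intervalIntegral.integral_congr (fun t _ => by ring)
    rw [hc, intervalIntegral.integral_add intg1 intc1, intervalIntegral.integral_const_mul,
      z1, mul_zero, add_zero]
  have w2g : ∫ t in ((a+b)/2)..b, poly5 0 ((b-a)^3/720) 0 (-(b-a)/36) (-1/24) b t * ψ'''' t
      = ∫ t in ((a+b)/2)..b, poly5 0 ((b-a)^3/720) 0 (-(b-a)/36) (-1/24) b t * (ψ'''' t - ((m₄ + M₄)/2)) := by
    have hc : ∫ t in ((a+b)/2)..b, poly5 0 ((b-a)^3/720) 0 (-(b-a)/36) (-1/24) b t * ψ'''' t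
        = ∫ t in ((a+b)/2)..b, (poly5 0 ((b-a)^3/720) 0 (-(b-a)/36) (-1/24) b t * (ψ'''' t - ((m₄ + M₄)/2)) + ((m₄ + M₄)/2) * poly5 0 ((b-a)^3/720) 0 (-(b-a)/36) (-1/24) b t) :=
      intervalIntegral.integral_congr (fun t _ => by ring)
    rw [hc, intervalIntegral.integral_add intg2 intc2, intervalIntegral.integral_const_mul,
      z2, mul_zero, add_zero]
  have hW : (b - a) * (((ψ a + ψ b) / 6 + 2 / 3 * ψ ((a + b) / 2) - (1 / (b - a)) * ∫ t in a..b, ψ t) -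
        ((b - a) ^ 2 / 360) * ((ψ'' a + ψ'' b) / 2 - ψ'' ((a + b) / 2)))
      = (∫ t in a..((a+b)/2), poly5 0 (-(b-a)^3/720) 0 ((b-a)/36) (-1/24) a t * (ψ'''' t - ((m₄ + M₄)/2)))
        + ∫ t in ((a+b)/2)..b, poly5 0 ((b-a)^3/720) 0 (-(b-a)/36) (-1/24) b t * (ψ'''' t - ((m₄ + M₄)/2)) := by
    rw [← hwhole, w1g, w2g]
  -- bound on g²
  have hm4M4 : m₄ ≤ M₄ := le_trans (hm a (by constructor <;> linarith)) (hM a (by constructor <;> linarith))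
  rcases lt_or_eq_of_le hm4M4 with hlt | heq
  · -- m₄ < M₄
    set σ : ℝ := 4200 * (M₄ - m₄) / (b - a)^4 with hσdef
    have hMm0 : (0:ℝ) < M₄ - m₄ := by linarith
    have hMm : M₄ - m₄ ≠ 0 := ne_of_gt hMm0
    have hσ : 0 < σ := by rw [hσdef]; positivity
    have hgK1 : ∀ t ∈ Icc a ((a+b)/2), (ψ'''' t - ((m₄ + M₄)/2))^2 ≤ ((M₄ - m₄)/2)^2 := by
      intro t ht
      have h1 := hm t (hsub1 ht); have h2 := hM t (hsub1 ht)
      nlinarith [h1, h2]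
    have hgK2 : ∀ t ∈ Icc ((a+b)/2) b, (ψ'''' t - ((m₄ + M₄)/2))^2 ≤ ((M₄ - m₄)/2)^2 := by
      intro t ht
      have h1 := hm t (hsub2 ht); have h2 := hM t (hsub2 ht)
      nlinarith [h1, h2]
    have B1 := half_bound a ((a+b)/2) σ (((M₄ - m₄)/2)^2) ham hσ (poly5 0 (-(b-a)^3/720) 0 ((b-a)/36) (-1/24) a)
      (fun t => ψ'''' t - ((m₄ + M₄)/2)) (poly5_cont _ _ _ _ _ _)
      ((hcont.mono hsub1).sub continuousOn_const) hgK1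
    have B2 := half_bound ((a+b)/2) b σ (((M₄ - m₄)/2)^2) hmb hσ (poly5 0 ((b-a)^3/720) 0 (-(b-a)/36) (-1/24) b)
      (fun t => ψ'''' t - ((m₄ + M₄)/2)) (poly5_cont _ _ _ _ _ _)
      ((hcont.mono hsub2).sub continuousOn_const) hgK2
    rw [s1] at B1
    rw [s2] at B2
    have habs : (b - a) * |(((ψ a + ψ b) / 6 + 2 / 3 * ψ ((a + b) / 2) - (1 / (b - a)) * ∫ t in a..b, ψ t) -
        ((b - a) ^ 2 / 360) * ((ψ'' a + ψ'' b) / 2 - ψ'' ((a + b) / 2)))|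
        ≤ σ/2 * ((b-a)^9/69672960) + 1/(2*σ) * (((M₄ - m₄)/2)^2 * (b - a)) := by
      have h1 : (b - a) * |(((ψ a + ψ b) / 6 + 2 / 3 * ψ ((a + b) / 2) - (1 / (b - a)) * ∫ t in a..b, ψ t) -
        ((b - a) ^ 2 / 360) * ((ψ'' a + ψ'' b) / 2 - ψ'' ((a + b) / 2)))| = |(b - a) * (((ψ a + ψ b) / 6 + 2 / 3 * ψ ((a + b) / 2) - (1 / (b - a)) * ∫ t in a..b, ψ t) -
        ((b - a) ^ 2 / 360) * ((ψ'' a + ψ'' b) / 2 - ψ'' ((a + b) / 2)))| := by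
        rw [abs_mul, abs_of_pos hba0]
      rw [h1, hW]
      calc |(∫ t in a..((a+b)/2), poly5 0 (-(b-a)^3/720) 0 ((b-a)/36) (-1/24) a t * (ψ'''' t - ((m₄ + M₄)/2)))
            + ∫ t in ((a+b)/2)..b, poly5 0 ((b-a)^3/720) 0 (-(b-a)/36) (-1/24) b t * (ψ'''' t - ((m₄ + M₄)/2))|
          ≤ |∫ t in a..((a+b)/2), poly5 0 (-(b-a)^3/720) 0 ((b-a)/36) (-1/24) a t * (ψ'''' t - ((m₄ + M₄)/2))|
            + |∫ t in ((a+b)/2)..b, poly5 0 ((b-a)^3/720) 0 (-(b-a)/36) (-1/24) b t * (ψ'''' t - ((m₄ + M₄)/2))| := abs_add_le _ _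
        _ ≤ (σ/2 * ((b-a)^9/139345920) + 1/(2*σ) * (((M₄ - m₄)/2)^2 * (((a+b)/2) - a)))
            + (σ/2 * ((b-a)^9/139345920) + 1/(2*σ) * (((M₄ - m₄)/2)^2 * (b - ((a+b)/2)))) :=
            add_le_add B1 B2
        _ = σ/2 * ((b-a)^9/69672960) + 1/(2*σ) * (((M₄ - m₄)/2)^2 * (b - a)) := by ring
    have e1 : σ/2 * ((b-a)^9/69672960) = 2100/69672960 * ((M₄ - m₄) * (b-a)^5) := by
      rw [hσdef]; field_simp; ring
    have e2 : 1/(2*σ) * (((M₄ - m₄)/2)^2 * (b - a)) = 1/33600 * ((M₄ - m₄) * (b-a)^5) := by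
      rw [hσdef]; field_simp; ring
    have hcoef : σ/2 * ((b-a)^9/69672960) + 1/(2*σ) * (((M₄ - m₄)/2)^2 * (b - a))
        ≤ (b - a) * (11 / 57600 * (M₄ - m₄) * (b - a) ^ 4) := by
      rw [e1, e2]
      have h5 : 0 < (M₄ - m₄) * (b-a)^5 := by positivity
      nlinarith [h5]
    have chain : (b - a) * |(((ψ a + ψ b) / 6 + 2 / 3 * ψ ((a + b) / 2) - (1 / (b - a)) * ∫ t in a..b, ψ t) -
        ((b - a) ^ 2 / 360) * ((ψ'' a + ψ'' b) / 2 - ψ'' ((a + b) / 2)))| ≤ (b - a) * (11 / 57600 * (M₄ - m₄) * (b - a) ^ 4) :=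
      le_trans habs hcoef
    exact le_of_mul_le_mul_left chain hba0
  · -- m₄ = M₄
    have hconst : ∀ t ∈ Icc a b, ψ'''' t = ((m₄ + M₄)/2) := by
      intro t ht
      have h1 := hm t ht; have h2 := hM t ht
      rw [← heq] at h2 ⊢
      have : ψ'''' t = m₄ := le_antisymm h2 h1
      rw [this]; ring
    have W10 : ∫ t in a..((a+b)/2), poly5 0 (-(b-a)^3/720) 0 ((b-a)/36) (-1/24) a t * ψ'''' t = 0 := by
      have hc : ∫ t in a..((a+b)/2), poly5 0 (-(b-a)^3/720) 0 ((b-a)/36) (-1/24) a t * ψ'''' t = ∫ t in a..((a+b)/2), poly5 0 (-(b-a)^3/720) 0 ((b-a)/36) (-1/24) a t * ((m₄ + M₄)/2) := by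
        apply intervalIntegral.integral_congr
        intro t ht
        rw [uIcc_of_le ham] at ht
        simp only [hconst t (hsub1 ht)]
      rw [hc, intervalIntegral.integral_mul_const, z1, zero_mul]
    have W20 : ∫ t in ((a+b)/2)..b, poly5 0 ((b-a)^3/720) 0 (-(b-a)/36) (-1/24) b t * ψ'''' t = 0 := by
      have hc : ∫ t in ((a+b)/2)..b, poly5 0 ((b-a)^3/720) 0 (-(b-a)/36) (-1/24) b t * ψ'''' t = ∫ t in ((a+b)/2)..b, poly5 0 ((b-a)^3/720) 0 (-(b-a)/36) (-1/24) b t * ((m₄ + M₄)/2) := by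
        apply intervalIntegral.integral_congr
        intro t ht
        rw [uIcc_of_le hmb] at ht
        simp only [hconst t (hsub2 ht)]
      rw [hc, intervalIntegral.integral_mul_const, z2, zero_mul]
    have h0 : (b - a) * (((ψ a + ψ b) / 6 + 2 / 3 * ψ ((a + b) / 2) - (1 / (b - a)) * ∫ t in a..b, ψ t) -
        ((b - a) ^ 2 / 360) * ((ψ'' a + ψ'' b) / 2 - ψ'' ((a + b) / 2))) = 0 := by
      rw [← hwhole, W10, W20]; ring
    have hbig0 : (((ψ a + ψ b) / 6 + 2 / 3 * ψ ((a + b) / 2) - (1 / (b - a)) * ∫ t in a..b, ψ t) -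
        ((b - a) ^ 2 / 360) * ((ψ'' a + ψ'' b) / 2 - ψ'' ((a + b) / 2))) = 0 := by
      rcases mul_eq_zero.mp h0 with h | h
      · exact absurd h hba
      · exact h
    rw [hbig0, abs_zero, ← heq]
    norm_num
end

section
/- For all t > 0: cosh(2t)/3 + 2/3 - (8/81)t²(cosh(2t) - 1) ≤ sinh(2t)/(2t) ≤ cosh(2t)/3 + 2/3. -/
open Real

private lemma aux_nonneg (f f' : ℝ → ℝ) (hd : ∀ x, HasDerivAt f (f' x) x)
    (h0 : f 0 = 0) (hf' : ∀ x, 0 ≤ x → 0 ≤ f' x) :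
    ∀ x, 0 ≤ x → 0 ≤ f x := by
  intro x hx
  have hmono : MonotoneOn f (Set.Ici (0 : ℝ)) := by
    apply monotoneOn_of_deriv_nonneg (convex_Ici 0)
    · exact fun y _ => (hd y).continuousAt.continuousWithinAt
    · exact fun y _ => ((hd y).differentiableAt).differentiableWithinAt
    · intro y hy
      rw [interior_Ici] at hy
      rw [(hd y).deriv]
      exact hf' y (le_of_lt hy)
  have := hmono (Set.self_mem_Ici) (Set.mem_Ici.mpr hx) hx
  linarith [this]

private lemma g2_nonneg : ∀ x : ℝ, 0 ≤ x → 0 ≤ x * Real.cosh x - Real.sinh x := by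
  apply aux_nonneg _ (fun x => x * Real.sinh x)
  · intro x
    have h : HasDerivAt (fun x : ℝ => x * Real.cosh x - Real.sinh x)
        (1 * Real.cosh x + x * Real.sinh x - Real.cosh x) x :=
      ((hasDerivAt_id x).mul (Real.hasDerivAt_cosh x)).sub (Real.hasDerivAt_sinh x)
    convert h using 1; ring
  · simp
  · intro x hx
    exact mul_nonneg hx (Real.sinh_nonneg_iff.mpr hx)

private lemma g1_nonneg : ∀ x : ℝ, 0 ≤ x → 0 ≤ x * Real.sinh x - 2 * Real.cosh x + 2 := by
  apply aux_nonneg _ (fun x => x * Real.cosh x - Real.sinh x)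
  · intro x
    have h : HasDerivAt (fun x : ℝ => x * Real.sinh x - 2 * Real.cosh x + 2)
        (1 * Real.sinh x + x * Real.cosh x - 2 * Real.sinh x) x :=
      (((hasDerivAt_id x).mul (Real.hasDerivAt_sinh x)).sub
        ((Real.hasDerivAt_cosh x).const_mul 2)).add_const 2
    convert h using 1; ring
  · simp
  · exact g2_nonneg

private lemma g0_nonneg : ∀ x : ℝ, 0 ≤ x → 0 ≤ x * Real.cosh x + 2 * x - 3 * Real.sinh x := by
  apply aux_nonneg _ (fun x => x * Real.sinh x - 2 * Real.cosh x + 2)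
  · intro x
    have h : HasDerivAt (fun x : ℝ => x * Real.cosh x + 2 * x - 3 * Real.sinh x)
        (1 * Real.cosh x + x * Real.sinh x + 2 * 1 - 3 * Real.cosh x) x :=
      (((hasDerivAt_id x).mul (Real.hasDerivAt_cosh x)).add
        ((hasDerivAt_id x).const_mul 2)).sub ((Real.hasDerivAt_sinh x).const_mul 3)
    convert h using 1; ring
  · simp
  · exact g1_nonneg

private lemma h2_nonneg : ∀ x : ℝ, 0 ≤ x →
    0 ≤ Real.sinh x - x * Real.cosh x + 4/9 * x * Real.cosh x - 4/9 * x
      + 4/9 * x^2 * Real.sinh x + 2/27 * x^3 * Real.cosh x := by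
  apply aux_nonneg _ (fun x => 4/9 * (Real.cosh x - 1) + 1/3 * x * Real.sinh x
      + 2/3 * x^2 * Real.cosh x + 2/27 * x^3 * Real.sinh x)
  · intro x
    have h : HasDerivAt (fun x : ℝ => Real.sinh x - x * Real.cosh x + 4/9 * x * Real.cosh x
        - 4/9 * x + 4/9 * x^2 * Real.sinh x + 2/27 * x^3 * Real.cosh x)
        (Real.cosh x - (1 * Real.cosh x + x * Real.sinh x)
          + (4/9 * 1 * Real.cosh x + 4/9 * x * Real.sinh x) - 4/9 * 1
          + (4/9 * (2 * x^1) * Real.sinh x + 4/9 * x^2 * Real.cosh x)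
          + (2/27 * (3 * x^2) * Real.cosh x + 2/27 * x^3 * Real.sinh x)) x := by
      exact (((((Real.hasDerivAt_sinh x).sub ((hasDerivAt_id x).mul (Real.hasDerivAt_cosh x))).add
        (((hasDerivAt_id x).const_mul (4/9 : ℝ)).mul (Real.hasDerivAt_cosh x))).sub
        ((hasDerivAt_id x).const_mul (4/9 : ℝ))).add
        ((((hasDerivAt_pow 2 x).const_mul (4/9 : ℝ)).mul (Real.hasDerivAt_sinh x)))).add
        ((((hasDerivAt_pow 3 x).const_mul (2/27 : ℝ)).mul (Real.hasDerivAt_cosh x)))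
    convert h using 1; ring
  · simp
  · intro x hx
    have h1 := Real.one_le_cosh x
    have h2 := Real.sinh_nonneg_iff.mpr hx
    have h3 : (0:ℝ) ≤ x^2 := sq_nonneg x
    have h4 : (0:ℝ) ≤ x^3 := pow_nonneg hx 3
    nlinarith [mul_nonneg hx h2, mul_nonneg h4 h2, mul_nonneg h3 (le_trans zero_le_one h1)]

private lemma h1_nonneg : ∀ x : ℝ, 0 ≤ x →
    0 ≤ 2 * Real.cosh x - x * Real.sinh x - 2 + 2/9 * x^2 * (Real.cosh x - 1)
      + 2/27 * x^3 * Real.sinh x := by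
  apply aux_nonneg _ (fun x => Real.sinh x - x * Real.cosh x + 4/9 * x * Real.cosh x - 4/9 * x
      + 4/9 * x^2 * Real.sinh x + 2/27 * x^3 * Real.cosh x)
  · intro x
    have h : HasDerivAt (fun x : ℝ => 2 * Real.cosh x - x * Real.sinh x - 2
        + 2/9 * x^2 * (Real.cosh x - 1) + 2/27 * x^3 * Real.sinh x)
        (2 * Real.sinh x - (1 * Real.sinh x + x * Real.cosh x)
          + (2/9 * (2 * x^1) * (Real.cosh x - 1) + 2/9 * x^2 * Real.sinh x)
          + (2/27 * (3 * x^2) * Real.sinh x + 2/27 * x^3 * Real.cosh x)) x := by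
      have hc1 : HasDerivAt (fun x : ℝ => Real.cosh x - 1) (Real.sinh x) x :=
        (Real.hasDerivAt_cosh x).sub_const 1
      exact (((((Real.hasDerivAt_cosh x).const_mul 2).sub
        ((hasDerivAt_id x).mul (Real.hasDerivAt_sinh x))).sub_const 2).add
        (((hasDerivAt_pow 2 x).const_mul (2/9 : ℝ)).mul hc1)).add
        (((hasDerivAt_pow 3 x).const_mul (2/27 : ℝ)).mul (Real.hasDerivAt_sinh x))
    convert h using 1; ring
  · simp
  · exact h2_nonneg

private lemma h0_nonneg : ∀ x : ℝ, 0 ≤ x →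
    0 ≤ 3 * Real.sinh x - x * Real.cosh x - 2 * x + 2/27 * x^3 * (Real.cosh x - 1) := by
  apply aux_nonneg _ (fun x => 2 * Real.cosh x - x * Real.sinh x - 2
      + 2/9 * x^2 * (Real.cosh x - 1) + 2/27 * x^3 * Real.sinh x)
  · intro x
    have h : HasDerivAt (fun x : ℝ => 3 * Real.sinh x - x * Real.cosh x - 2 * x
        + 2/27 * x^3 * (Real.cosh x - 1))
        (3 * Real.cosh x - (1 * Real.cosh x + x * Real.sinh x) - 2 * 1
          + (2/27 * (3 * x^2) * (Real.cosh x - 1) + 2/27 * x^3 * Real.sinh x)) x := by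
      have hc1 : HasDerivAt (fun x : ℝ => Real.cosh x - 1) (Real.sinh x) x :=
        (Real.hasDerivAt_cosh x).sub_const 1
      exact ((((Real.hasDerivAt_sinh x).const_mul 3).sub
        ((hasDerivAt_id x).mul (Real.hasDerivAt_cosh x))).sub
        ((hasDerivAt_id x).const_mul 2)).add
        (((hasDerivAt_pow 3 x).const_mul (2/27 : ℝ)).mul hc1)
    convert h using 1; ring
  · simp
  · exact h1_nonneg

theorem simpson_stmt15 (t : ℝ) (ht : 0 < t) :
    Real.cosh (2 * t) / 3 + 2 / 3 - 8 / 81 * t ^ 2 * (Real.cosh (2 * t) - 1) ≤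
        Real.sinh (2 * t) / (2 * t) ∧
      Real.sinh (2 * t) / (2 * t) ≤ Real.cosh (2 * t) / 3 + 2 / 3 := by
  set x := 2 * t with hxdef
  have hx : 0 < x := by positivity
  have hg := g0_nonneg x hx.le
  have hh := h0_nonneg x hx.le
  constructor
  · rw [le_div_iff₀ hx]
    have key : (Real.cosh x / 3 + 2 / 3 - 8 / 81 * t ^ 2 * (Real.cosh x - 1)) * x
        = x * Real.cosh x / 3 + 2 * x / 3 - 2 / 81 * x ^ 3 * (Real.cosh x - 1) := by
      rw [hxdef]; ring
    rw [key]
    linarith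
  · rw [div_le_iff₀ hx]
    nlinarith [hg]
end
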